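/- arXiv:2404.05942 — 6 statements merged into one kernel-verified Lean document; each statement's English description precedes it below -/
import Mathlib

section
/- Let l ≥ 1 and s ≥ 0 be integers with l < s+1. There exists n₀ = n₀(s,l) such that for all n ≥ n₀: ex(n, {K_3, (s+1)S_l}) = s(n−s), and the complete bipartite graph K_{s,n−s} is the unique (up to isomorphism) {K_3, (s+1)S_l}-free graph on n vertices with s(n−s) edges. -/
open SimpleGraph Finset

def Contains {α β : Type*} (G : SimpleGraph β) (H : SimpleGraph α) : Prop :=
  ∃ f : α ↪ β, ∀ a b, H.Adj a b → G.Adj (f a) (f b)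

def Free {α β : Type*} (G : SimpleGraph β) (H : SimpleGraph α) : Prop := ¬ Contains G H

noncomputable def exNum (n : ℕ) (P : SimpleGraph (Fin n) → Prop) : ℕ :=
  sSup {m | ∃ G : SimpleGraph (Fin n), P G ∧ G.edgeSet.ncard = m}

def starForest (c l : ℕ) : SimpleGraph (Fin c × (Unit ⊕ Fin l)) :=
  SimpleGraph.fromRel (fun x y => x.1 = y.1 ∧ x.2.isLeft ≠ y.2.isLeft)

/-- The join of two graphs. -/
def join {α β : Type*} (G : SimpleGraph α) (H : SimpleGraph β) : SimpleGraph (α ⊕ β) :=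
  SimpleGraph.fromRel (fun x y => match x, y with
    | Sum.inl a, Sum.inl b => G.Adj a b
    | Sum.inr a, Sum.inr b => H.Adj a b
    | _, _ => True)

section Stars

variable {V : Type*} {G : SimpleGraph V} {l k : ℕ}

/-- Data of `k` pairwise disjoint stars `S_l` in `G`: centers `f`, leaves `g`. -/
def StarData (G : SimpleGraph V) (l k : ℕ) (f : Fin k → V) (g : Fin k → Fin l → V) : Prop :=
  (∀ i j, G.Adj (f i) (g i j)) ∧ Function.Injective f ∧
  (∀ i j i' j', g i j = g i' j' → i = i' ∧ j = j') ∧ (∀ i i' j, f i ≠ g i' j)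

lemma StarData.contains {f : Fin k → V} {g : Fin k → Fin l → V}
    (h : StarData G l k f g) : Contains G (starForest k l) := by
  obtain ⟨hadj, hfinj, hginj, hfg⟩ := h
  refine ⟨⟨fun p => Sum.elim (fun _ => f p.1) (fun j => g p.1 j) p.2, ?_⟩, ?_⟩
  · rintro ⟨i, u⟩ ⟨i', u'⟩ h
    cases u <;> cases u' <;> simp only [Sum.elim_inl, Sum.elim_inr] at h
    · simp [hfinj h]
    · exact absurd h (hfg _ _ _)
    · exact absurd h.symm (hfg _ _ _)
    · obtain ⟨h1, h2⟩ := hginj _ _ _ _ h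
      simp [h1, h2]
  · rintro ⟨i, u⟩ ⟨i', u'⟩ hadj'
    simp only [starForest, fromRel_adj, ne_eq, Prod.mk.injEq] at hadj'
    obtain ⟨hne, h | h⟩ := hadj'
    · obtain ⟨rfl, hL⟩ := h
      cases u <;> cases u'
      · simp at hL
      · exact hadj _ _
      · exact (hadj _ _).symm
      · simp at hL
    · obtain ⟨rfl, hL⟩ := h
      cases u <;> cases u'
      · simp at hL
      · exact hadj _ _
      · exact (hadj _ _).symm
      · simp at hL

lemma starData_cast {k' : ℕ} (h : k = k') {f : Fin k → V} {g : Fin k → Fin l → V}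
    (hd : StarData G l k f g) :
    StarData G l k' (f ∘ Fin.cast h.symm) (g ∘ Fin.cast h.symm) := by
  subst h; exact hd

lemma StarData.snoc {f : Fin k → V} {g : Fin k → Fin l → V}
    (h : StarData G l k f g) (c : V) (gs : Fin l → V)
    (hadj : ∀ j, G.Adj c (gs j)) (hgsinj : ∀ j j', gs j = gs j' → j = j')
    (hcf : ∀ i, c ≠ f i) (hcg : ∀ i j, c ≠ g i j)
    (hgsf : ∀ j i, gs j ≠ f i) (hgsg : ∀ j i j', gs j ≠ g i j')
    (hcgs : ∀ j, c ≠ gs j) :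
    StarData G l (k + 1) (Fin.snoc f c) (Fin.snoc g gs) := by
  obtain ⟨a1, b1, c1, d1⟩ := h
  refine ⟨?_, ?_, ?_, ?_⟩
  · intro i j
    induction i using Fin.lastCases with
    | last => simpa using hadj j
    | cast i => simpa using a1 i j
  · intro i i' hh
    induction i using Fin.lastCases with
    | last =>
      induction i' using Fin.lastCases with
      | last => rfl
      | cast i' => simp only [Fin.snoc_last, Fin.snoc_castSucc] at hh
                   exact absurd hh (hcf i')
    | cast i =>
      induction i' using Fin.lastCases with
      | last => simp only [Fin.snoc_last, Fin.snoc_castSucc] at hh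
                exact absurd hh.symm (hcf i)
      | cast i' => simp only [Fin.snoc_castSucc] at hh
                   simp [b1 hh]
  · intro i j i' j'
    induction i using Fin.lastCases with
    | last =>
      induction i' using Fin.lastCases with
      | last => simp only [Fin.snoc_last]
                exact fun hh => ⟨by simp, hgsinj _ _ hh⟩
      | cast i' => simp only [Fin.snoc_last, Fin.snoc_castSucc]
                   exact fun hh => absurd hh (hgsg _ _ _)
    | cast i =>
      induction i' using Fin.lastCases with
      | last => simp only [Fin.snoc_last, Fin.snoc_castSucc]
                exact fun hh => absurd hh.symm (hgsg _ _ _)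
      | cast i' => simp only [Fin.snoc_castSucc]
                   intro hh
                   obtain ⟨rfl, rfl⟩ := c1 _ _ _ _ hh
                   exact ⟨rfl, rfl⟩
  · intro i i' j
    induction i using Fin.lastCases with
    | last =>
      induction i' using Fin.lastCases with
      | last => simpa using hcgs j
      | cast i' => simpa using hcg i' j
    | cast i =>
      induction i' using Fin.lastCases with
      | last => simpa using fun hh => (hgsf j i) hh.symm
      | cast i' => simpa using d1 i i' j

/-- Extend a star system by `m` further stars with prescribed disjointness. -/
lemma StarData.extend {f : Fin k → V} {g : Fin k → Fin l → V} :
    ∀ (m : ℕ) (c : Fin m → V) (gs : Fin m → Fin l → V),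
    StarData G l k f g →
    (∀ i j, G.Adj (c i) (gs i j)) → Function.Injective c →
    (∀ i j i' j', gs i j = gs i' j' → i = i' ∧ j = j') →
    (∀ i i' j, c i ≠ gs i' j) →
    (∀ i i', c i ≠ f i') → (∀ i i' j, c i ≠ g i' j) →
    (∀ i j i', gs i j ≠ f i') → (∀ i j i' j', gs i j ≠ g i' j') →
    ∃ f' g', StarData G l (k + m) f' g' ∧
      (∀ p, (∃ i, f' p = f i) ∨ (∃ i, f' p = c i)) ∧
      (∀ p j, (∃ i j', g' p j = g i j') ∨ (∃ i j', g' p j = gs i j')) := by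
  intro m
  induction m with
  | zero =>
    intro c gs hd _ _ _ _ _ _ _ _
    exact ⟨f, g, hd, fun p => Or.inl ⟨p, rfl⟩, fun p j => Or.inl ⟨p, j, rfl⟩⟩
  | succ m ih =>
    intro c gs hd h1 h2 h3 h4 h5 h6 h7 h8
    obtain ⟨f', g', hd', hmf, hmg⟩ :=
      ih (c ∘ Fin.castSucc) (gs ∘ Fin.castSucc) hd (fun i j => h1 _ j)
        (fun i i' hh => Fin.castSucc_injective _ (h2 hh))
        (fun i j i' j' hh => by
          obtain ⟨e1, e2⟩ := h3 _ _ _ _ hh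
          exact ⟨Fin.castSucc_injective _ e1, e2⟩)
        (fun i i' j => h4 _ _ j) (fun i i' => h5 _ i') (fun i i' j => h6 _ i' j)
        (fun i j i' => h7 _ j i') (fun i j i' j' => h8 _ j _ j')
    set cl := c (Fin.last m)
    set gl := gs (Fin.last m)
    have hne : ∀ i : Fin m, Fin.castSucc i ≠ Fin.last m := fun i => (Fin.castSucc_lt_last i).ne
    refine ⟨Fin.snoc f' cl, Fin.snoc g' gl, hd'.snoc cl gl (fun j => h1 _ j)
      (fun j j' hh => (h3 _ _ _ _ hh).2) ?_ ?_ ?_ ?_ (fun j => h4 _ _ j), ?_, ?_⟩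
    · intro i
      rcases hmf i with ⟨i', hi'⟩ | ⟨i', hi'⟩
      · rw [hi']; exact h5 _ _
      · rw [hi']; intro hh
        exact hne i' (h2 hh).symm
    · intro i j
      rcases hmg i j with ⟨i', j', hi'⟩ | ⟨i', j', hi'⟩
      · rw [hi']; exact h6 _ _ _
      · rw [hi']; intro hh
        exact hne i' ((h4 _ _ _ : c (Fin.last m) ≠ gs (Fin.castSucc i') j') hh).elim
    · intro j i
      rcases hmf i with ⟨i', hi'⟩ | ⟨i', hi'⟩
      · rw [hi']; exact h7 _ _ _
      · rw [hi']; intro hh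
        exact h4 _ _ _ hh.symm
    · intro j i j'
      rcases hmg i j' with ⟨i', j'', hi'⟩ | ⟨i', j'', hi'⟩
      · rw [hi']; exact h8 _ _ _ _
      · rw [hi']; intro hh
        exact hne i' ((h3 _ _ _ _ hh).1).symm
    · intro p
      induction p using Fin.lastCases with
      | last => exact Or.inr ⟨Fin.last m, by simp; rfl⟩
      | cast p =>
        rcases hmf p with ⟨i', hi'⟩ | ⟨i', hi'⟩
        · exact Or.inl ⟨i', by simpa using hi'⟩
        · exact Or.inr ⟨Fin.castSucc i', by simpa using hi'⟩
    · intro p j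
      induction p using Fin.lastCases with
      | last => exact Or.inr ⟨Fin.last m, j, by simp; rfl⟩
      | cast p =>
        rcases hmg p j with ⟨i', j', hi'⟩ | ⟨i', j', hi'⟩
        · exact Or.inl ⟨i', j', by simpa using hi'⟩
        · exact Or.inr ⟨Fin.castSucc i', j', by simpa using hi'⟩

end Stars

section Greedy

variable {V : Type*} [Fintype V] [DecidableEq V] {G : SimpleGraph V} [DecidableRel G.Adj] {l : ℕ}

lemma greedy_leaves :
    ∀ (m : ℕ) (c : Fin m → V) (F : Finset V),
    (∀ i : Fin m, (i : ℕ) * l + l ≤ ((G.neighborFinset (c i)) \ F).card) →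
    ∃ gs : Fin m → Fin l → V, (∀ i j, G.Adj (c i) (gs i j)) ∧ (∀ i j, gs i j ∉ F) ∧
      (∀ i j i' j', gs i j = gs i' j' → i = i' ∧ j = j') := by
  intro m
  induction m with
  | zero =>
    intro c F _
    exact ⟨fun i => i.elim0, fun i => i.elim0, fun i => i.elim0, fun i => i.elim0⟩
  | succ m ih =>
    intro c F hd
    obtain ⟨gs', h1, h2, h3⟩ := ih (c ∘ Fin.castSucc) F (fun i => by
      simpa using hd (Fin.castSucc i))
    set L : Finset V := Finset.image (fun p : Fin m × Fin l => gs' p.1 p.2) Finset.univ with hL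
    have hLcard : L.card ≤ m * l := by
      calc L.card ≤ (Finset.univ : Finset (Fin m × Fin l)).card := Finset.card_image_le
      _ = m * l := by simp [Fintype.card_prod]
    have hbig : l ≤ (((G.neighborFinset (c (Fin.last m))) \ F) \ L).card := by
      have := Finset.le_card_sdiff L ((G.neighborFinset (c (Fin.last m))) \ F)
      have hdl := hd (Fin.last m)
      simp only [Fin.val_last] at hdl
      omega
    obtain ⟨T, hT, hTcard⟩ := Finset.exists_subset_card_eq hbig
    set eT : Fin l → V := fun j => ((T.equivFinOfCardEq hTcard).symm j : V) with heT
    have heTmem : ∀ j, eT j ∈ T := fun j => Subtype.coe_prop _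
    have heTinj : ∀ j j', eT j = eT j' → j = j' := by
      intro j j' hh
      have := Subtype.coe_injective (p := (· ∈ T)) hh
      exact (T.equivFinOfCardEq hTcard).symm.injective this
    have hTN : ∀ j, eT j ∈ (G.neighborFinset (c (Fin.last m))) \ F := fun j =>
      (Finset.mem_sdiff.mp (hT (heTmem j))).1
    refine ⟨Fin.snoc gs' eT, ?_, ?_, ?_⟩
    · intro i j
      induction i using Fin.lastCases with
      | last =>
        have := hTN j
        simp only [Finset.mem_sdiff, mem_neighborFinset] at this
        simpa using this.1
      | cast i => simpa using h1 i j
    · intro i j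
      induction i using Fin.lastCases with
      | last =>
        have := hTN j
        simp only [Finset.mem_sdiff] at this
        simpa using this.2
      | cast i => simpa using h2 i j
    · intro i j i' j'
      have hnotL : ∀ j, eT j ∉ L := by
        intro j hmem
        exact absurd hmem (Finset.mem_sdiff.mp (hT (heTmem j))).2
      have holdL : ∀ i j, gs' i j ∈ L := by
        intro i j
        exact Finset.mem_image.mpr ⟨(i, j), Finset.mem_univ _, rfl⟩
      induction i using Fin.lastCases with
      | last =>
        induction i' using Fin.lastCases with
        | last =>
          simp only [Fin.snoc_last]
          exact fun hh => ⟨by simp, heTinj _ _ hh⟩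
        | cast i' =>
          simp only [Fin.snoc_last, Fin.snoc_castSucc]
          exact fun hh => absurd (hh ▸ holdL i' j') (hnotL j)
      | cast i =>
        induction i' using Fin.lastCases with
        | last =>
          simp only [Fin.snoc_last, Fin.snoc_castSucc]
          exact fun hh => absurd (hh ▸ holdL i j) (hnotL j')
        | cast i' =>
          simp only [Fin.snoc_castSucc]
          intro hh
          obtain ⟨rfl, rfl⟩ := h3 _ _ _ _ hh
          exact ⟨rfl, rfl⟩

lemma exists_blob :
    ∀ (k : ℕ) (X : Finset V),
    (∀ f g, StarData G l k f g → (∀ i, f i ∉ X) → (∀ i j, g i j ∉ X) → False) →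
    ∃ U : Finset V, X ⊆ U ∧ U.card ≤ X.card + k * (l + 1) ∧
      ∀ v ∉ U, ((G.neighborFinset v) \ U).card < l := by
  intro k
  induction k with
  | zero =>
    intro X hfree
    exact absurd (hfree (fun i => i.elim0) (fun i => i.elim0)
      ⟨fun i => i.elim0, fun a => a.elim0, fun i => i.elim0, fun i => i.elim0⟩
      (fun i => i.elim0) (fun i => i.elim0)) (by simp)
  | succ k ih =>
    intro X hfree
    by_cases hc : ∀ v, v ∉ X → ((G.neighborFinset v) \ X).card < l
    · exact ⟨X, Finset.Subset.refl X, Nat.le_add_right _ _, hc⟩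
    · push_neg at hc
      obtain ⟨v, hvX, hlv⟩ := hc
      obtain ⟨S, hS, hScard⟩ := Finset.exists_subset_card_eq hlv
      set eS : Fin l → V := fun j => ((S.equivFinOfCardEq hScard).symm j : V) with heS
      have heSmem : ∀ j, eS j ∈ S := fun j => Subtype.coe_prop _
      have heSinj : ∀ j j', eS j = eS j' → j = j' := by
        intro j j' hh
        exact (S.equivFinOfCardEq hScard).symm.injective (Subtype.coe_injective hh)
      have hSN : ∀ j, eS j ∈ (G.neighborFinset v) \ X := fun j => hS (heSmem j)
      set X' : Finset V := insert v (X ∪ S) with hX'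
      have hXX' : X ⊆ X' := by
        intro x hx; exact Finset.mem_insert_of_mem (Finset.mem_union_left _ hx)
      have hSX' : ∀ j, eS j ∈ X' := fun j =>
        Finset.mem_insert_of_mem (Finset.mem_union_right _ (heSmem j))
      have hvX' : v ∈ X' := Finset.mem_insert_self _ _
      obtain ⟨U, hU1, hU2, hU3⟩ := ih X' (by
        intro f g hd hf hg
        refine hfree (Fin.snoc f v) (Fin.snoc g eS)
          (hd.snoc v eS ?_ heSinj ?_ ?_ ?_ ?_ ?_) ?_ ?_
        · intro j
          have := hSN j
          simp only [Finset.mem_sdiff, mem_neighborFinset] at this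
          exact this.1
        · exact fun i hh => (hf i) (hh ▸ hvX')
        · exact fun i j hh => (hg i j) (hh ▸ hvX')
        · exact fun j i hh => (hf i) (hh ▸ hSX' j)
        · exact fun j i j' hh => (hg i j') (hh ▸ hSX' j)
        · intro j hh
          have := hSN j
          rw [← hh] at this
          simp at this
        · intro i
          induction i using Fin.lastCases with
          | last => simpa using hvX
          | cast i =>
            simp only [Fin.snoc_castSucc]
            exact fun hh => (hf i) (hXX' hh)
        · intro i j
          induction i using Fin.lastCases with
          | last =>
            simp only [Fin.snoc_last]
            have := hSN j
            simp only [Finset.mem_sdiff] at this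
            exact this.2
          | cast i =>
            simp only [Fin.snoc_castSucc]
            exact fun hh => (hg i j) (hXX' hh))
      refine ⟨U, fun x hx => hU1 (hXX' hx), ?_, hU3⟩
      have hX'card : X'.card ≤ X.card + l + 1 := by
        calc X'.card ≤ (X ∪ S).card + 1 := Finset.card_insert_le _ _
        _ ≤ X.card + S.card + 1 := by
            have := Finset.card_union_le X S
            omega
        _ = X.card + l + 1 := by rw [hScard]
      calc U.card ≤ X'.card + k * (l + 1) := hU2
      _ ≤ X.card + l + 1 + k * (l + 1) := by omega
      _ = X.card + (k + 1) * (l + 1) := by ring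

end Greedy

section Count

variable {V : Type*} [Fintype V] [DecidableEq V] {G : SimpleGraph V} [DecidableRel G.Adj]

lemma nbr_inter_eq_filter (v : V) (Q : Finset V) :
    (G.neighborFinset v ∩ Q) = Q.filter (fun y => G.Adj v y) := by
  ext y; simp [mem_neighborFinset, and_comm]

lemma sum_inter_comm (P Q : Finset V) :
    ∑ x ∈ P, (G.neighborFinset x ∩ Q).card = ∑ y ∈ Q, (G.neighborFinset y ∩ P).card := by
  simp only [nbr_inter_eq_filter, Finset.card_filter]
  rw [Finset.sum_comm]
  exact Finset.sum_congr rfl fun y _ => Finset.sum_congr rfl fun x _ => by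
    simp [SimpleGraph.adj_comm]

lemma swap_sum (R : Finset V) (t : V → ℕ) :
    ∑ r ∈ R, ∑ r' ∈ R.filter (fun y => G.Adj r y), t r'
      = ∑ r ∈ R, (R.filter (fun y => G.Adj r y)).card * t r := by
  have h1 : ∀ r ∈ R, ∑ r' ∈ R.filter (fun y => G.Adj r y), t r'
      = ∑ r' ∈ R, if G.Adj r r' then t r' else 0 := by
    intro r _
    rw [Finset.sum_filter]
  rw [Finset.sum_congr rfl h1, Finset.sum_comm]
  refine Finset.sum_congr rfl fun r' _ => ?_
  have : ∑ r ∈ R, (if G.Adj r r' then t r' else 0)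
      = ∑ r ∈ R.filter (fun y => G.Adj r' y), t r' := by
    rw [Finset.sum_filter]
    exact Finset.sum_congr rfl fun r _ => by simp [SimpleGraph.adj_comm]
  rw [this, Finset.sum_const, smul_eq_mul]

/-- The key triangle-free LP bound: `|A| * Σ_{r∈R} deg_R(r) ≤ 2 m Σ_{r∈R} (|A| - deg_A r)`. -/
lemma LP_bound (htri : ∀ x y z : V, G.Adj x y → G.Adj x z → G.Adj y z → False)
    (A R : Finset V) (m : ℕ)
    (hdeg : ∀ r ∈ R, (G.neighborFinset r ∩ R).card ≤ m) :
    A.card * (∑ r ∈ R, (G.neighborFinset r ∩ R).card)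
      ≤ 2 * m * ∑ r ∈ R, (A.card - (G.neighborFinset r ∩ A).card) := by
  set t : V → ℕ := fun r => A.card - (G.neighborFinset r ∩ A).card with ht
  have hdA : ∀ r : V, (G.neighborFinset r ∩ A).card ≤ A.card :=
    fun r => Finset.card_le_card Finset.inter_subset_right
  have key : ∀ r r' : V, G.Adj r r' → A.card ≤ t r + t r' := by
    intro r r' hadj
    have hdisj : Disjoint (G.neighborFinset r ∩ A) (G.neighborFinset r' ∩ A) := by
      rw [Finset.disjoint_left]
      intro x hx hx'
      simp only [Finset.mem_inter, mem_neighborFinset] at hx hx'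
      exact htri r r' x hadj hx.1 hx'.1
    have hsub : (G.neighborFinset r ∩ A) ∪ (G.neighborFinset r' ∩ A) ⊆ A :=
      Finset.union_subset Finset.inter_subset_right Finset.inter_subset_right
    have := Finset.card_union_of_disjoint hdisj ▸ Finset.card_le_card hsub
    have h1 := hdA r; have h2 := hdA r'
    simp only [ht]
    omega
  have hdegf : ∀ r ∈ R, (R.filter (fun y => G.Adj r y)).card ≤ m := by
    intro r hr
    rw [← nbr_inter_eq_filter]
    exact hdeg r hr
  simp only [nbr_inter_eq_filter]
  calc A.card * ∑ r ∈ R, (R.filter (fun y => G.Adj r y)).card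
      = ∑ r ∈ R, ∑ _r' ∈ R.filter (fun y => G.Adj r y), A.card := by
        rw [Finset.mul_sum]
        exact Finset.sum_congr rfl fun r _ => by rw [Finset.sum_const, smul_eq_mul, mul_comm]
    _ ≤ ∑ r ∈ R, ∑ r' ∈ R.filter (fun y => G.Adj r y), (t r + t r') := by
        refine Finset.sum_le_sum fun r hr => Finset.sum_le_sum fun r' hr' => ?_
        exact key r r' (Finset.mem_filter.mp hr').2
    _ = (∑ r ∈ R, ∑ _r' ∈ R.filter (fun y => G.Adj r y), t r)
        + ∑ r ∈ R, ∑ r' ∈ R.filter (fun y => G.Adj r y), t r' := by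
        rw [← Finset.sum_add_distrib]
        exact Finset.sum_congr rfl fun r _ => by rw [← Finset.sum_add_distrib]
    _ = (∑ r ∈ R, (R.filter (fun y => G.Adj r y)).card * t r)
        + ∑ r ∈ R, (R.filter (fun y => G.Adj r y)).card * t r := by
        rw [swap_sum]
        congr 1
        exact Finset.sum_congr rfl fun r _ => by rw [Finset.sum_const, smul_eq_mul]
    _ ≤ (∑ r ∈ R, m * t r) + ∑ r ∈ R, m * t r := by
        refine Nat.add_le_add ?_ ?_ <;>
          exact Finset.sum_le_sum fun r hr => Nat.mul_le_mul_right _ (hdegf r hr)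
    _ = 2 * m * ∑ r ∈ R, t r := by rw [← Finset.mul_sum]; ring

end Count

/-- Threshold for "huge degree". -/
def bigD (l s : ℕ) : ℕ := 3*(s+2)*(l+2)

/-- The `n₀` for the main theorem. -/
def bigN (l s : ℕ) : ℕ :=
  s^3 + 3*(s+2)^2 + (s + (s+1)*(l+1)) * (s + 6*(s+2)*(l+2)) + s + 9

section Core

set_option maxHeartbeats 1000000 in
lemma core {n l s : ℕ} (hl : 1 ≤ l) (hls : l ≤ s) (hn : bigN l s ≤ n)
    (G : SimpleGraph (Fin n)) [DecidableRel G.Adj]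
    (htri : ∀ x y z : Fin n, G.Adj x y → G.Adj x z → G.Adj y z → False)
    (hstar : ∀ f g, StarData G l (s + 1) f g → False) :
    G.edgeFinset.card ≤ s * (n - s) ∧
    (G.edgeFinset.card = s * (n - s) →
      ∃ A : Finset (Fin n), A.card = s ∧
        ∀ x y, G.Adj x y ↔ ((x ∈ A ∧ y ∉ A) ∨ (x ∉ A ∧ y ∈ A))) := by
  obtain ⟨m, rfl⟩ : ∃ m, n = s + m := ⟨n - s, by
    have hsb : s ≤ bigN l s := by
      unfold bigN
      generalize (s + (s+1)*(l+1)) * (s + 6*(s+2)*(l+2)) = P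
      generalize (s+2)^2 = Q
      generalize s^3 = R
      omega
    omega⟩
  have hmn : s + m - s = m := by omega
  rw [hmn]
  set D := bigD l s with hD
  set K := s + (s+1)*(l+1) with hK
  have hm : s^3 + 3*(s+2)^2 + K*(s+2*D) + 9 ≤ m := by
    have hbe : bigN l s = s^3 + 3*(s+2)^2 + K*(s+2*D) + s + 9 := by
      rw [hK, hD]; unfold bigN bigD; ring
    rw [hbe] at hn
    set P := s^3 with hP
    set Q := (s+2)^2 with hQ
    set R := K*(s+2*D) with hR
    omega
  set A : Finset (Fin (s+m)) := Finset.univ.filter (fun v => D ≤ G.degree v) with hA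
  set a := A.card with ha
  have hdegA : ∀ v ∈ A, D ≤ G.degree v := fun v hv => (Finset.mem_filter.mp hv).2
  have hdegnA : ∀ v, v ∉ A → G.degree v < D := by
    intro v hv
    by_contra hcon
    exact hv (Finset.mem_filter.mpr ⟨Finset.mem_univ _, by omega⟩)
  -- (f1) at most s huge-degree vertices
  have f1 : a ≤ s := by
    by_contra hcon
    push_neg at hcon
    obtain ⟨A', hA'sub, hA'card⟩ := Finset.exists_subset_card_eq
      (show s+1 ≤ A.card by omega)
    set c : Fin (s+1) → Fin (s+m) :=
      fun i => ((A'.equivFinOfCardEq hA'card).symm i : Fin (s+m)) with hc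
    have hcmem : ∀ i, c i ∈ A' := fun i => Subtype.coe_prop _
    have hcinj : Function.Injective c := fun i j hh =>
      (A'.equivFinOfCardEq hA'card).symm.injective (Subtype.coe_injective hh)
    have hdegc : ∀ i : Fin (s+1), (i:ℕ)*l + l ≤ ((G.neighborFinset (c i)) \ A').card := by
      intro i
      have h1 : D ≤ (G.neighborFinset (c i)).card := hdegA _ (hA'sub (hcmem i))
      have h2 := Finset.le_card_sdiff A' (G.neighborFinset (c i))
      have h3 : (i:ℕ) ≤ s := by omega
      have h4 : (i:ℕ)*l + l ≤ s*l + l := by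
        have := Nat.mul_le_mul_right l h3; omega
      have h5 : s*l + l + (s+1) ≤ D := by
        rw [hD]; unfold bigD; nlinarith
      have h2' : (G.neighborFinset (c i)).card ≤ ((G.neighborFinset (c i)) \ A').card + A'.card := by
        omega
      rw [hA'card] at h2'
      linarith
    obtain ⟨gs, hg1, hg2, hg3⟩ := greedy_leaves (s+1) c A' hdegc
    exact hstar c gs ⟨hg1, hcinj, hg3, fun i i' j hh => hg2 i' j (hh ▸ hcmem i)⟩
  -- (f2) extension of packings avoiding A
  have f2 : ∀ k₀, k₀ + a = s + 1 → ∀ f₀ g₀, StarData G l k₀ f₀ g₀ →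
      (∀ i, f₀ i ∉ A) → (∀ i j, g₀ i j ∉ A) → False := by
    intro k₀ hk f₀ g₀ hd hf hg
    set F : Finset (Fin (s+m)) := (A ∪ Finset.image f₀ Finset.univ) ∪
      Finset.image (fun p : Fin k₀ × Fin l => g₀ p.1 p.2) Finset.univ with hF
    have hAF : A ⊆ F := fun x hx =>
      Finset.mem_union_left _ (Finset.mem_union_left _ hx)
    have hfF : ∀ i, f₀ i ∈ F := fun i => Finset.mem_union_left _
      (Finset.mem_union_right _ (Finset.mem_image.mpr ⟨i, Finset.mem_univ _, rfl⟩))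
    have hgF : ∀ i j, g₀ i j ∈ F := fun i j => Finset.mem_union_right _
      (Finset.mem_image.mpr ⟨(i, j), Finset.mem_univ _, rfl⟩)
    have hFcard : F.card ≤ a + k₀ + k₀ * l := by
      rw [hF]
      have h1 := Finset.card_union_le (A ∪ Finset.image f₀ Finset.univ)
        (Finset.image (fun p : Fin k₀ × Fin l => g₀ p.1 p.2) Finset.univ)
      have h2 := Finset.card_union_le A (Finset.image f₀ Finset.univ)
      have h3 : (Finset.image f₀ Finset.univ).card ≤ k₀ := le_trans
        Finset.card_image_le (by simp)
      have h4 : (Finset.image (fun p : Fin k₀ × Fin l => g₀ p.1 p.2) Finset.univ).card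
          ≤ k₀ * l := le_trans Finset.card_image_le (by simp)
      omega
    set cA : Fin a → Fin (s+m) := fun i => ((A.equivFinOfCardEq ha.symm).symm i : Fin (s+m))
      with hcA
    have hcAmem : ∀ i, cA i ∈ A := fun i => Subtype.coe_prop _
    have hcAinj : Function.Injective cA := fun i j hh =>
      (A.equivFinOfCardEq ha.symm).symm.injective (Subtype.coe_injective hh)
    have hdegcA : ∀ i : Fin a, (i:ℕ)*l + l ≤ ((G.neighborFinset (cA i)) \ F).card := by
      intro i
      have h1 : D ≤ (G.neighborFinset (cA i)).card := hdegA _ (hcAmem i)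
      have h2 := Finset.le_card_sdiff F (G.neighborFinset (cA i))
      have h3 : (i:ℕ) ≤ s := by omega
      have h4 : (i:ℕ)*l + l ≤ s*l + l := by
        have := Nat.mul_le_mul_right l h3; omega
      have hk₀ : k₀ ≤ s + 1 := by omega
      have h6 : k₀ * l ≤ (s+1) * l := Nat.mul_le_mul_right l hk₀
      have h5 : s*l + l + (s + (s+1) + (s+1)*l) ≤ D := by
        rw [hD]; unfold bigD; nlinarith
      have h2' : (G.neighborFinset (cA i)).card ≤ ((G.neighborFinset (cA i)) \ F).card + F.card := by
        omega
      have h7 : a ≤ s := f1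
      linarith
    obtain ⟨gsA, hA1, hA2, hA3⟩ := greedy_leaves a cA F hdegcA
    obtain ⟨f', g', hd', _, _⟩ := hd.extend a cA gsA hA1 hcAinj hA3
      (fun i i' j hh => hA2 i' j (by rw [← hh]; exact hAF (hcAmem i)))
      (fun i i' hh => hf i' (by rw [← hh]; exact hcAmem i))
      (fun i i' j hh => hg i' j (by rw [← hh]; exact hcAmem i))
      (fun i j i' hh => hA2 i j (by rw [hh]; exact hfF i'))
      (fun i j i' j' hh => hA2 i j (by rw [hh]; exact hgF i' j'))
    exact hstar _ _ (starData_cast hk hd')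
  -- (f3) if a = s, B-degrees are < l
  have f3 : a = s → ∀ b, b ∉ A → ((G.neighborFinset b) \ A).card < l := by
    intro has b hb
    by_contra hcon
    push_neg at hcon
    obtain ⟨S, hSsub, hScard⟩ := Finset.exists_subset_card_eq hcon
    set eS : Fin l → Fin (s+m) := fun j => ((S.equivFinOfCardEq hScard).symm j : Fin (s+m))
      with heS
    have heSmem : ∀ j, eS j ∈ S := fun j => Subtype.coe_prop _
    have heSinj : ∀ j j', eS j = eS j' → j = j' := fun j j' hh =>
      (S.equivFinOfCardEq hScard).symm.injective (Subtype.coe_injective hh)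
    have heSN : ∀ j, eS j ∈ (G.neighborFinset b) \ A := fun j => hSsub (heSmem j)
    refine f2 1 (by omega) (fun _ => b) (fun _ j => eS j) ⟨?_, ?_, ?_, ?_⟩ ?_ ?_
    · intro i j
      have := heSN j
      simp only [Finset.mem_sdiff, mem_neighborFinset] at this
      exact this.1
    · exact fun i j _ => Subsingleton.elim i j
    · exact fun i j i' j' hh => ⟨Subsingleton.elim i i', heSinj _ _ hh⟩
    · intro i i' j hh
      change b = eS j at hh
      have := heSN j
      rw [← hh] at this
      simp at this
    · exact fun _ => hb
    · intro i j
      have := heSN j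
      simp only [Finset.mem_sdiff] at this
      exact this.2
  -- (f4) blob
  obtain ⟨U, hAU, hUcard, hUprop⟩ := exists_blob (G := G) (s+1-a) A
    (fun f g hd hf hg => f2 _ (by omega) f g hd hf hg)
  have hUK : U.card ≤ K := by
    have h1 : (s+1-a)*(l+1) ≤ (s+1)*(l+1) := Nat.mul_le_mul_right _ (by omega)
    rw [hK]; omega
  -- common quantities
  set lm := l - 1 with hlm'
  have hlm1 : lm + 1 = l := by omega
  set sm1 := s - 1 with hsm1'
  have hsm1 : sm1 + 1 = s := by omega
  clear_value lm sm1
  set E := G.edgeFinset.card with hE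
  have hdAle : ∀ v : Fin (s+m), (G.neighborFinset v ∩ A).card ≤ a :=
    fun v => Finset.card_le_card Finset.inter_subset_right
  have hdegsplit : ∀ (P : Finset (Fin (s+m))) (v : Fin (s+m)),
      G.degree v = (G.neighborFinset v ∩ P).card + (G.neighborFinset v ∩ Pᶜ).card := by
    intro P v
    have h2 : G.neighborFinset v ∩ Pᶜ = G.neighborFinset v \ P := by
      ext x; simp [Finset.mem_sdiff, Finset.mem_compl]
    rw [h2]
    exact (Finset.card_inter_add_card_sdiff (G.neighborFinset v) P).symm
  have hsd : ∑ v, G.degree v = 2 * E := G.sum_degrees_eq_twice_card_edges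
  rcases f1.eq_or_lt with has | hlt
  · -- CASE a = s : the exact bound
    set B := Aᶜ with hB
    have hBcard : B.card = m := by
      rw [hB, Finset.card_compl, ← ha, has]
      simp
    have hBmem : ∀ b, b ∈ B ↔ b ∉ A := by intro b; rw [hB, Finset.mem_compl]
    have hBdeg : ∀ b ∈ B, (G.neighborFinset b ∩ B).card ≤ lm := by
      intro b hb
      have h1 := f3 has b ((hBmem b).mp hb)
      have h2 : G.neighborFinset b ∩ B = G.neighborFinset b \ A := by
        rw [hB]; ext x; simp [Finset.mem_sdiff, Finset.mem_compl]
      rw [h2]; omega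
    set T := ∑ b ∈ B, (a - (G.neighborFinset b ∩ A).card) with hT
    have hTsum : (∑ b ∈ B, (G.neighborFinset b ∩ A).card) + T = a * B.card := by
      rw [hT, ← Finset.sum_add_distrib,
        Finset.sum_congr rfl (fun b _ => Nat.add_sub_cancel' (hdAle b)),
        Finset.sum_const, smul_eq_mul, mul_comm]
    have hdeg2 : ∀ v, G.degree v
        = (G.neighborFinset v ∩ A).card + (G.neighborFinset v ∩ B).card := by
      intro v; rw [hB]; exact hdegsplit A v
    set SAA := ∑ x ∈ A, (G.neighborFinset x ∩ A).card with hSAA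
    set SBB := ∑ b ∈ B, (G.neighborFinset b ∩ B).card with hSBB
    have h2E : 2*E + 2*T = SAA + 2*(a*B.card) + SBB := by
      have e1 : ∑ v ∈ A, G.degree v = SAA + ∑ b ∈ B, (G.neighborFinset b ∩ A).card := by
        rw [Finset.sum_congr rfl fun v _ => hdeg2 v, Finset.sum_add_distrib,
          sum_inter_comm A B]
      have e2 : ∑ v ∈ B, G.degree v
          = (∑ b ∈ B, (G.neighborFinset b ∩ A).card) + SBB := by
        rw [Finset.sum_congr rfl fun v _ => hdeg2 v, Finset.sum_add_distrib]
      have e0 : ∑ v ∈ A, G.degree v + ∑ v ∈ B, G.degree v = 2 * E := by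
        rw [hB, Finset.sum_add_sum_compl]; exact hsd
      linarith only [e0, e1, e2, hTsum]
    have hLP : a * SBB ≤ 2*lm*T := by
      have h0 := LP_bound htri A B lm hBdeg
      rw [← ha] at h0
      exact h0
    have haB : a * B.card = s * m := by rw [has, hBcard]
    rcases Nat.eq_zero_or_pos SAA with hz | hpos
    · -- exact subcase
      have key : 2*s*E + 2*T ≤ 2*s*(s*m) := by
        have q1 : s*(2*E + 2*T) = s*SAA + s*(2*(a*B.card)) + s*SBB := by
          rw [h2E]; ring
        have q2 : s * SBB ≤ 2*lm*T := by rw [← has]; exact hLP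
        have q3 : 2*lm*T + 2*T ≤ 2*(s*T) := by
          have h1 : (2*lm + 2) ≤ 2*s := by omega
          have h2 := Nat.mul_le_mul_right T h1
          linarith
        rw [haB] at q1
        rw [hz] at q1
        linarith only [q1, q2, q3]
      have hEle : E ≤ s * m := by
        have h1 : 2*s*E ≤ 2*s*(s*m) := by linarith only [key]
        exact Nat.le_of_mul_le_mul_left h1 (by omega)
      refine ⟨hEle, ?_⟩
      intro he
      have hTz : T = 0 := by
        rw [he] at key
        omega
      have hSBBz : SBB = 0 := by
        rw [hTz] at hLP
        simp at hLP
        rcases hLP with h | h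
        · omega
        · exact h
      have hAA : ∀ x ∈ A, (G.neighborFinset x ∩ A).card = 0 :=
        fun x hx => (Finset.sum_eq_zero_iff.mp hz) x hx
      have hBB : ∀ b ∈ B, (G.neighborFinset b ∩ B).card = 0 :=
        fun b hb => (Finset.sum_eq_zero_iff.mp hSBBz) b hb
      have hTT : ∀ b ∈ B, (G.neighborFinset b ∩ A).card = a := by
        intro b hb
        have h1 := (Finset.sum_eq_zero_iff.mp hTz) b hb
        have h2 := hdAle b
        omega
      have hfull : ∀ b ∈ B, ∀ x ∈ A, G.Adj b x := by
        intro b hb x hx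
        have h1 : G.neighborFinset b ∩ A = A := by
          apply Finset.eq_of_subset_of_card_le Finset.inter_subset_right
          rw [hTT b hb, ha]
        have h2 : x ∈ G.neighborFinset b ∩ A := h1.symm ▸ hx
        exact (G.mem_neighborFinset b x).mp (Finset.mem_inter.mp h2).1
      refine ⟨A, by rw [← ha, has], ?_⟩
      intro x y
      constructor
      · intro hadj
        by_cases hx : x ∈ A <;> by_cases hy : y ∈ A
        · exfalso
          have h1 : y ∈ G.neighborFinset x ∩ A :=
            Finset.mem_inter.mpr ⟨(G.mem_neighborFinset x y).mpr hadj, hy⟩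
          rw [Finset.card_eq_zero.mp (hAA x hx)] at h1
          simp at h1
        · exact Or.inl ⟨hx, hy⟩
        · exact Or.inr ⟨hx, hy⟩
        · exfalso
          have h1 : y ∈ G.neighborFinset x ∩ B :=
            Finset.mem_inter.mpr ⟨(G.mem_neighborFinset x y).mpr hadj, (hBmem y).mpr hy⟩
          rw [Finset.card_eq_zero.mp (hBB x ((hBmem x).mpr hx))] at h1
          simp at h1
      · rintro (⟨hx, hy⟩ | ⟨hx, hy⟩)
        · exact (hfull y ((hBmem y).mpr hy) x hx).symm
        · exact hfull x ((hBmem x).mpr hx) y hy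
    · -- subcase with an edge inside A : strictly smaller
      have hexA : ∃ x ∈ A, 0 < (G.neighborFinset x ∩ A).card := by
        by_contra hcon
        push_neg at hcon
        have : SAA = 0 := Finset.sum_eq_zero fun x hx => Nat.le_zero.mp (hcon x hx)
        omega
      obtain ⟨x, hxA, hxpos⟩ := hexA
      obtain ⟨y, hy⟩ := Finset.card_pos.mp hxpos
      have hyA : y ∈ A := (Finset.mem_inter.mp hy).2
      have hxy : G.Adj x y := (G.mem_neighborFinset x y).mp (Finset.mem_inter.mp hy).1
      have ha1 : 1 ≤ a := by omega
      have hTbig : B.card ≤ T := by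
        rw [hT]
        have h1 : ∀ b ∈ B, 1 ≤ a - (G.neighborFinset b ∩ A).card := by
          intro b hb
          have hxyb : ¬ (G.Adj b x ∧ G.Adj b y) := by
            rintro ⟨hh1, hh2⟩
            exact htri x y b hxy hh1.symm hh2.symm
          have hsub : (G.neighborFinset b ∩ A).card ≤ a - 1 := by
            by_cases hbx : G.Adj b x
            · have hss : G.neighborFinset b ∩ A ⊆ A.erase y := by
                intro z hz
                obtain ⟨hz1, hz2⟩ := Finset.mem_inter.mp hz
                refine Finset.mem_erase.mpr ⟨?_, hz2⟩
                rintro rfl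
                exact hxyb ⟨hbx, (G.mem_neighborFinset b z).mp hz1⟩
              have := Finset.card_le_card hss
              rw [Finset.card_erase_of_mem hyA, ← ha] at this
              omega
            · have hss : G.neighborFinset b ∩ A ⊆ A.erase x := by
                intro z hz
                obtain ⟨hz1, hz2⟩ := Finset.mem_inter.mp hz
                refine Finset.mem_erase.mpr ⟨?_, hz2⟩
                rintro rfl
                exact hbx ((G.mem_neighborFinset b z).mp hz1)
              have := Finset.card_le_card hss
              rw [Finset.card_erase_of_mem hxA, ← ha] at this
              omega
          omega
        calc B.card = ∑ _b ∈ B, 1 := by simp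
        _ ≤ _ := Finset.sum_le_sum h1
      have hSAAle : SAA ≤ s*s := by
        have h1 := Finset.sum_le_card_nsmul A (fun x => (G.neighborFinset x ∩ A).card) a
          (fun x _ => hdAle x)
        rw [smul_eq_mul, ← ha, has] at h1
        exact h1
      have hstrict : E < s * m := by
        have q1 : s*(2*E + 2*T) = s*SAA + s*(2*(s*m)) + s*SBB := by
          rw [h2E, haB]; ring
        have q2 : s * SBB ≤ 2*lm*T := by rw [← has]; exact hLP
        have q3 : 2*lm*T + 2*T ≤ 2*(s*T) := by
          have h1 : (2*lm + 2) ≤ 2*s := by omega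
          have h2 := Nat.mul_le_mul_right T h1
          linarith
        have q4 : s*SAA ≤ s*(s*s) := Nat.mul_le_mul_left s hSAAle
        have q5 : m ≤ T := hBcard ▸ hTbig
        -- 2sE + 2T ≤ s³ + 2s(sm) ; T ≥ m ; m large
        have q6 : 2*s*E + 2*m ≤ s*(s*s) + 2*s*(s*m) := by
          linarith only [q1, q2, q3, q4, q5]
        by_contra hcon
        push_neg at hcon
        have q7 : 2*s*(s*m) ≤ 2*s*E := by
          have hq := Nat.mul_le_mul_left (2*s) hcon
          linarith only [hq]
        have q8 : 2*m ≤ s*(s*s) := by linarith only [q6, q7]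
        have q9 : s*(s*s) ≤ s^3 := by ring_nf; omega
        have q10 : (0:ℕ) ≤ 3*(s+2)^2 + K*(s+2*D) := by positivity
        omega
      exact ⟨hstrict.le, fun he => absurd he hstrict.ne⟩
  · -- CASE a < s : strictly smaller
    set R := Uᶜ with hR
    set U' := U \ A with hU'
    have hRcard : R.card ≤ s + m :=
      le_trans (Finset.card_le_univ R) (by simp)
    have hU'card : U'.card ≤ K :=
      le_trans (Finset.card_le_card (Finset.sdiff_subset)) hUK
    have hcsplit : Aᶜ = U' ∪ R := by
      ext x
      simp only [hU', hR, Finset.mem_compl, Finset.mem_sdiff, Finset.mem_union]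
      constructor
      · intro hx
        by_cases hxu : x ∈ U
        · exact Or.inl ⟨hxu, hx⟩
        · exact Or.inr hxu
      · rintro (⟨_, hx⟩ | hx)
        · exact hx
        · exact fun hxa => hx (hAU hxa)
    have hdisjUR : Disjoint U' R := by
      rw [Finset.disjoint_left]
      intro x hx1 hx2
      rw [hU', Finset.mem_sdiff] at hx1
      rw [hR, Finset.mem_compl] at hx2
      exact hx2 hx1.1
    have hcomplsplit : ∀ f : Fin (s+m) → ℕ,
        ∑ v ∈ Aᶜ, f v = ∑ v ∈ U', f v + ∑ v ∈ R, f v := by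
      intro f
      rw [hcsplit, Finset.sum_union hdisjUR]
    have hdeg3 : ∀ v, (G.neighborFinset v ∩ Aᶜ).card
        = (G.neighborFinset v ∩ U').card + (G.neighborFinset v ∩ R).card := by
      intro v
      rw [hcsplit, Finset.inter_union_distrib_left]
      exact Finset.card_union_of_disjoint
        (Finset.disjoint_of_subset_left Finset.inter_subset_right
          (Finset.disjoint_of_subset_right Finset.inter_subset_right hdisjUR))
    set T := ∑ r ∈ R, (a - (G.neighborFinset r ∩ A).card) with hT
    have hTsum : (∑ r ∈ R, (G.neighborFinset r ∩ A).card) + T = a * R.card := by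
      rw [hT, ← Finset.sum_add_distrib,
        Finset.sum_congr rfl (fun b _ => Nat.add_sub_cancel' (hdAle b)),
        Finset.sum_const, smul_eq_mul, mul_comm]
    have hTle : T ≤ a * R.card := hTsum ▸ Nat.le_add_left T _
    set SRR := ∑ r ∈ R, (G.neighborFinset r ∩ R).card with hSRR
    have hSRRle : ∀ r ∈ R, (G.neighborFinset r ∩ R).card ≤ lm := by
      intro r hr
      have h1 := hUprop r (by rw [hR] at hr; exact Finset.mem_compl.mp hr)
      have h2 : G.neighborFinset r ∩ R ⊆ G.neighborFinset r \ U := by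
        intro x hx
        obtain ⟨hx1, hx2⟩ := Finset.mem_inter.mp hx
        rw [hR] at hx2
        exact Finset.mem_sdiff.mpr ⟨hx1, Finset.mem_compl.mp hx2⟩
      have h3 := Finset.card_le_card h2
      omega
    have hLP2 : a * SRR ≤ 2*lm*T := by
      have h0 := LP_bound htri A R lm hSRRle
      rw [← ha] at h0
      exact h0
    have hmain : 2*E + 2*T ≤ (a*a + K*s + 2*(K*D)) + 2*(a*R.card) + SRR := by
      have e0 : ∑ v ∈ A, G.degree v + (∑ v ∈ U', G.degree v + ∑ v ∈ R, G.degree v)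
          = 2 * E := by
        rw [← hcomplsplit, Finset.sum_add_sum_compl]; exact hsd
      have e1 : ∑ v ∈ A, G.degree v = (∑ x ∈ A, (G.neighborFinset x ∩ A).card)
          + (∑ v ∈ U', (G.neighborFinset v ∩ A).card
             + ∑ r ∈ R, (G.neighborFinset r ∩ A).card) := by
        rw [Finset.sum_congr rfl fun v _ => hdegsplit A v, Finset.sum_add_distrib,
          sum_inter_comm A Aᶜ, hcomplsplit]
      have e2 : ∑ v ∈ R, G.degree v = (∑ r ∈ R, (G.neighborFinset r ∩ A).card)
          + ((∑ r ∈ R, (G.neighborFinset r ∩ U').card) + SRR) := by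
        rw [Finset.sum_congr rfl fun v _ => hdegsplit A v, Finset.sum_add_distrib,
          Finset.sum_congr rfl fun v _ => hdeg3 v, Finset.sum_add_distrib]
      have e3 : ∑ r ∈ R, (G.neighborFinset r ∩ U').card ≤ K*D := by
        rw [sum_inter_comm R U']
        have h1 : ∀ u ∈ U', (G.neighborFinset u ∩ R).card ≤ D := by
          intro u hu
          have h2 : u ∉ A := (Finset.mem_sdiff.mp (hU' ▸ hu)).2
          exact le_trans (Finset.card_le_card Finset.inter_subset_left)
            (le_of_lt (hdegnA u h2))
        have h2 := Finset.sum_le_card_nsmul U' _ D h1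
        rw [smul_eq_mul] at h2
        exact le_trans h2 (Nat.mul_le_mul_right D hU'card)
      have e5 : ∑ v ∈ U', G.degree v ≤ K*D := by
        have h1 : ∀ u ∈ U', G.degree u ≤ D := by
          intro u hu
          exact le_of_lt (hdegnA u (Finset.mem_sdiff.mp (hU' ▸ hu)).2)
        have h2 := Finset.sum_le_card_nsmul U' _ D h1
        rw [smul_eq_mul] at h2
        exact le_trans h2 (Nat.mul_le_mul_right D hU'card)
      have e6 : ∑ x ∈ A, (G.neighborFinset x ∩ A).card ≤ a*a := by
        have h2 := Finset.sum_le_card_nsmul A _ a (fun x _ => hdAle x)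
        rw [smul_eq_mul, ← ha] at h2
        exact h2
      have e7 : ∑ v ∈ U', (G.neighborFinset v ∩ A).card ≤ K*s := by
        have h1 : ∀ u ∈ U', (G.neighborFinset u ∩ A).card ≤ s :=
          fun u _ => le_trans (hdAle u) f1
        have h2 := Finset.sum_le_card_nsmul U' _ s h1
        rw [smul_eq_mul] at h2
        exact le_trans h2 (Nat.mul_le_mul_right s hU'card)
      linarith only [e0, e1, e2, e3, e5, e6, e7, hTsum]
    have haR : 2*(a*R.card) ≤ 2*(sm1*(s+m)) := by
      have h1 : a ≤ sm1 := by omega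
      have h2 : a * R.card ≤ sm1 * (s+m) := Nat.mul_le_mul h1 hRcard
      omega
    have hfin : 2*E ≤ (s*s + K*s + 2*(K*D)) + 2*(sm1*(s+m)) := by
      have haa : a*a ≤ s*s := Nat.mul_le_mul f1 f1
      rcases Nat.eq_zero_or_pos a with haz | hap
      · -- a = 0
        have hSRRtot : SRR ≤ lm * R.card := by
          have h2 := Finset.sum_le_card_nsmul R _ lm hSRRle
          rw [smul_eq_mul, mul_comm] at h2
          exact h2
        have h3 : lm * R.card ≤ sm1 * (s+m) := Nat.mul_le_mul (by omega) hRcard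
        have z1 : a*a = 0 := by rw [haz]
        have z2 : a*(R.card) = 0 := by rw [haz]; ring
        linarith only [hmain, hSRRtot, h3, z1, z2, Nat.zero_le (sm1*(s+m)), Nat.zero_le (s*s), Nat.zero_le T]
      · rcases le_or_gt lm a with hla | hla
        · -- lm ≤ a : cancel T
          have q1 := Nat.mul_le_mul_left a hmain
          have q2 : 2*lm*T ≤ 2*(a*T) := by
            have := Nat.mul_le_mul_right T hla
            linarith only [this]
          have q3 : a*(2*E) ≤ a*((a*a + K*s + 2*(K*D)) + 2*(a*R.card)) := by
            linarith only [q1, hLP2, q2]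
          have q4 : 2*E ≤ (a*a + K*s + 2*(K*D)) + 2*(a*R.card) :=
            Nat.le_of_mul_le_mul_left (by linarith only [q3]) hap
          linarith only [q4, haR, haa, Nat.zero_le (sm1*(s+m))]
        · -- a < lm
          obtain ⟨d, hd⟩ : ∃ d, lm = a + d := ⟨lm - a, by omega⟩
          have q1 := Nat.mul_le_mul_left a hmain
          have q5 : d*T ≤ d*(a*R.card) := Nat.mul_le_mul_left d hTle
          have hd2 : 2*lm*T = 2*(a*T) + 2*(d*T) := by rw [hd]; ring
          have q3 : a*(2*E) ≤ a*((a*a + K*s + 2*(K*D)) + 2*(a*R.card) + 2*(d*R.card)) := by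
            linarith only [q1, hLP2, hd2, q5]
          have q4 : 2*E ≤ (a*a + K*s + 2*(K*D)) + 2*(a*R.card) + 2*(d*R.card) :=
            Nat.le_of_mul_le_mul_left (by linarith only [q3]) hap
          have q6 : a*R.card + d*R.card ≤ sm1*(s+m) := by
            have h1 : (a+d) * R.card ≤ sm1 * (s+m) := by
              apply Nat.mul_le_mul _ hRcard
              omega
            linarith only [h1, Nat.add_mul a d R.card]
          linarith only [q4, q6, haa, Nat.zero_le (sm1*(s+m))]
    have hstrict : E < s * m := by
      have w1 : sm1*(s+m) + (s+m) = s*(s+m) := by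
        calc sm1*(s+m) + (s+m) = (sm1+1)*(s+m) := by ring
        _ = s*(s+m) := by rw [hsm1]
      have w2 : s*(s+m) = s*s + s*m := by ring
      have w3 : K*(s+2*D) = K*s + 2*(K*D) := by ring
      have w4 : s*s ≤ (s+2)^2 := by nlinarith
      have w5 : (0:ℕ) ≤ s^3 := by positivity
      have hlin : 2*E < 2*(s*m) := by
        linarith only [hfin, hm, w1, w2, w3, w4, w5]
      omega
    exact ⟨hstrict.le, fun he => absurd he hstrict.ne⟩

end Core


section Final

lemma triangle_free_elim {V : Type*} {G : SimpleGraph V}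
    (h : _root_.Free G (completeGraph (Fin 3))) :
    ∀ x y z : V, G.Adj x y → G.Adj x z → G.Adj y z → False := by
  intro x y z hxy hxz hyz
  apply h
  have hne1 : x ≠ y := hxy.ne
  have hne2 : x ≠ z := hxz.ne
  have hne3 : y ≠ z := hyz.ne
  refine ⟨⟨![x, y, z], ?_⟩, ?_⟩
  · intro i j hij
    fin_cases i <;> fin_cases j <;> simp_all
  · intro i j hij
    have hne : i ≠ j := hij
    change G.Adj (![x, y, z] i) (![x, y, z] j)
    fin_cases i <;> fin_cases j <;> simp_all [hxy.symm, hxz.symm, hyz.symm]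

lemma cbg_triangle_free (α β : Type*) :
    _root_.Free (completeBipartiteGraph α β) (completeGraph (Fin 3)) := by
  rintro ⟨f, hf⟩
  have h01 := hf 0 1 (show (0:Fin 3) ≠ 1 by decide)
  have h02 := hf 0 2 (show (0:Fin 3) ≠ 2 by decide)
  have h12 := hf 1 2 (show (1:Fin 3) ≠ 2 by decide)
  cases h0 : f 0 <;> cases h1 : f 1 <;> cases h2 : f 2 <;>
    rw [h0, h1] at h01 <;> rw [h0, h2] at h02 <;> rw [h1, h2] at h12 <;>
    simp at h01 h02 h12

lemma cbg_star_free (s l m : ℕ) (hl : 1 ≤ l) :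
    _root_.Free (completeBipartiteGraph (Fin s) (Fin m)) (starForest (s+1) l) := by
  rintro ⟨F, hF⟩
  set j0 : Fin l := ⟨0, hl⟩ with hj0
  have hadj : ∀ i, (completeBipartiteGraph (Fin s) (Fin m)).Adj
      (F (i, Sum.inl ())) (F (i, Sum.inr j0)) := by
    intro i
    apply hF
    rw [starForest, fromRel_adj]
    exact ⟨by simp, Or.inl ⟨rfl, by simp⟩⟩
  classical
  set ψ : Fin (s+1) → Fin s ⊕ Fin m :=
    fun i => if (F (i, Sum.inl ())).isLeft then F (i, Sum.inl ()) else F (i, Sum.inr j0)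
    with hψ
  have hψleft : ∀ i, (ψ i).isLeft := by
    intro i
    by_cases hc : (F (i, Sum.inl ())).isLeft
    · simp [hψ, hc]
    · simp only [hψ, hc, if_false]
      have := hadj i
      rw [completeBipartiteGraph_adj] at this
      rcases this with ⟨h1, _⟩ | ⟨_, h2⟩
      · exact absurd h1 hc
      · exact h2
  have hψinj : Function.Injective ψ := by
    intro i i' hh
    by_cases hc : (F (i, Sum.inl ())).isLeft <;>
      by_cases hc' : (F (i', Sum.inl ())).isLeft <;>
      simp only [hψ, hc, hc', if_true, if_false] at hh <;>
      · have := F.injective hh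
        exact congrArg Prod.fst this
  have hcard : s + 1 ≤ s := by
    have h1 : Finset.univ.image ψ ⊆ Finset.univ.filter (fun x : Fin s ⊕ Fin m => x.isLeft) := by
      intro x hx
      obtain ⟨i, _, rfl⟩ := Finset.mem_image.mp hx
      exact Finset.mem_filter.mpr ⟨Finset.mem_univ _, hψleft i⟩
    have h2 : (Finset.univ.filter (fun x : Fin s ⊕ Fin m => x.isLeft))
        = Finset.univ.map ⟨Sum.inl, Sum.inl_injective⟩ := by
      ext x
      cases x <;> simp
    have h3 := Finset.card_le_card h1
    rw [Finset.card_image_of_injective _ hψinj, h2, Finset.card_map] at h3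
    simpa using h3
  omega

lemma ncard_eq_edgeFinset {V : Type*} [Fintype V] (G : SimpleGraph V) [Fintype G.edgeSet] :
    G.edgeSet.ncard = G.edgeFinset.card := by
  rw [← Nat.card_coe_set_eq, Nat.card_eq_fintype_card, SimpleGraph.edgeFinset_card]

lemma ncard_edge_iso {V W : Type*} [Fintype V] [Fintype W] {G : SimpleGraph V}
    {H : SimpleGraph W} (e : G ≃g H) : G.edgeSet.ncard = H.edgeSet.ncard := by
  classical
  rw [ncard_eq_edgeFinset, ncard_eq_edgeFinset]
  exact SimpleGraph.Iso.card_edgeFinset_eq e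

lemma contains_of_iso {α V W : Type*} {G : SimpleGraph V} {H : SimpleGraph W}
    (e : G ≃g H) {K : SimpleGraph α} (h : Contains G K) : Contains H K := by
  obtain ⟨f, hf⟩ := h
  refine ⟨f.trans e.toEquiv.toEmbedding, fun a b hab => ?_⟩
  simpa using e.map_adj_iff.mpr (hf a b hab)

lemma cbg_edge_card (s m : ℕ) :
    (completeBipartiteGraph (Fin s) (Fin m)).edgeSet.ncard = s * m := by
  classical
  set H := completeBipartiteGraph (Fin s) (Fin m) with hH
  have hdl : ∀ a : Fin s, H.degree (Sum.inl a) = m := by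
    intro a
    have h1 : H.neighborFinset (Sum.inl a) = Finset.univ.map ⟨Sum.inr, Sum.inr_injective⟩ := by
      ext x
      cases x <;> simp [mem_neighborFinset, hH]
    show (H.neighborFinset (Sum.inl a)).card = m
    rw [h1, Finset.card_map]
    simp
  have hdr : ∀ b : Fin m, H.degree (Sum.inr b) = s := by
    intro b
    have h1 : H.neighborFinset (Sum.inr b) = Finset.univ.map ⟨Sum.inl, Sum.inl_injective⟩ := by
      ext x
      cases x <;> simp [mem_neighborFinset, hH]
    show (H.neighborFinset (Sum.inr b)).card = s
    rw [h1, Finset.card_map]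
    simp
  have hsum := H.sum_degrees_eq_twice_card_edges
  rw [Fintype.sum_sum_type] at hsum
  simp only [hdl, hdr, Finset.sum_const, Finset.card_univ, Fintype.card_fin, smul_eq_mul] at hsum
  have hms : m * s = s * m := mul_comm m s
  rw [ncard_eq_edgeFinset]
  linarith only [hsum, hms]

lemma iso_of_char {n s : ℕ} (hs : s ≤ n) (G : SimpleGraph (Fin n)) (A : Finset (Fin n))
    (hA : A.card = s)
    (hchar : ∀ x y, G.Adj x y ↔ ((x ∈ A ∧ y ∉ A) ∨ (x ∉ A ∧ y ∈ A))) :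
    Nonempty (G ≃g completeBipartiteGraph (Fin s) (Fin (n - s))) := by
  classical
  have hAc : (Aᶜ : Finset (Fin n)).card = n - s := by
    rw [Finset.card_compl, hA]
    simp
  set eA : {x // x ∈ A} ≃ Fin s := A.equivFinOfCardEq hA with heA
  set eB : {x // ¬ x ∈ A} ≃ Fin (n - s) :=
    (Equiv.subtypeEquivRight (fun x => (Finset.mem_compl (s := A)).symm)).trans
      ((Aᶜ : Finset (Fin n)).equivFinOfCardEq hAc) with heB
  set e : Fin n ≃ Fin s ⊕ Fin (n - s) :=
    (Equiv.sumCompl (· ∈ A)).symm.trans (Equiv.sumCongr eA eB) with he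
  have hex : ∀ x (hx : x ∈ A), e x = Sum.inl (eA ⟨x, hx⟩) := by
    intro x hx
    simp only [he, Equiv.trans_apply, Equiv.sumCompl_symm_apply_of_pos hx,
      Equiv.sumCongr_apply, Sum.map_inl]
  have hex' : ∀ x (hx : ¬ x ∈ A), e x = Sum.inr (eB ⟨x, hx⟩) := by
    intro x hx
    simp only [he, Equiv.trans_apply, Equiv.sumCompl_symm_apply_of_neg hx,
      Equiv.sumCongr_apply, Sum.map_inr]
  refine ⟨⟨e, ?_⟩⟩
  intro x y
  rw [hchar x y]
  by_cases hx : x ∈ A <;> by_cases hy : y ∈ A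
  · rw [hex x hx, hex y hy]
    simp [hx, hy]
  · rw [hex x hx, hex' y hy]
    simp [hx, hy]
  · rw [hex' x hx, hex y hy]
    simp [hx, hy]
  · rw [hex' x hx, hex' y hy]
    simp [hx, hy]


lemma le_bigN (l s : ℕ) : s + 1 ≤ bigN l s := by
  unfold bigN
  generalize (s + (s+1)*(l+1)) * (s + 6*(s+2)*(l+2)) = P
  generalize (s+2)^2 = Q
  generalize s^3 = R
  omega

set_option maxHeartbeats 1000000 in
theorem stmt3 (l s : ℕ) (hl : 1 ≤ l) (hls : l < s + 1) :
    ∃ n₀ : ℕ, ∀ n, n₀ ≤ n →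
      exNum n (fun G => _root_.Free G (completeGraph (Fin 3)) ∧ _root_.Free G (starForest (s + 1) l)) =
        s * (n - s) ∧
      ∀ G : SimpleGraph (Fin n),
        ((_root_.Free G (completeGraph (Fin 3)) ∧ _root_.Free G (starForest (s + 1) l)) ∧
            G.edgeSet.ncard = s * (n - s)) ↔
          Nonempty (G ≃g completeBipartiteGraph (Fin s) (Fin (n - s))) := by
  have hls' : l ≤ s := by omega
  refine ⟨bigN l s, ?_⟩
  intro n hn
  classical
  have hsn : s + 1 ≤ n := le_trans (le_bigN l s) hn
  have hnm : s + (n - s) = n := by omega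
  set H := completeBipartiteGraph (Fin s) (Fin (n - s)) with hHdef
  set e₀ : Fin n ≃ Fin s ⊕ Fin (n - s) := (finCongr hnm.symm).trans finSumFinEquiv.symm
    with he₀
  set G₀ : SimpleGraph (Fin n) := SimpleGraph.comap (⇑e₀.toEmbedding) H with hG₀
  have isoG₀ : G₀ ≃g H := SimpleGraph.Iso.comap e₀ H
  have hH3 : _root_.Free H (completeGraph (Fin 3)) := cbg_triangle_free _ _
  have hHS : _root_.Free H (starForest (s+1) l) := cbg_star_free s l (n-s) hl
  have hHE : H.edgeSet.ncard = s * (n - s) := cbg_edge_card s (n-s)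
  have hG₀3 : _root_.Free G₀ (completeGraph (Fin 3)) := fun h => hH3 (contains_of_iso isoG₀ h)
  have hG₀S : _root_.Free G₀ (starForest (s+1) l) := fun h => hHS (contains_of_iso isoG₀ h)
  have hG₀E : G₀.edgeSet.ncard = s * (n - s) := by rw [ncard_edge_iso isoG₀]; exact hHE
  have hub : ∀ G : SimpleGraph (Fin n),
      _root_.Free G (completeGraph (Fin 3)) → _root_.Free G (starForest (s+1) l) →
      G.edgeSet.ncard ≤ s * (n - s) ∧
      (G.edgeSet.ncard = s * (n - s) →
        ∃ A : Finset (Fin n), A.card = s ∧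
          ∀ x y, G.Adj x y ↔ ((x ∈ A ∧ y ∉ A) ∨ (x ∉ A ∧ y ∈ A))) := by
    intro G h3 hS
    letI : DecidableRel G.Adj := Classical.decRel _
    have htri := triangle_free_elim h3
    have hstar : ∀ f g, StarData G l (s+1) f g → False := fun f g hd => hS hd.contains
    have hcore := core hl hls' hn G htri hstar
    rw [ncard_eq_edgeFinset]
    exact hcore
  constructor
  · refine IsGreatest.csSup_eq ⟨⟨G₀, ⟨hG₀3, hG₀S⟩, hG₀E⟩, ?_⟩
    rintro mv ⟨G, ⟨h3, hS⟩, hcard⟩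
    rw [← hcard]
    exact (hub G h3 hS).1
  · intro G
    constructor
    · rintro ⟨⟨h3, hS⟩, hcard⟩
      obtain ⟨A, hA, hchar⟩ := (hub G h3 hS).2 hcard
      exact iso_of_char (by omega) G A hA hchar
    · rintro ⟨iso⟩
      refine ⟨⟨fun h => hH3 (contains_of_iso iso h), fun h => hHS (contains_of_iso iso h)⟩, ?_⟩
      rw [ncard_edge_iso iso]
      exact hHE

end Final
end

section
/- Let l ≥ 1 and let n ≥ l² + 2 be odd. Then there exists a K_3-free graph R on a vertex set V of size n, a partition V = V₁ ∪ V₂ with |V₁| = ⌊n/2⌋ and |V₂| = ⌈n/2⌉, and a vertex v₀ ∈ V₂ such that: every vertex of R other than v₀ has degree l; the degree of v₀ equals l if l·n is even and l−1 if l·n is odd; and the induced subgraph R[V \ {v₀}] is bipartite with parts V₁ and V₂ \ {v₀}. -/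
open SimpleGraph

section Construction


variable (m l : ℕ)

abbrev Wt (m : ℕ) := (ZMod m ⊕ ZMod m) ⊕ Unit

def Sset : Finset (ZMod m) := (Finset.range (l / 2)).image (fun k => ((k * l : ℕ) : ZMod m))

def rel : Wt m → Wt m → Prop
  | Sum.inl (Sum.inl a), Sum.inl (Sum.inr b) =>
      (b - a).val < l ∧ ¬(b = a ∧ a ∈ Sset m l)
  | Sum.inl (Sum.inl a), Sum.inr _ => a ∈ Sset m l
  | Sum.inl (Sum.inr b), Sum.inr _ => b ∈ Sset m l
  | _, _ => False

def HG : SimpleGraph (Wt m) where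
  Adj x y := rel m l x y ∨ rel m l y x
  symm := ⟨fun x y h => h.symm⟩
  loopless := ⟨by rintro ((a | a) | u) (h | h) <;> exact h⟩

lemma adj11 (a c : ZMod m) : ¬ (HG m l).Adj (.inl (.inl a)) (.inl (.inl c)) :=
  fun h => h.elim id id

lemma adj22 (a c : ZMod m) : ¬ (HG m l).Adj (.inl (.inr a)) (.inl (.inr c)) :=
  fun h => h.elim id id

lemma adj33 (u v : Unit) : ¬ (HG m l).Adj (.inr u) (.inr v) :=
  fun h => h.elim id id

lemma adj12 (a b : ZMod m) : (HG m l).Adj (.inl (.inl a)) (.inl (.inr b)) ↔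
    ((b - a).val < l ∧ ¬(b = a ∧ a ∈ Sset m l)) :=
  ⟨fun h => h.elim id (fun h' => h'.elim), Or.inl⟩

lemma adj21 (a b : ZMod m) : (HG m l).Adj (.inl (.inr b)) (.inl (.inl a)) ↔
    ((b - a).val < l ∧ ¬(b = a ∧ a ∈ Sset m l)) :=
  ((HG m l).adj_comm _ _).trans (adj12 m l a b)

lemma adj13 (a : ZMod m) (u : Unit) :
    (HG m l).Adj (.inl (.inl a)) (.inr u) ↔ a ∈ Sset m l :=
  ⟨fun h => h.elim id (fun h' => h'.elim), Or.inl⟩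

lemma adj31 (a : ZMod m) (u : Unit) :
    (HG m l).Adj (.inr u) (.inl (.inl a)) ↔ a ∈ Sset m l :=
  ((HG m l).adj_comm _ _).trans (adj13 m l a u)

lemma adj23 (b : ZMod m) (u : Unit) :
    (HG m l).Adj (.inl (.inr b)) (.inr u) ↔ b ∈ Sset m l :=
  ⟨fun h => h.elim id (fun h' => h'.elim), Or.inl⟩

lemma adj32 (b : ZMod m) (u : Unit) :
    (HG m l).Adj (.inr u) (.inl (.inr b)) ↔ b ∈ Sset m l :=
  ((HG m l).adj_comm _ _).trans (adj23 m l b u)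

lemma hlm_of (hl : 1 ≤ l) (hml : l * l + 1 ≤ 2 * m) : l ≤ m := by
  obtain ⟨k, rfl⟩ := Nat.exists_eq_add_of_le hl
  have h1 : (1 + k) * (1 + k) = k * k + 2 * k + 1 := by ring
  have h2 : 0 ≤ k * k := Nat.zero_le _
  omega

lemma key_of (hml : l * l + 1 ≤ 2 * m) {k : ℕ} (hk : k < l / 2) : k * l + l ≤ m := by
  have h1 : 2 * k + 2 ≤ l := by omega
  have h2 : (2 * k + 2) * l ≤ l * l := Nat.mul_le_mul_right l h1
  have h3 : 2 * (k * l) + 2 * l ≤ l * l := by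
    calc 2 * (k * l) + 2 * l = (2 * k + 2) * l := by ring
    _ ≤ l * l := h2
  obtain ⟨x, hx⟩ : ∃ x, k * l = x := ⟨_, rfl⟩
  obtain ⟨y, hy⟩ : ∃ y, l * l = y := ⟨_, rfl⟩
  rw [hx, hy] at h3
  rw [hy] at hml
  rw [hx]
  omega

variable [NeZero m]

lemma mem_Sset {a : ZMod m} (hml : l * l + 1 ≤ 2 * m) :
    a ∈ Sset m l ↔ ∃ k < l / 2, a = ((k * l : ℕ) : ZMod m) := by
  simp only [Sset, Finset.mem_image, Finset.mem_range]
  constructor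
  · rintro ⟨k, hk, rfl⟩; exact ⟨k, hk, rfl⟩
  · rintro ⟨k, hk, rfl⟩; exact ⟨k, hk, rfl⟩

lemma card_Sset (hml : l * l + 1 ≤ 2 * m) : (Sset m l).card = l / 2 := by
  rw [Sset, Finset.card_image_of_injOn, Finset.card_range]
  intro i hi j hj hij
  simp only [Finset.mem_coe, Finset.mem_range] at hi hj
  have hi' : i * l < m := by have := key_of m l hml hi; omega
  have hj' : j * l < m := by have := key_of m l hml hj; omega
  have hij' : ((i * l : ℕ) : ZMod m) = ((j * l : ℕ) : ZMod m) := hij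
  have : (↑(i * l) : ZMod m).val = (↑(j * l) : ZMod m).val := by rw [hij']
  rw [ZMod.val_natCast_of_lt hi', ZMod.val_natCast_of_lt hj'] at this
  have hl0 : 0 < l := by
    rcases Nat.eq_zero_or_pos l with h | h
    · subst h; omega
    · exact h
  exact Nat.eq_of_mul_eq_mul_right hl0 this

lemma Sset_gap (hml : l * l + 1 ≤ 2 * m) {a b : ZMod m}
    (ha : a ∈ Sset m l) (hb : b ∈ Sset m l) (hne : b ≠ a) : ¬ (b - a).val < l := by
  rw [mem_Sset m l hml] at ha hb
  obtain ⟨k₁, hk₁, rfl⟩ := ha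
  obtain ⟨k₂, hk₂, rfl⟩ := hb
  have h₁ := key_of m l hml hk₁
  have h₂ := key_of m l hml hk₂
  have hkk : k₁ ≠ k₂ := by rintro rfl; exact hne rfl
  rcases Nat.lt_or_ge k₁ k₂ with hlt | hge
  · -- b - a = (k₂ l - k₁ l : ℕ)
    have hle : k₁ * l ≤ k₂ * l := Nat.mul_le_mul_right l hlt.le
    have heq : ((k₂ * l : ℕ) : ZMod m) - ((k₁ * l : ℕ) : ZMod m)
        = ((k₂ * l - k₁ * l : ℕ) : ZMod m) := by
      rw [Nat.cast_sub hle]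
    rw [heq, ZMod.val_natCast_of_lt (by omega)]
    have : (k₁ + 1) * l ≤ k₂ * l := Nat.mul_le_mul_right l hlt
    have h4 : (k₁ + 1) * l = k₁ * l + l := by ring
    omega
  · have hlt : k₂ < k₁ := by omega
    have hle : k₂ * l ≤ k₁ * l := Nat.mul_le_mul_right l hlt.le
    have hstrict : k₂ * l + l ≤ k₁ * l := by
      have : (k₂ + 1) * l ≤ k₁ * l := Nat.mul_le_mul_right l hlt
      have h4 : (k₂ + 1) * l = k₂ * l + l := by ring
      omega
    have hl0 : 0 < l := by omega
    have heq : ((k₂ * l : ℕ) : ZMod m) - ((k₁ * l : ℕ) : ZMod m)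
        = -(((k₁ * l - k₂ * l : ℕ)) : ZMod m) := by
      rw [Nat.cast_sub hle]; ring
    have hvx : ((k₁ * l - k₂ * l : ℕ) : ZMod m).val = k₁ * l - k₂ * l :=
      ZMod.val_natCast_of_lt (by omega)
    have hnz : ((k₁ * l - k₂ * l : ℕ) : ZMod m) ≠ 0 := by
      intro h0
      rw [h0, ZMod.val_zero] at hvx
      omega
    haveI : NeZero ((k₁ * l - k₂ * l : ℕ) : ZMod m) := ⟨hnz⟩
    rw [heq, ZMod.val_neg_of_ne_zero, hvx]
    omega

lemma HG_triangle_free (hml : l * l + 1 ≤ 2 * m) :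
    ∀ x y z : Wt m, (HG m l).Adj x y → (HG m l).Adj y z → (HG m l).Adj x z → False := by
  have main : ∀ (a b : ZMod m), a ∈ Sset m l → b ∈ Sset m l →
      ((b - a).val < l ∧ ¬(b = a ∧ a ∈ Sset m l)) → False := by
    intro a b ha hb ⟨h1, h2⟩
    have hne : b ≠ a := fun h => h2 ⟨h, ha⟩
    exact Sset_gap m l hml ha hb hne h1
  rintro ((a | a) | u) ((c | c) | v) ((d | d) | w) h1 h2 h3 <;>
    simp only [adj11, adj12, adj13, adj21, adj22, adj23, adj31, adj32, adj33] at h1 h2 h3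
  all_goals first
    | exact main _ _ h2 h3 h1 | exact main _ _ h3 h2 h1 | exact main _ _ h1 h3 h2
    | exact main _ _ h3 h1 h2 | exact main _ _ h1 h2 h3 | exact main _ _ h2 h1 h3


lemma mem_addImage (hlm : l ≤ m) (a b : ZMod m) :
    b ∈ (Finset.range l).image (fun j : ℕ => a + (j : ZMod m)) ↔ (b - a).val < l := by
  simp only [Finset.mem_image, Finset.mem_range]
  constructor
  · rintro ⟨j, hj, rfl⟩
    simpa [add_sub_cancel_left, ZMod.val_natCast_of_lt (hj.trans_le hlm)] using hj
  · intro h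
    refine ⟨(b - a).val, h, ?_⟩
    rw [ZMod.natCast_zmod_val]
    ring

lemma mem_subImage (hlm : l ≤ m) (b a : ZMod m) :
    a ∈ (Finset.range l).image (fun j : ℕ => b - (j : ZMod m)) ↔ (b - a).val < l := by
  simp only [Finset.mem_image, Finset.mem_range]
  constructor
  · rintro ⟨j, hj, rfl⟩
    simpa [sub_sub_cancel, ZMod.val_natCast_of_lt (hj.trans_le hlm)] using hj
  · intro h
    refine ⟨(b - a).val, h, ?_⟩
    rw [ZMod.natCast_zmod_val]
    ring

lemma card_addImage (hlm : l ≤ m) (a : ZMod m) :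
    ((Finset.range l).image (fun j : ℕ => a + (j : ZMod m))).card = l := by
  rw [Finset.card_image_of_injOn, Finset.card_range]
  intro i hi j hj hij
  simp only [Finset.mem_coe, Finset.mem_range] at hi hj
  have hij' : ((i : ℕ) : ZMod m) = ((j : ℕ) : ZMod m) := by
    have : a + ((i : ℕ) : ZMod m) = a + ((j : ℕ) : ZMod m) := hij
    exact add_left_cancel this
  have := congrArg ZMod.val hij'
  rwa [ZMod.val_natCast_of_lt (hi.trans_le hlm), ZMod.val_natCast_of_lt (hj.trans_le hlm)] at this

lemma card_subImage (hlm : l ≤ m) (b : ZMod m) :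
    ((Finset.range l).image (fun j : ℕ => b - (j : ZMod m))).card = l := by
  rw [Finset.card_image_of_injOn, Finset.card_range]
  intro i hi j hj hij
  simp only [Finset.mem_coe, Finset.mem_range] at hi hj
  have hij' : ((i : ℕ) : ZMod m) = ((j : ℕ) : ZMod m) := by
    have : b - ((i : ℕ) : ZMod m) = b - ((j : ℕ) : ZMod m) := hij
    exact sub_right_injective this
  have := congrArg ZMod.val hij'
  rwa [ZMod.val_natCast_of_lt (hi.trans_le hlm), ZMod.val_natCast_of_lt (hj.trans_le hlm)] at this

lemma deg_P1 (hl : 1 ≤ l) (hml : l * l + 1 ≤ 2 * m) (a : ZMod m) :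
    ((HG m l).neighborSet (.inl (.inl a))).ncard = l := by
  classical
  have hlm : l ≤ m := hlm_of m l hl hml
  set B0 := (Finset.range l).image (fun j : ℕ => a + (j : ZMod m)) with hB0
  by_cases hS : a ∈ Sset m l
  · have hset : (HG m l).neighborSet (.inl (.inl a)) =
        ↑(insert (Sum.inr () : Wt m)
          ((B0.erase a).image (fun b => (Sum.inl (Sum.inr b) : Wt m)))) := by
      ext y
      rcases y with (c | b) | u
      · simp [SimpleGraph.mem_neighborSet, adj11]
      · simp only [SimpleGraph.mem_neighborSet, adj12, Finset.coe_insert, Set.mem_insert_iff,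
          Finset.coe_image, Set.mem_image, Finset.mem_coe, Finset.mem_erase]
        constructor
        · rintro ⟨h1, h2⟩
          have hba : b ≠ a := fun h => h2 ⟨h, hS⟩
          exact Or.inr ⟨b, ⟨hba, (mem_addImage m l hlm a b).mpr h1⟩, rfl⟩
        · rintro (h | ⟨b', ⟨hb1, hb2⟩, hb3⟩)
          · exact absurd h (by simp)
          · have hbb : b' = b := by injection (Sum.inl.inj hb3)
            rw [hbb] at hb2 hb1
            exact ⟨(mem_addImage m l hlm a b).mp hb2, fun h => hb1 h.1⟩
      · simp [SimpleGraph.mem_neighborSet, adj13, hS]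
    rw [hset, Set.ncard_coe_finset]
    rw [Finset.card_insert_of_notMem (by simp)]
    rw [Finset.card_image_of_injective _ (fun x y h => by injection (Sum.inl.inj h))]
    rw [Finset.card_erase_of_mem, card_addImage m l hlm a]
    · omega
    · rw [mem_addImage m l hlm a a]
      simp [ZMod.val_zero, hl]
      omega
  · have hset : (HG m l).neighborSet (.inl (.inl a)) =
        ↑(B0.image (fun b => (Sum.inl (Sum.inr b) : Wt m))) := by
      ext y
      rcases y with (c | b) | u
      · simp [SimpleGraph.mem_neighborSet, adj11]
      · simp only [SimpleGraph.mem_neighborSet, adj12, Finset.coe_image, Set.mem_image,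
          Finset.mem_coe]
        constructor
        · rintro ⟨h1, _⟩
          exact ⟨b, (mem_addImage m l hlm a b).mpr h1, rfl⟩
        · rintro ⟨b', hb1, hb2⟩
          have hbb : b' = b := by injection (Sum.inl.inj hb2)
          rw [hbb] at hb1
          exact ⟨(mem_addImage m l hlm a b).mp hb1, fun h => hS (h.2)⟩
      · simp [SimpleGraph.mem_neighborSet, adj13, hS]
    rw [hset, Set.ncard_coe_finset]
    rw [Finset.card_image_of_injective _ (fun x y h => by injection (Sum.inl.inj h))]
    exact card_addImage m l hlm a

lemma deg_P2 (hl : 1 ≤ l) (hml : l * l + 1 ≤ 2 * m) (b : ZMod m) :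
    ((HG m l).neighborSet (.inl (.inr b))).ncard = l := by
  classical
  have hlm : l ≤ m := hlm_of m l hl hml
  set B0 := (Finset.range l).image (fun j : ℕ => b - (j : ZMod m)) with hB0
  by_cases hS : b ∈ Sset m l
  · have hset : (HG m l).neighborSet (.inl (.inr b)) =
        ↑(insert (Sum.inr () : Wt m)
          ((B0.erase b).image (fun a => (Sum.inl (Sum.inl a) : Wt m)))) := by
      ext y
      rcases y with (a | c) | u
      · simp only [SimpleGraph.mem_neighborSet, adj21, Finset.coe_insert, Set.mem_insert_iff,
          Finset.coe_image, Set.mem_image, Finset.mem_coe, Finset.mem_erase]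
        constructor
        · rintro ⟨h1, h2⟩
          have hba : a ≠ b := fun h => h2 ⟨h.symm, by rw [h]; exact hS⟩
          exact Or.inr ⟨a, ⟨hba, (mem_subImage m l hlm b a).mpr h1⟩, rfl⟩
        · rintro (h | ⟨a', ⟨ha1, ha2⟩, ha3⟩)
          · exact absurd h (by simp)
          · have haa : a' = a := by injection (Sum.inl.inj ha3)
            rw [haa] at ha1 ha2
            refine ⟨(mem_subImage m l hlm b a).mp ha2, ?_⟩
            rintro ⟨h, -⟩
            exact ha1 h.symm
      · simp [SimpleGraph.mem_neighborSet, adj22]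
      · simp [SimpleGraph.mem_neighborSet, adj23, hS]
    rw [hset, Set.ncard_coe_finset]
    rw [Finset.card_insert_of_notMem (by simp)]
    rw [Finset.card_image_of_injective _ (fun x y h => by injection (Sum.inl.inj h))]
    rw [Finset.card_erase_of_mem, card_subImage m l hlm b]
    · omega
    · rw [mem_subImage m l hlm b b]
      simp [ZMod.val_zero]
      omega
  · have hset : (HG m l).neighborSet (.inl (.inr b)) =
        ↑(B0.image (fun a => (Sum.inl (Sum.inl a) : Wt m))) := by
      ext y
      rcases y with (a | c) | u
      · simp only [SimpleGraph.mem_neighborSet, adj21, Finset.coe_image, Set.mem_image,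
          Finset.mem_coe]
        constructor
        · rintro ⟨h1, _⟩
          exact ⟨a, (mem_subImage m l hlm b a).mpr h1, rfl⟩
        · rintro ⟨a', ha1, ha2⟩
          have haa : a' = a := by injection (Sum.inl.inj ha2)
          rw [haa] at ha1
          refine ⟨(mem_subImage m l hlm b a).mp ha1, ?_⟩
          rintro ⟨h, hc⟩
          exact hS (h ▸ hc)
      · simp [SimpleGraph.mem_neighborSet, adj22]
      · simp [SimpleGraph.mem_neighborSet, adj23, hS]
    rw [hset, Set.ncard_coe_finset]
    rw [Finset.card_image_of_injective _ (fun x y h => by injection (Sum.inl.inj h))]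
    exact card_subImage m l hlm b

lemma deg_v0 (hml : l * l + 1 ≤ 2 * m) :
    ((HG m l).neighborSet (.inr ())).ncard = 2 * (l / 2) := by
  classical
  have hset : (HG m l).neighborSet (.inr ()) =
      ↑(((Sset m l).image (fun a => (Sum.inl (Sum.inl a) : Wt m))) ∪
        ((Sset m l).image (fun b => (Sum.inl (Sum.inr b) : Wt m)))) := by
    ext y
    rcases y with (a | b) | u
    · simp [SimpleGraph.mem_neighborSet, adj31]
    · simp [SimpleGraph.mem_neighborSet, adj32]
    · simp [SimpleGraph.mem_neighborSet, adj33]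
  rw [hset, Set.ncard_coe_finset, Finset.card_union_of_disjoint]
  · rw [Finset.card_image_of_injective _ (fun x y h => by injection (Sum.inl.inj h)),
      Finset.card_image_of_injective _ (fun x y h => by injection (Sum.inl.inj h)),
      card_Sset m l hml]
    omega
  · simp [Finset.disjoint_left]

end Construction

theorem stmt7 (l n : ℕ) (hl : 1 ≤ l) (hn : l ^ 2 + 2 ≤ n) (hodd : Odd n) :
    ∃ (G : SimpleGraph (Fin n)) (V₁ V₂ : Finset (Fin n)) (v₀ : Fin n),
      _root_.Free G (completeGraph (Fin 3)) ∧
      Disjoint V₁ V₂ ∧ V₁ ∪ V₂ = Finset.univ ∧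
      V₁.card = n / 2 ∧ V₂.card = (n + 1) / 2 ∧ v₀ ∈ V₂ ∧
      (∀ v, v ≠ v₀ → (G.neighborSet v).ncard = l) ∧
      (G.neighborSet v₀).ncard = (if Even (l * n) then l else l - 1) ∧
      (∀ a b, G.Adj a b → a ≠ v₀ → b ≠ v₀ →
        ((a ∈ V₁ ∧ b ∈ V₂ \ {v₀}) ∨ (a ∈ V₂ \ {v₀} ∧ b ∈ V₁))) := by
    classical
  obtain ⟨m, hm⟩ := hodd
  have hml : l * l + 1 ≤ 2 * m := by
    have : l ^ 2 = l * l := sq l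
    omega
  have hm0 : 0 < m := by
    have : 1 ≤ l * l := Nat.one_le_iff_ne_zero.mpr (by positivity)
    omega
  haveI : NeZero m := ⟨hm0.ne'⟩
  have hcard : Fintype.card (Wt m) = n := by
    simp only [Wt, Fintype.card_sum, Fintype.card_unit, ZMod.card]
    omega
  let e : Wt m ≃ Fin n := Fintype.equivFinOfCardEq hcard
  refine ⟨(HG m l).comap ⇑e.symm,
    Finset.univ.image (fun a : ZMod m => e (Sum.inl (Sum.inl a))),
    insert (e (Sum.inr ())) (Finset.univ.image (fun b : ZMod m => e (Sum.inl (Sum.inr b)))),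
    e (Sum.inr ()), ?_, ?_, ?_, ?_, ?_, ?_, ?_, ?_, ?_⟩
  · -- triangle free
    rintro ⟨f, hf⟩
    have h01 : (completeGraph (Fin 3)).Adj 0 1 := by simp [completeGraph]
    have h12 : (completeGraph (Fin 3)).Adj 1 2 := by
      simp [completeGraph]
    have h02 : (completeGraph (Fin 3)).Adj 0 2 := by simp [completeGraph]
    exact HG_triangle_free m l hml (e.symm (f 0)) (e.symm (f 1)) (e.symm (f 2))
      (hf 0 1 h01) (hf 1 2 h12) (hf 0 2 h02)
  · -- disjoint
    simp only [Finset.disjoint_left, Finset.mem_image, Finset.mem_insert, Finset.mem_univ,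
      true_and]
    rintro x ⟨a, rfl⟩
    push_neg
    refine ⟨by simp [e.injective.eq_iff], ?_⟩
    rintro b
    simp [e.injective.eq_iff]
  · -- union
    apply Finset.eq_univ_of_forall
    intro x
    have hx : e (e.symm x) = x := e.apply_symm_apply x
    rcases hw : e.symm x with (a | b) | u
    · exact Finset.mem_union_left _ (Finset.mem_image.mpr ⟨a, Finset.mem_univ a, by
        rw [← hw, hx]⟩)
    · refine Finset.mem_union_right _ (Finset.mem_insert_of_mem ?_)
      exact Finset.mem_image.mpr ⟨b, Finset.mem_univ b, by rw [← hw, hx]⟩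
    · have hxv : x = e (Sum.inr ()) := by rw [← hx, hw]
      exact Finset.mem_union_right _ (hxv ▸ Finset.mem_insert_self _ _)
  · -- card V₁
    rw [Finset.card_image_of_injective _
      (fun x y h => Sum.inl.inj (Sum.inl.inj (e.injective h))), Finset.card_univ, ZMod.card]
    omega
  · -- card V₂
    rw [Finset.card_insert_of_notMem (by
      simp only [Finset.mem_image, Finset.mem_univ, true_and, not_exists]
      intro b h
      exact Sum.inl_ne_inr (e.injective h)),
      Finset.card_image_of_injective _
        (fun x y h => Sum.inr.inj (Sum.inl.inj (e.injective h))), Finset.card_univ, ZMod.card]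
    omega
  · exact Finset.mem_insert_self _ _
  · -- degrees of non-v₀
    intro v hv
    have hnb : ((HG m l).comap ⇑e.symm).neighborSet v = ⇑e.symm ⁻¹' ((HG m l).neighborSet (e.symm v)) := rfl
    rw [hnb, ← Equiv.image_eq_preimage_symm, Set.ncard_image_of_injective _ e.injective]
    have hvne : e.symm v ≠ Sum.inr () := by
      intro h
      apply hv
      rw [← e.apply_symm_apply v, h]
    rcases hw : e.symm v with (a | b) | u
    · exact deg_P1 m l hl hml a
    · exact deg_P2 m l hl hml b
    · exact absurd hw hvne
  · -- degree of v₀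
    have hnb : ((HG m l).comap ⇑e.symm).neighborSet (e (Sum.inr ())) =
        ⇑e.symm ⁻¹' ((HG m l).neighborSet (e.symm (e (Sum.inr ())))) := rfl
    rw [hnb, ← Equiv.image_eq_preimage_symm, Set.ncard_image_of_injective _ e.injective,
      e.symm_apply_apply, deg_v0 m l hml]
    have hnodd : ¬ Even n := by
      rw [hm, Nat.even_iff]
      omega
    rcases Nat.even_or_odd l with hev | hodd'
    · rw [if_pos (by exact (Nat.even_mul).mpr (Or.inl hev))]
      obtain ⟨k, rfl⟩ := hev
      omega
    · rw [if_neg (by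
        rw [Nat.even_mul]
        rintro (h | h)
        · exact (Nat.not_even_iff_odd.mpr hodd') h
        · exact hnodd h)]
      obtain ⟨k, rfl⟩ := hodd'
      omega
  · -- bipartite structure
    intro a b hab ha hb
    have hadj : (HG m l).Adj (e.symm a) (e.symm b) := hab
    have hae : e (e.symm a) = a := e.apply_symm_apply a
    have hbe : e (e.symm b) = b := e.apply_symm_apply b
    have hane : e.symm a ≠ Sum.inr () := fun h => ha (by rw [← hae, h])
    have hbne : e.symm b ≠ Sum.inr () := fun h => hb (by rw [← hbe, h])
    rcases hwa : e.symm a with (x | x) | u <;> rcases hwb : e.symm b with (y | y) | v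
    · rw [hwa, hwb] at hadj
      exact absurd hadj (adj11 m l x y)
    · left
      constructor
      · exact Finset.mem_image.mpr ⟨x, Finset.mem_univ x, by rw [← hwa, hae]⟩
      · rw [Finset.mem_sdiff]
        refine ⟨Finset.mem_insert_of_mem
          (Finset.mem_image.mpr ⟨y, Finset.mem_univ y, by rw [← hwb, hbe]⟩), by simpa using hb⟩
    · cases v
      exact absurd hwb hbne
    · right
      constructor
      · rw [Finset.mem_sdiff]
        refine ⟨Finset.mem_insert_of_mem
          (Finset.mem_image.mpr ⟨x, Finset.mem_univ x, by rw [← hwa, hae]⟩), by simpa using ha⟩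
      · exact Finset.mem_image.mpr ⟨y, Finset.mem_univ y, by rw [← hwb, hbe]⟩
    · rw [hwa, hwb] at hadj
      exact absurd hadj (adj22 m l x y)
    · cases v
      exact absurd hwb hbne
    · cases u
      exact absurd hwa hane
    · cases u
      exact absurd hwa hane
    · cases u
      exact absurd hwa hane
end

section
/- Let k ≥ 3, l ≥ 2 and s ≥ 0 be integers, and let R be a K_3-free graph on n−s vertices with maximum degree at most l−1. Then the join T_{k-2}(s) ∨ R is both K_{k+1}-free and (s+1)S_l-free. -/
open SimpleGraph

lemma join_adj_inl_inl {α β : Type*} {G : SimpleGraph α} {H : SimpleGraph β} {a b : α}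
    (h : (join G H).Adj (Sum.inl a) (Sum.inl b)) : G.Adj a b := by
  obtain ⟨hne, h | h⟩ := h
  · exact h
  · exact h.symm

lemma join_adj_inr_inr {α β : Type*} {G : SimpleGraph α} {H : SimpleGraph β} {a b : β}
    (h : (join G H).Adj (Sum.inr a) (Sum.inr b)) : H.Adj a b := by
  obtain ⟨hne, h | h⟩ := h
  · exact h
  · exact h.symm

lemma contains_triangle {β : Type*} (G : SimpleGraph β) {x y z : β}
    (hxy : G.Adj x y) (hxz : G.Adj x z) (hyz : G.Adj y z) :
    Contains G (completeGraph (Fin 3)) := by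
  have h1 : x ≠ y := G.ne_of_adj hxy
  have h2 : x ≠ z := G.ne_of_adj hxz
  have h3 : y ≠ z := G.ne_of_adj hyz
  refine ⟨⟨![x, y, z], ?_⟩, ?_⟩
  · intro a b hab
    fin_cases a <;> fin_cases b <;> simp_all
  · intro a b hab
    fin_cases a <;> fin_cases b <;> simp_all [completeGraph] <;>
      first | exact hxy.symm | exact hxz.symm | exact hyz.symm | exact hxy | exact hxz | exact hyz

theorem stmt9 (n k l s : ℕ) (hk : 3 ≤ k) (hl : 2 ≤ l)
    (R : SimpleGraph (Fin (n - s)))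
    (hR3 : _root_.Free R (completeGraph (Fin 3)))
    (hRdeg : ∀ v, (R.neighborSet v).ncard ≤ l - 1) :
    _root_.Free (join (turanGraph s (k - 2)) R) (completeGraph (Fin (k + 1))) ∧
    _root_.Free (join (turanGraph s (k - 2)) R) (starForest (s + 1) l) := by
  constructor
  · rintro ⟨f, hf⟩
    have hadj : ∀ a b : Fin (k + 1), a ≠ b →
        (join (turanGraph s (k - 2)) R).Adj (f a) (f b) := fun a b hab => hf a b hab
    classical
    set A : Finset (Fin (k + 1)) := Finset.univ.filter (fun a => (f a).isLeft) with hA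
    by_cases hAc : k - 1 ≤ A.card
    · -- too many left vertices for the Turán graph
      set φ : Fin (k + 1) → ℕ := fun a => Sum.elim (fun x : Fin s => (x : ℕ) % (k - 2))
        (fun _ => 0) (f a) with hφ
      have hmem : ∀ a ∈ A, φ a ∈ Finset.range (k - 2) := by
        intro a ha
        simp only [hA, Finset.mem_filter] at ha
        obtain ⟨x, hx⟩ := Sum.isLeft_iff.mp ha.2
        simp only [hφ, hx, Sum.elim_inl, Finset.mem_range]
        exact Nat.mod_lt _ (by omega)
      have hinj : Set.InjOn φ A := by
        intro a ha b hb hab2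
        by_contra hne
        simp only [hA, Finset.coe_filter, Set.mem_setOf_eq] at ha hb
        obtain ⟨x, hx⟩ := Sum.isLeft_iff.mp ha.2
        obtain ⟨y, hy⟩ := Sum.isLeft_iff.mp hb.2
        have h := hadj a b hne
        rw [hx, hy] at h
        have := join_adj_inl_inl h
        simp only [turanGraph] at this
        simp only [hφ, hx, hy, Sum.elim_inl] at hab2
        exact this hab2
      have := Finset.card_le_card_of_injOn φ hmem hinj
      simp only [Finset.card_range] at this
      omega
    · -- at least 3 right vertices give a triangle in R
      have hcc : 3 ≤ Aᶜ.card := by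
        have h1 := Finset.card_add_card_compl A
        simp only [Fintype.card_fin] at h1
        omega
      obtain ⟨t, hts, ht3⟩ := Finset.exists_subset_card_eq hcc
      obtain ⟨a, b, c, hab, hac, hbc, ht⟩ := Finset.card_eq_three.mp ht3
      have hmemc : ∀ d ∈ t, ∃ x, f d = Sum.inr x := by
        intro d hd
        have := hts hd
        simp only [hA, Finset.mem_compl, Finset.mem_filter, Finset.mem_univ, true_and] at this
        exact Sum.isRight_iff.mp (Sum.not_isLeft.mp this)
      obtain ⟨x, hx⟩ := hmemc a (by simp [ht])
      obtain ⟨y, hy⟩ := hmemc b (by simp [ht])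
      obtain ⟨z, hz⟩ := hmemc c (by simp [ht])
      refine hR3 (contains_triangle R (x := x) (y := y) (z := z) ?_ ?_ ?_)
      · have h := hadj a b hab; rw [hx, hy] at h; exact join_adj_inr_inr h
      · have h := hadj a c hac; rw [hx, hz] at h; exact join_adj_inr_inr h
      · have h := hadj b c hbc; rw [hy, hz] at h; exact join_adj_inr_inr h
  · rintro ⟨f, hf⟩
    classical
    -- star adjacency: center to leaf
    have hstar : ∀ (i : Fin (s + 1)) (j : Fin l),
        (starForest (s + 1) l).Adj (i, Sum.inl ()) (i, Sum.inr j) := by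
      intro i j
      refine ⟨by simp, Or.inl ⟨rfl, by simp⟩⟩
    -- each star must use a left vertex
    have hleft : ∀ i : Fin (s + 1), ∃ x : Unit ⊕ Fin l, ∃ u : Fin s,
        f (i, x) = Sum.inl u := by
      intro i
      by_contra hno
      push_neg at hno
      have hright : ∀ x : Unit ⊕ Fin l, ∃ w : Fin (n - s), f (i, x) = Sum.inr w := by
        intro x
        cases hfx : f (i, x) with
        | inl u => exact absurd hfx (hno x u)
        | inr w => exact ⟨w, rfl⟩
      choose w hw using hright
      have hadjR : ∀ j : Fin l, R.Adj (w (Sum.inl ())) (w (Sum.inr j)) := by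
        intro j
        have := hf _ _ (hstar i j)
        rw [hw (Sum.inl ()), hw (Sum.inr j)] at this
        exact join_adj_inr_inr this
      have hwinj : Function.Injective (fun j : Fin l => w (Sum.inr j)) := by
        intro j1 j2 h12
        have : f (i, Sum.inr j1) = f (i, Sum.inr j2) := by
          rw [hw, hw]; exact congrArg Sum.inr h12
        have := f.injective this
        simpa using this
      have hsub : Finset.univ.image (fun j : Fin l => w (Sum.inr j)) ⊆
          R.neighborFinset (w (Sum.inl ())) := by
        intro v hv
        simp only [Finset.mem_image, Finset.mem_univ, true_and] at hv
        obtain ⟨j, rfl⟩ := hv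
        exact (R.mem_neighborFinset _ _).mpr (hadjR j)
      have hcard : l ≤ (R.neighborFinset (w (Sum.inl ()))).card := by
        calc l = (Finset.univ.image (fun j : Fin l => w (Sum.inr j))).card := by
              rw [Finset.card_image_of_injective _ hwinj, Finset.card_univ, Fintype.card_fin]
          _ ≤ _ := Finset.card_le_card hsub
      have hdeg := hRdeg (w (Sum.inl ()))
      rw [Set.ncard_eq_toFinset_card'] at hdeg
      have : R.neighborFinset (w (Sum.inl ())) = (R.neighborSet (w (Sum.inl ()))).toFinset := rfl
      rw [this] at hcard
      omega
    choose pick u hu using hleft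
    have huinj : Function.Injective u := by
      intro i j hij
      have : f (i, pick i) = f (j, pick j) := by rw [hu, hu, hij]
      have := f.injective this
      exact (Prod.ext_iff.mp this).1
    have := Fintype.card_le_of_injective u huinj
    simp only [Fintype.card_fin] at this
    omega
end

section
/- Let l ≥ 2 and s ≥ 0 be integers and let n be such that n−s ≥ (l−1)² + 2. Then there exists a {K_3, (s+1)S_l}-free graph on n vertices with exactly ⌈s/2⌉·⌊s/2⌋ + s·⌊(n−s)/2⌋ + ⌊(l−1)(n−s)/2⌋ edges. In particular, ex(n, {K_3, (s+1)S_l}) ≥ ⌈s/2⌉·⌊s/2⌋ + s·⌊(n−s)/2⌋ + ⌊(l−1)(n−s)/2⌋. -/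
open SimpleGraph

namespace Stmt10Aux

/-- half of (n-s) -/
def qv (s n : ℕ) : ℕ := (n - s) / 2
/-- ⌈s/2⌉ -/
def av (s : ℕ) : ℕ := (s + 1) / 2
/-- ⌊(l-1)/2⌋ -/
def hv (l : ℕ) : ℕ := (l - 1) / 2
/-- special difference -/
def dv (l : ℕ) : ℕ := hv l + l - 3
/-- difference set -/
def DD (l : ℕ) : Finset ℕ := Finset.range (l - 2) ∪ {dv l}

lemma mem_DD {l d : ℕ} : d ∈ DD l ↔ (d < l - 2 ∨ d = dv l) := by
  rw [DD, Finset.mem_union, Finset.mem_range, Finset.mem_singleton]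

lemma card_DD {l : ℕ} (hl : 2 ≤ l) : (DD l).card = l - 1 := by
  rcases eq_or_lt_of_le hl with h | h
  · subst h; rfl
  · have hd : dv l ∉ Finset.range (l - 2) := by
      simp only [Finset.mem_range, not_lt, dv, hv]; omega
    rw [DD, Finset.card_union_of_disjoint (by simpa using hd)]
    simp; omega

def condP (l s n t u : ℕ) : Prop :=
  (t ≤ u ∧ u - t ∈ DD l) ∨ (u < t ∧ u + qv s n - t ∈ DD l)

def remP (l s n t u : ℕ) : Prop :=
  (n - s) % 2 = 1 ∧ t < hv l ∧ u = dv l + t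

instance (l s n t u : ℕ) : Decidable (condP l s n t u) := by unfold condP; infer_instance
instance (l s n t u : ℕ) : Decidable (remP l s n t u) := by unfold remP; infer_instance

def adj0 (l s n : ℕ) (x y : ℕ) : Prop :=
  (x < av s ∧ av s ≤ y ∧ y < s) ∨
  (x < av s ∧ s ≤ y ∧ y < s + qv s n) ∨
  (av s ≤ x ∧ x < s ∧ s + qv s n ≤ y ∧ y < s + 2 * qv s n) ∨
  (s ≤ x ∧ x < s + qv s n ∧ s + qv s n ≤ y ∧ y < s + 2 * qv s n ∧
    condP l s n (x - s) (y - (s + qv s n)) ∧ ¬ remP l s n (x - s) (y - (s + qv s n))) ∨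
  ((n - s) % 2 = 1 ∧ y = s + 2 * qv s n ∧ s ≤ x ∧
    (x - s < hv l ∨ (qv s n + dv l ≤ x - s ∧ x - s < qv s n + dv l + hv l)))

instance (l s n x y : ℕ) : Decidable (adj0 l s n x y) := by
  unfold adj0; infer_instance

def C1 (l s n : ℕ) (p : ℕ × ℕ) : Prop := p.1 < av s ∧ av s ≤ p.2 ∧ p.2 < s
def C2 (l s n : ℕ) (p : ℕ × ℕ) : Prop := p.1 < av s ∧ s ≤ p.2 ∧ p.2 < s + qv s n
def C3 (l s n : ℕ) (p : ℕ × ℕ) : Prop :=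
  av s ≤ p.1 ∧ p.1 < s ∧ s + qv s n ≤ p.2 ∧ p.2 < s + 2 * qv s n
def C4 (l s n : ℕ) (p : ℕ × ℕ) : Prop :=
  s ≤ p.1 ∧ p.1 < s + qv s n ∧ s + qv s n ≤ p.2 ∧ p.2 < s + 2 * qv s n ∧
    condP l s n (p.1 - s) (p.2 - (s + qv s n)) ∧ ¬ remP l s n (p.1 - s) (p.2 - (s + qv s n))
def C5 (l s n : ℕ) (p : ℕ × ℕ) : Prop :=
  (n - s) % 2 = 1 ∧ p.2 = s + 2 * qv s n ∧ s ≤ p.1 ∧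
    (p.1 - s < hv l ∨ (qv s n + dv l ≤ p.1 - s ∧ p.1 - s < qv s n + dv l + hv l))

instance (l s n : ℕ) (p : ℕ × ℕ) : Decidable (C1 l s n p) := by unfold C1; infer_instance
instance (l s n : ℕ) (p : ℕ × ℕ) : Decidable (C2 l s n p) := by unfold C2; infer_instance
instance (l s n : ℕ) (p : ℕ × ℕ) : Decidable (C3 l s n p) := by unfold C3; infer_instance
instance (l s n : ℕ) (p : ℕ × ℕ) : Decidable (C4 l s n p) := by unfold C4; infer_instance
instance (l s n : ℕ) (p : ℕ × ℕ) : Decidable (C5 l s n p) := by unfold C5; infer_instance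

lemma adj0_iff_C (l s n : ℕ) (p : ℕ × ℕ) :
    adj0 l s n p.1 p.2 ↔ C1 l s n p ∨ C2 l s n p ∨ C3 l s n p ∨ C4 l s n p ∨ C5 l s n p :=
  Iff.rfl

lemma card_filter_or5 {α : Type*} [DecidableEq α] (R : Finset α) (p1 p2 p3 p4 p5 : α → Prop)
    [DecidablePred p1] [DecidablePred p2] [DecidablePred p3] [DecidablePred p4] [DecidablePred p5]
    (h12 : ∀ a, p1 a → ¬ p2 a) (h13 : ∀ a, p1 a → ¬ p3 a) (h14 : ∀ a, p1 a → ¬ p4 a)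
    (h15 : ∀ a, p1 a → ¬ p5 a) (h23 : ∀ a, p2 a → ¬ p3 a) (h24 : ∀ a, p2 a → ¬ p4 a)
    (h25 : ∀ a, p2 a → ¬ p5 a) (h34 : ∀ a, p3 a → ¬ p4 a) (h35 : ∀ a, p3 a → ¬ p5 a)
    (h45 : ∀ a, p4 a → ¬ p5 a) :
    (R.filter fun a => p1 a ∨ p2 a ∨ p3 a ∨ p4 a ∨ p5 a).card =
      (R.filter p1).card + (R.filter p2).card + (R.filter p3).card + (R.filter p4).card
        + (R.filter p5).card := by
  rw [Finset.filter_or, Finset.filter_or, Finset.filter_or, Finset.filter_or]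
  rw [Finset.card_union_of_disjoint, Finset.card_union_of_disjoint,
    Finset.card_union_of_disjoint, Finset.card_union_of_disjoint]
  · ring
  · exact Finset.disjoint_filter.mpr (fun a _ => h45 a)
  · simp only [Finset.disjoint_union_right]
    exact ⟨Finset.disjoint_filter.mpr (fun a _ => h34 a),
      Finset.disjoint_filter.mpr (fun a _ => h35 a)⟩
  · simp only [Finset.disjoint_union_right]
    exact ⟨Finset.disjoint_filter.mpr (fun a _ => h23 a),
      Finset.disjoint_filter.mpr (fun a _ => h24 a),
      Finset.disjoint_filter.mpr (fun a _ => h25 a)⟩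
  · simp only [Finset.disjoint_union_right]
    exact ⟨Finset.disjoint_filter.mpr (fun a _ => h12 a),
      Finset.disjoint_filter.mpr (fun a _ => h13 a),
      Finset.disjoint_filter.mpr (fun a _ => h14 a),
      Finset.disjoint_filter.mpr (fun a _ => h15 a)⟩

/-- nonlinear consequences of the size hypothesis, as linear facts -/
lemma sq_facts {l s n : ℕ} (hl : 2 ≤ l) (hm : (l - 1) ^ 2 + 2 ≤ n - s) :
    2 * (l - 1) ≤ n - s ∧ 4 * (l - 1) ≤ (n - s) + 4 := by
  have h2 : (l - 1) ^ 2 = (l - 1) * (l - 1) := sq (l - 1)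
  rcases le_or_gt l 4 with h | h
  · interval_cases l <;> simp_all <;> omega
  · have h4 : 4 * (l - 1) ≤ (l - 1) * (l - 1) := Nat.mul_le_mul_right _ (by omega)
    omega

lemma adj0_lt {l s n x y : ℕ} (hl : 2 ≤ l) (hm : (l - 1) ^ 2 + 2 ≤ n - s)
    (h : adj0 l s n x y) : x < y := by
  obtain ⟨f1, f2⟩ := sq_facts hl hm
  simp only [adj0, condP, remP, mem_DD] at h
  simp only [qv, av, dv, hv] at *
  omega


def Gr (l s n : ℕ) : SimpleGraph (Fin n) := fromRel fun x y => adj0 l s n x.val y.val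

instance (l s n : ℕ) : DecidableRel (Gr l s n).Adj := fun a b => by
  rw [Gr, fromRel_adj]; infer_instance

/-- bipartition color: true side is A ∪ I2 -/
def colP (l s n k : ℕ) : Prop := k < av s ∨ (s + qv s n ≤ k ∧ k < s + 2 * qv s n)

lemma madj_col {l s n : ℕ} (hl : 2 ≤ l) (hm : (l - 1) ^ 2 + 2 ≤ n - s)
    {x y : ℕ} (h : adj0 l s n x y ∨ adj0 l s n y x) :
    (colP l s n x ↔ ¬ colP l s n y) ∨ x = s + 2 * qv s n ∨ y = s + 2 * qv s n := by
  obtain ⟨f1, f2⟩ := sq_facts hl hm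
  simp only [adj0, condP, remP, mem_DD, colP] at *
  simp only [qv, av, dv, hv] at *
  omega

/-- neighborhood condition of the special vertex w -/
def NwP (l s n x : ℕ) : Prop :=
  s ≤ x ∧ (x - s < hv l ∨ (qv s n + dv l ≤ x - s ∧ x - s < qv s n + dv l + hv l))

lemma w_nbr {l s n : ℕ} (hl : 2 ≤ l) (hm : (l - 1) ^ 2 + 2 ≤ n - s)
    {x y : ℕ} (hy : y = s + 2 * qv s n)
    (h : adj0 l s n x y ∨ adj0 l s n y x) :
    NwP l s n x ∧ (n - s) % 2 = 1 := by
  obtain ⟨f1, f2⟩ := sq_facts hl hm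
  simp only [adj0, condP, remP, mem_DD, NwP] at *
  simp only [qv, av, dv, hv] at *
  omega

lemma nw_nonadj {l s n : ℕ} (hl : 2 ≤ l) (hm : (l - 1) ^ 2 + 2 ≤ n - s)
    (hodd : (n - s) % 2 = 1) {x y : ℕ} (hx : NwP l s n x) (hy : NwP l s n y) :
    ¬ (adj0 l s n x y ∨ adj0 l s n y x) := by
  obtain ⟨f1, f2⟩ := sq_facts hl hm
  simp only [adj0, condP, remP, mem_DD, NwP] at *
  simp only [qv, av, dv, hv] at *
  omega

lemma tri_helper {l s n : ℕ} (hl : 2 ≤ l) (hm : (l - 1) ^ 2 + 2 ≤ n - s)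
    {x y z : ℕ} (hz : z = s + 2 * qv s n)
    (axy : adj0 l s n x y ∨ adj0 l s n y x)
    (axz : adj0 l s n x z ∨ adj0 l s n z x)
    (ayz : adj0 l s n y z ∨ adj0 l s n z y) : False := by
  obtain ⟨hx, hodd⟩ := w_nbr hl hm hz axz
  obtain ⟨hy, -⟩ := w_nbr hl hm hz ayz
  exact nw_nonadj hl hm ‹_› hx hy axy

lemma tri {l s n : ℕ} (hl : 2 ≤ l) (hm : (l - 1) ^ 2 + 2 ≤ n - s)
    {x y z : ℕ}
    (axy : adj0 l s n x y ∨ adj0 l s n y x)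
    (axz : adj0 l s n x z ∨ adj0 l s n z x)
    (ayz : adj0 l s n y z ∨ adj0 l s n z y) : False := by
  by_cases hx : x = s + 2 * qv s n
  · exact tri_helper hl hm hx ayz axy.symm axz.symm
  by_cases hy : y = s + 2 * qv s n
  · exact tri_helper hl hm hy axz axy ayz.symm
  by_cases hz : z = s + 2 * qv s n
  · exact tri_helper hl hm hz axy axz ayz
  have c1 := (madj_col hl hm axy).resolve_right (by tauto)
  have c2 := (madj_col hl hm axz).resolve_right (by tauto)
  have c3 := (madj_col hl hm ayz).resolve_right (by tauto)
  tauto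


def pf1 (l s n t d : ℕ) : ℕ :=
  if (n - s) % 2 = 1 ∧ t < hv l ∧ d = dv l then s + 2 * qv s n
  else s + qv s n + (if t + d < qv s n then t + d else t + d - qv s n)

def pf2 (l s n u d : ℕ) : ℕ :=
  if (n - s) % 2 = 1 ∧ dv l ≤ u ∧ u < dv l + hv l ∧ d = dv l then s + 2 * qv s n
  else s + (if d ≤ u then u - d else u + qv s n - d)

def NW (l s n : ℕ) : Finset ℕ :=
  Finset.Ico s (s + hv l) ∪ Finset.Ico (s + qv s n + dv l) (s + qv s n + dv l + hv l)

def bigN (l s n v : ℕ) : Finset ℕ :=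
  if v < s + qv s n then (DD l).image (pf1 l s n (v - s))
  else if v < s + 2 * qv s n then (DD l).image (pf2 l s n (v - s - qv s n))
  else NW l s n

lemma card_bigN {l s n : ℕ} (hl : 2 ≤ l) (v : ℕ) : (bigN l s n v).card ≤ l - 1 := by
  unfold bigN
  have hhv : hv l = (l - 1) / 2 := rfl
  split_ifs
  · exact le_trans (Finset.card_image_le) (le_of_eq (card_DD hl))
  · exact le_trans (Finset.card_image_le) (le_of_eq (card_DD hl))
  · refine le_trans (Finset.card_union_le _ _) ?_
    rw [Nat.card_Ico, Nat.card_Ico]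
    omega

lemma mem_bigN {l s n : ℕ} (hl : 2 ≤ l) (hm : (l - 1) ^ 2 + 2 ≤ n - s)
    {v u : ℕ} (hv1 : s ≤ v) (hvn : v < n) (hu1 : s ≤ u) (hun : u < n)
    (hadj : adj0 l s n v u ∨ adj0 l s n u v) : u ∈ bigN l s n v := by
  obtain ⟨f1, f2⟩ := sq_facts hl hm
  have hq : qv s n = (n - s) / 2 := rfl
  have ha : av s = (s + 1) / 2 := rfl
  have hh : hv l = (l - 1) / 2 := rfl
  have hd : dv l = hv l + l - 3 := rfl
  simp only [adj0, condP, remP, mem_DD] at hadj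
  unfold bigN
  split_ifs with h1 h2
  · -- v in I1
    simp only [Finset.mem_image, mem_DD, pf1]
    rcases hadj with (h|h|h|h|h)|(h|h|h|h|h)
    · exact absurd h (by omega)
    · exact absurd h (by omega)
    · exact absurd h (by omega)
    · rcases h.2.2.2.2.1 with hc | hc
      · exact ⟨u - (s + qv s n) - (v - s), by omega, by split_ifs <;> omega⟩
      · exact ⟨u - (s + qv s n) + qv s n - (v - s), by omega, by split_ifs <;> omega⟩
    · exact ⟨dv l, by omega, by split_ifs <;> omega⟩
    · exact absurd h (by omega)
    · exact absurd h (by omega)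
    · exact absurd h (by omega)
    · exact absurd h (by omega)
    · exact absurd h (by omega)
  · -- v in I2
    simp only [Finset.mem_image, mem_DD, pf2]
    rcases hadj with (h|h|h|h|h)|(h|h|h|h|h)
    · exact absurd h (by omega)
    · exact absurd h (by omega)
    · exact absurd h (by omega)
    · exact absurd h (by omega)
    · exact ⟨dv l, by omega, by split_ifs <;> omega⟩
    · exact absurd h (by omega)
    · exact absurd h (by omega)
    · exact absurd h (by omega)
    · rcases h.2.2.2.2.1 with hc | hc
      · exact ⟨v - (s + qv s n) - (u - s), by omega, by split_ifs <;> omega⟩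
      · exact ⟨v - (s + qv s n) + qv s n - (u - s), by omega, by split_ifs <;> omega⟩
    · exact absurd h (by omega)
  · -- v = w
    simp only [NW, Finset.mem_union, Finset.mem_Ico]
    rcases hadj with (h|h|h|h|h)|(h|h|h|h|h) <;> omega


lemma gr_tri_free {l s n : ℕ} (hl : 2 ≤ l) (hm : (l - 1) ^ 2 + 2 ≤ n - s) :
    ∀ f : Fin 3 ↪ Fin n, ¬ (∀ a b : Fin 3, a ≠ b → (Gr l s n).Adj (f a) (f b)) := by
  intro f hf
  have h01 := hf 0 1 (by decide)
  have h02 := hf 0 2 (by decide)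
  have h12 := hf 1 2 (by decide)
  rw [Gr, fromRel_adj] at h01 h02 h12
  exact tri hl hm h01.2 h02.2 h12.2

lemma gr_star_free {l s n : ℕ} (hl : 2 ≤ l) (hm : (l - 1) ^ 2 + 2 ≤ n - s) :
    ∀ f : Fin (s + 1) × (Unit ⊕ Fin l) ↪ Fin n,
      ¬ (∀ a b, (starForest (s + 1) l).Adj a b → (Gr l s n).Adj (f a) (f b)) := by
  intro f hf
  have step1 : ∀ i : Fin (s + 1), ∃ p : Unit ⊕ Fin l, (f (i, p)).val < s := by
    intro i
    by_contra hcon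
    push_neg at hcon
    set v : Fin n := f (i, Sum.inl ()) with hvdef
    have hadjstar : ∀ j : Fin l,
        (starForest (s + 1) l).Adj (i, Sum.inl ()) (i, Sum.inr j) := by
      intro j
      rw [starForest, fromRel_adj]
      refine ⟨by simp, Or.inl ⟨rfl, by simp⟩⟩
    have hadj : ∀ j : Fin l, (f (i, Sum.inr j)).val ∈ bigN l s n v.val := by
      intro j
      have := hf _ _ (hadjstar j)
      rw [Gr, fromRel_adj] at this
      exact mem_bigN hl hm (hcon _) v.isLt (hcon _) (f (i, Sum.inr j)).isLt this.2
    have hsub : Finset.image (fun j : Fin l => (f (i, Sum.inr j)).val) Finset.univ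
        ⊆ bigN l s n v.val := by
      intro x hx
      simp only [Finset.mem_image] at hx
      obtain ⟨j, -, rfl⟩ := hx
      exact hadj j
    have hcard : (Finset.image (fun j : Fin l => (f (i, Sum.inr j)).val) Finset.univ).card = l := by
      rw [Finset.card_image_of_injective _ ?_, Finset.card_univ, Fintype.card_fin]
      intro j j' hjj
      have : f (i, Sum.inr j) = f (i, Sum.inr j') := Fin.ext hjj
      have := f.injective this
      simpa using this
    have := Finset.card_le_card hsub
    have h2 := card_bigN (n := n) (s := s) hl v.val
    omega
  choose p hp using step1
  have hginj : Function.Injective (fun i : Fin (s + 1) => (⟨(f (i, p i)).val, hp i⟩ : Fin s)) := by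
    intro i i' hii
    simp only [Fin.mk.injEq] at hii
    have : f (i, p i) = f (i', p i') := Fin.ext hii
    have := f.injective this
    exact (Prod.ext_iff.mp this).1
  have := Fintype.card_le_of_injective _ hginj
  simp at this


def pairOf (n : ℕ) : Sym2 (Fin n) → ℕ × ℕ :=
  Sym2.lift ⟨fun u v => (min u.val v.val, max u.val v.val), by
    intro a b; simp [min_comm, max_comm]⟩

lemma edge_count {l s n : ℕ} (hl : 2 ≤ l) (hm : (l - 1) ^ 2 + 2 ≤ n - s) :
    (Gr l s n).edgeSet.ncard =
      ((Finset.range n ×ˢ Finset.range n).filter fun p => adj0 l s n p.1 p.2).card := by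
  rw [Set.ncard_eq_toFinset_card']
  show (Gr l s n).edgeFinset.card = _
  apply Finset.card_nbij (pairOf n)
  · intro e he
    induction e with | _ u v =>
    rw [Finset.mem_coe, SimpleGraph.mem_edgeFinset, SimpleGraph.mem_edgeSet, Gr, fromRel_adj] at he
    simp only [Finset.mem_coe, Finset.mem_filter, Finset.mem_product, Finset.mem_range, pairOf, Sym2.lift_mk]
    have hu := u.isLt; have hv := v.isLt
    obtain ⟨hne, h | h⟩ := he
    · have hlt := adj0_lt hl hm h
      have h1 : min u.val v.val = u.val := by omega
      have h2 : max u.val v.val = v.val := by omega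
      exact ⟨⟨by omega, by omega⟩, by rw [h1, h2]; exact h⟩
    · have hlt := adj0_lt hl hm h
      have h1 : min u.val v.val = v.val := by omega
      have h2 : max u.val v.val = u.val := by omega
      exact ⟨⟨by omega, by omega⟩, by rw [h1, h2]; exact h⟩
  · rintro e he e' he' hee
    induction e with | _ u v =>
    induction e' with | _ u' v' =>
    simp only [pairOf, Sym2.lift_mk, Prod.mk.injEq] at hee
    have : (u.val = u'.val ∧ v.val = v'.val) ∨ (u.val = v'.val ∧ v.val = u'.val) := by omega
    rcases this with ⟨h1, h2⟩ | ⟨h1, h2⟩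
    · rw [Fin.ext h1, Fin.ext h2]
    · rw [Fin.ext h1, Fin.ext h2, Sym2.eq_swap]
  · rintro ⟨x, y⟩ hxy
    simp only [Finset.coe_filter, Set.mem_setOf_eq, Finset.mem_product, Finset.mem_range] at hxy
    obtain ⟨⟨hx, hy⟩, hadj⟩ := hxy
    have hlt := adj0_lt hl hm hadj
    refine ⟨s((⟨x, hx⟩ : Fin n), (⟨y, hy⟩ : Fin n)), ?_, ?_⟩
    · rw [Finset.mem_coe, SimpleGraph.mem_edgeFinset, SimpleGraph.mem_edgeSet, Gr, fromRel_adj]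
      exact ⟨by simp [Fin.ext_iff]; omega, Or.inl hadj⟩
    · simp only [pairOf, Sym2.lift_mk]
      have h1 : min x y = x := by omega
      have h2 : max x y = y := by omega
      rw [h1, h2]


lemma card_filter_prod {β : Type*} [DecidableEq β] (s1 : Finset ℕ) (t1 : Finset β)
    (R : ℕ → β → Prop) [∀ a b, Decidable (R a b)] :
    ((s1 ×ˢ t1).filter fun p => R p.1 p.2).card = ∑ x ∈ s1, (t1.filter (R x)).card := by
  rw [Finset.card_eq_sum_card_fiberwise (f := Prod.fst) (t := s1)
    (fun p hp => (Finset.mem_product.mp (Finset.mem_filter.mp hp).1).1)]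
  apply Finset.sum_congr rfl
  intro x hx
  apply Finset.card_nbij Prod.snd
  · intro p hp
    simp only [Finset.mem_coe, Finset.mem_filter, Finset.mem_product] at hp ⊢
    obtain ⟨⟨⟨h1, h2⟩, h3⟩, h4⟩ := hp
    exact ⟨h2, h4 ▸ h3⟩
  · rintro ⟨x1, y1⟩ hp ⟨x2, y2⟩ hp' h
    simp only [Finset.mem_coe, Finset.mem_filter, Finset.mem_product] at hp hp'
    simp only at h
    simp [h, hp.2, hp'.2]
  · rintro b hb
    simp only [Finset.mem_coe, Finset.mem_filter, Finset.mem_product] at hb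
    refine ⟨(x, b), ?_, rfl⟩
    simp only [Finset.mem_coe, Finset.mem_filter, Finset.mem_product]
    exact ⟨⟨⟨hx, hb.1⟩, hb.2⟩, trivial⟩

lemma row_eq {l s n : ℕ} (hl : 2 ≤ l) (hm : (l - 1) ^ 2 + 2 ≤ n - s)
    {t : ℕ} (ht : t < qv s n) :
    (Finset.range (qv s n)).filter (fun u => condP l s n t u ∧ ¬ remP l s n t u)
      = ((DD l).filter fun d => ¬((n - s) % 2 = 1 ∧ t < hv l ∧ d = dv l)).image
          (fun d => if t + d < qv s n then t + d else t + d - qv s n) := by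
  obtain ⟨f1, f2⟩ := sq_facts hl hm
  have hq : qv s n = (n - s) / 2 := rfl
  have hh : hv l = (l - 1) / 2 := rfl
  have hd : dv l = hv l + l - 3 := rfl
  ext u
  simp only [Finset.mem_filter, Finset.mem_range, Finset.mem_image, condP, remP, mem_DD]
  constructor
  · rintro ⟨hu, hcond, hrem⟩
    rcases hcond with ⟨h1, h2⟩ | ⟨h1, h2⟩
    · exact ⟨u - t, ⟨by omega, by omega⟩, by split_ifs <;> omega⟩
    · exact ⟨u + qv s n - t, ⟨by omega, by omega⟩, by split_ifs <;> omega⟩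
  · rintro ⟨d, ⟨hdD, hnb⟩, hval⟩
    split_ifs at hval <;> omega

lemma row_card {l s n : ℕ} (hl : 2 ≤ l) (hm : (l - 1) ^ 2 + 2 ≤ n - s)
    {t : ℕ} (ht : t < qv s n) :
    ((Finset.range (qv s n)).filter (fun u => condP l s n t u ∧ ¬ remP l s n t u)).card
      + (if (n - s) % 2 = 1 ∧ t < hv l then 1 else 0) = l - 1 := by
  obtain ⟨f1, f2⟩ := sq_facts hl hm
  have hq : qv s n = (n - s) / 2 := rfl
  have hh : hv l = (l - 1) / 2 := rfl
  have hd : dv l = hv l + l - 3 := rfl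
  rw [row_eq hl hm ht, Finset.card_image_of_injOn ?inj]
  case inj =>
    intro d hd1 d' hd1' hdd
    simp only [Finset.coe_filter, Set.mem_setOf_eq, mem_DD] at hd1 hd1'
    beta_reduce at hdd
    split_ifs at hdd <;> omega
  by_cases hC : (n - s) % 2 = 1 ∧ t < hv l
  · have : ((DD l).filter fun d => ¬((n - s) % 2 = 1 ∧ t < hv l ∧ d = dv l))
        = (DD l).erase (dv l) := by
      ext d
      simp only [Finset.mem_filter, Finset.mem_erase]
      constructor
      · rintro ⟨h1, h2⟩; exact ⟨fun hcon => h2 ⟨hC.1, hC.2, hcon⟩, h1⟩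
      · rintro ⟨h1, h2⟩; exact ⟨h2, fun hcon => h1 hcon.2.2⟩
    rw [this, Finset.card_erase_of_mem (mem_DD.mpr (Or.inr rfl)), card_DD hl]
    simp only [hC, and_self, if_pos]
    omega
  · have : ((DD l).filter fun d => ¬((n - s) % 2 = 1 ∧ t < hv l ∧ d = dv l)) = DD l := by
      apply Finset.filter_true_of_mem
      intro d hd2
      exact fun hcon => hC ⟨hcon.1, hcon.2.1⟩
    rw [this, card_DD hl, if_neg hC]
    omega


lemma F4'_card {l s n : ℕ} (hl : 2 ≤ l) (hm : (l - 1) ^ 2 + 2 ≤ n - s) :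
    ((Finset.range (qv s n) ×ˢ Finset.range (qv s n)).filter
        (fun p => condP l s n p.1 p.2 ∧ ¬ remP l s n p.1 p.2)).card
      + (if (n - s) % 2 = 1 then hv l else 0) = qv s n * (l - 1) := by
  obtain ⟨f1, f2⟩ := sq_facts hl hm
  have hq : qv s n = (n - s) / 2 := rfl
  have hh : hv l = (l - 1) / 2 := rfl
  have hcf := card_filter_prod (Finset.range (qv s n)) (Finset.range (qv s n))
    (fun t u => condP l s n t u ∧ ¬ remP l s n t u)
  rw [hcf]
  have h1 : ∑ t ∈ Finset.range (qv s n),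
      (((Finset.range (qv s n)).filter (fun u => condP l s n t u ∧ ¬ remP l s n t u)).card
        + (if (n - s) % 2 = 1 ∧ t < hv l then 1 else 0)) = qv s n * (l - 1) := by
    rw [Finset.sum_congr rfl (fun t ht => row_card hl hm (Finset.mem_range.mp ht))]
    rw [Finset.sum_const, Finset.card_range, smul_eq_mul]
  rw [Finset.sum_add_distrib] at h1
  have h2 : ∑ t ∈ Finset.range (qv s n), (if (n - s) % 2 = 1 ∧ t < hv l then 1 else 0)
      = (if (n - s) % 2 = 1 then hv l else 0) := by
    by_cases ho : (n - s) % 2 = 1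
    · simp only [ho, true_and, if_pos]
      rw [Finset.sum_boole, Nat.cast_id]
      have : (Finset.range (qv s n)).filter (fun t => t < hv l) = Finset.range (hv l) := by
        ext t; simp only [Finset.mem_filter, Finset.mem_range]; omega
      rw [this, Finset.card_range]
    · simp [ho]
  omega

lemma F4_card {l s n : ℕ} (hl : 2 ≤ l) (hm : (l - 1) ^ 2 + 2 ≤ n - s) :
    ((Finset.range n ×ˢ Finset.range n).filter (C4 l s n)).card
      = ((Finset.range (qv s n) ×ˢ Finset.range (qv s n)).filter
        (fun p => condP l s n p.1 p.2 ∧ ¬ remP l s n p.1 p.2)).card := by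
  obtain ⟨f1, f2⟩ := sq_facts hl hm
  have hq : qv s n = (n - s) / 2 := rfl
  apply Finset.card_nbij (fun p => (p.1 - s, p.2 - (s + qv s n)))
  · rintro ⟨x, y⟩ hp
    simp only [C4, Finset.mem_coe, Finset.mem_filter, Finset.mem_product, Finset.mem_range] at hp ⊢
    obtain ⟨⟨hx, hy⟩, h1, h2, h3, h4, h5, h6⟩ := hp
    exact ⟨⟨by omega, by omega⟩, h5, h6⟩
  · rintro ⟨x1, y1⟩ hp ⟨x2, y2⟩ hp' h
    simp only [C4, Finset.mem_coe, Finset.mem_filter, Finset.mem_product, Finset.mem_range] at hp hp'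
    simp only [Prod.mk.injEq] at h ⊢
    obtain ⟨-, h1, h2, h3, h4, -, -⟩ := hp
    obtain ⟨-, h1', h2', h3', h4', -, -⟩ := hp'
    omega
  · rintro ⟨t, u⟩ hb
    simp only [Finset.mem_coe, Finset.mem_filter, Finset.mem_product, Finset.mem_range] at hb
    obtain ⟨⟨ht, hu⟩, hc, hr⟩ := hb
    refine ⟨(s + t, s + qv s n + u), ?_, ?_⟩
    · simp only [C4, Finset.mem_coe, Finset.mem_filter, Finset.mem_product, Finset.mem_range,
        Nat.add_sub_cancel_left]
      refine ⟨⟨by omega, by omega⟩, by omega, by omega, by omega, by omega, hc, hr⟩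
    · simp only [Nat.add_sub_cancel_left]

lemma F5_card {l s n : ℕ} (hl : 2 ≤ l) (hm : (l - 1) ^ 2 + 2 ≤ n - s) :
    ((Finset.range n ×ˢ Finset.range n).filter (C5 l s n)).card
      = (if (n - s) % 2 = 1 then 2 * hv l else 0) := by
  obtain ⟨f1, f2⟩ := sq_facts hl hm
  have hq : qv s n = (n - s) / 2 := rfl
  have hh : hv l = (l - 1) / 2 := rfl
  have hd : dv l = hv l + l - 3 := rfl
  by_cases ho : (n - s) % 2 = 1
  · have : ((Finset.range n ×ˢ Finset.range n).filter (C5 l s n))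
        = (Finset.Ico s (s + hv l) ∪
            Finset.Ico (s + qv s n + dv l) (s + qv s n + dv l + hv l)) ×ˢ {s + 2 * qv s n} := by
      ext ⟨x, y⟩
      simp only [C5, Finset.mem_filter, Finset.mem_product, Finset.mem_range, Finset.mem_union,
        Finset.mem_Ico, Finset.mem_singleton]
      omega
    rw [this, Finset.card_product, Finset.card_singleton,
      Finset.card_union_of_disjoint (by
        simp only [Finset.disjoint_left, Finset.mem_Ico]
        omega),
      Nat.card_Ico, Nat.card_Ico, if_pos ho]
    omega
  · rw [Finset.filter_false_of_mem (fun p _ hcon => ho hcon.1), Finset.card_empty, if_neg ho]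

lemma count_F {l s n : ℕ} (hl : 2 ≤ l) (hm : (l - 1) ^ 2 + 2 ≤ n - s) :
    ((Finset.range n ×ˢ Finset.range n).filter (fun p => adj0 l s n p.1 p.2)).card
      = (s + 1) / 2 * (s / 2) + s * ((n - s) / 2) + (l - 1) * (n - s) / 2 := by
  obtain ⟨f1, f2⟩ := sq_facts hl hm
  have hq : qv s n = (n - s) / 2 := rfl
  have ha : av s = (s + 1) / 2 := rfl
  have hh : hv l = (l - 1) / 2 := rfl
  have hd : dv l = hv l + l - 3 := rfl
  rw [Finset.filter_congr (fun p _ => adj0_iff_C l s n p)]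
  rw [card_filter_or5 _ (C1 l s n) (C2 l s n) (C3 l s n) (C4 l s n) (C5 l s n)
    (by rintro p ⟨a1, a2, a3⟩ ⟨b1, b2, b3⟩; omega)
    (by rintro p ⟨a1, a2, a3⟩ ⟨b1, b2, b3, b4⟩; omega)
    (by rintro p ⟨a1, a2, a3⟩ ⟨b1, b2, b3, b4, -, -⟩; omega)
    (by rintro p ⟨a1, a2, a3⟩ ⟨b1, b2, b3, b4⟩; omega)
    (by rintro p ⟨a1, a2, a3⟩ ⟨b1, b2, b3, b4⟩; omega)
    (by rintro p ⟨a1, a2, a3⟩ ⟨b1, b2, b3, b4, -, -⟩; omega)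
    (by rintro p ⟨a1, a2, a3⟩ ⟨b1, b2, b3, b4⟩; omega)
    (by rintro p ⟨a1, a2, a3, a4⟩ ⟨b1, b2, b3, b4, -, -⟩; omega)
    (by rintro p ⟨a1, a2, a3, a4⟩ ⟨b1, b2, b3, b4⟩; omega)
    (by rintro p ⟨a1, a2, a3, a4, -, -⟩ ⟨b1, b2, b3, b4⟩; omega)]
  have e1 : ((Finset.range n ×ˢ Finset.range n).filter (C1 l s n)).card
      = av s * (s - av s) := by
    have h : (Finset.range n ×ˢ Finset.range n).filter (C1 l s n)
        = Finset.Ico 0 (av s) ×ˢ Finset.Ico (av s) s := by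
      ext ⟨x, y⟩
      simp only [C1, Finset.mem_filter, Finset.mem_product, Finset.mem_range, Finset.mem_Ico]
      omega
    rw [h, Finset.card_product, Nat.card_Ico, Nat.card_Ico, Nat.sub_zero]
  have e2 : ((Finset.range n ×ˢ Finset.range n).filter (C2 l s n)).card
      = av s * qv s n := by
    have h : (Finset.range n ×ˢ Finset.range n).filter (C2 l s n)
        = Finset.Ico 0 (av s) ×ˢ Finset.Ico s (s + qv s n) := by
      ext ⟨x, y⟩
      simp only [C2, Finset.mem_filter, Finset.mem_product, Finset.mem_range, Finset.mem_Ico]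
      omega
    rw [h, Finset.card_product, Nat.card_Ico, Nat.card_Ico, Nat.sub_zero,
      Nat.add_sub_cancel_left]
  have e3 : ((Finset.range n ×ˢ Finset.range n).filter (C3 l s n)).card
      = (s - av s) * qv s n := by
    have h : (Finset.range n ×ˢ Finset.range n).filter (C3 l s n)
        = Finset.Ico (av s) s ×ˢ Finset.Ico (s + qv s n) (s + 2 * qv s n) := by
      ext ⟨x, y⟩
      simp only [C3, Finset.mem_filter, Finset.mem_product, Finset.mem_range, Finset.mem_Ico]
      omega
    rw [h, Finset.card_product, Nat.card_Ico, Nat.card_Ico,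
      show s + 2 * qv s n - (s + qv s n) = qv s n from by omega]
  rw [e1, e2, e3, F4_card hl hm, F5_card hl hm]
  have hA : av s * (s - av s) = (s + 1) / 2 * (s / 2) := by
    rw [show s - av s = s / 2 from by omega, ha]
  have hSQ : av s * qv s n + (s - av s) * qv s n = s * ((n - s) / 2) := by
    rw [← Nat.add_mul, show av s + (s - av s) = s from by omega, hq]
  have hparity : n - s = 2 * qv s n + (n - s) % 2 := by omega
  have hLM : (l - 1) * (n - s) = 2 * (qv s n * (l - 1)) + (n - s) % 2 * (l - 1) := by
    calc (l - 1) * (n - s) = (l - 1) * (2 * qv s n + (n - s) % 2) := by rw [← hparity]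
    _ = 2 * (qv s n * (l - 1)) + (n - s) % 2 * (l - 1) := by ring
  have h4 := F4'_card hl hm
  by_cases ho : (n - s) % 2 = 1
  · rw [ho, one_mul] at hLM
    rw [if_pos ho] at h4 ⊢
    omega
  · have h0 : (n - s) % 2 = 0 := by omega
    rw [h0, zero_mul, add_zero] at hLM
    rw [if_neg ho] at h4 ⊢
    omega

end Stmt10Aux

theorem stmt10 (l s n : ℕ) (hl : 2 ≤ l) (hn : (l - 1) ^ 2 + 2 ≤ n - s) :
    (∃ G : SimpleGraph (Fin n),
        _root_.Free G (completeGraph (Fin 3)) ∧ _root_.Free G (starForest (s + 1) l) ∧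
        G.edgeSet.ncard =
          (s + 1) / 2 * (s / 2) + s * ((n - s) / 2) + (l - 1) * (n - s) / 2) ∧
    (s + 1) / 2 * (s / 2) + s * ((n - s) / 2) + (l - 1) * (n - s) / 2 ≤
      exNum n (fun G => _root_.Free G (completeGraph (Fin 3)) ∧ _root_.Free G (starForest (s + 1) l)) := by
  have hfree1 : _root_.Free (Stmt10Aux.Gr l s n) (completeGraph (Fin 3)) := by
    rintro ⟨f, hf⟩
    exact Stmt10Aux.gr_tri_free hl hn f (fun a b hab => hf a b hab)
  have hfree2 : _root_.Free (Stmt10Aux.Gr l s n) (starForest (s + 1) l) := by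
    rintro ⟨f, hf⟩
    exact Stmt10Aux.gr_star_free hl hn f hf
  have hcard : (Stmt10Aux.Gr l s n).edgeSet.ncard =
      (s + 1) / 2 * (s / 2) + s * ((n - s) / 2) + (l - 1) * (n - s) / 2 :=
    (Stmt10Aux.edge_count hl hn).trans (Stmt10Aux.count_F hl hn)
  refine ⟨⟨Stmt10Aux.Gr l s n, hfree1, hfree2, hcard⟩, ?_⟩
  apply le_csSup
  · refine ⟨Fintype.card (Sym2 (Fin n)), ?_⟩
    rintro m ⟨G', -, rfl⟩
    have h := Set.ncard_le_ncard (Set.subset_univ G'.edgeSet) Set.finite_univ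
    simpa [Set.ncard_univ, Nat.card_eq_fintype_card] using h
  · exact ⟨Stmt10Aux.Gr l s n, ⟨hfree1, hfree2⟩, hcard⟩
end

section
/- Let k ≥ 3, l ≥ 2 and s ≥ 1 be integers and let n ≥ k·s² + (s+1)·(l+1)². If G is a {K_{k+1}, (s+1)S_l}-free graph on n vertices with e(G) = ex(n, {K_{k+1}, (s+1)S_l}), then there exists a set U ⊆ V(G) with |U| = s such that the induced subgraph G[V(G) \ U] is S_l-free. -/
open SimpleGraph Finset Function

-- card of interval filters on Fin n
lemma card_filter_ico (n lo hi : ℕ) :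
    ((Finset.univ : Finset (Fin n)).filter (fun v => lo ≤ v.val ∧ v.val < hi)).card
      = min hi n - lo := by
  have h : ∀ m ∈ Finset.Ico lo (min hi n), m < n := by
    intro m hm; simp [Finset.mem_Ico] at hm; omega
  have : (Finset.univ : Finset (Fin n)).filter (fun v => lo ≤ v.val ∧ v.val < hi)
      = (Finset.Ico lo (min hi n)).attachFin h := by
    ext x
    simp only [Finset.mem_filter, Finset.mem_univ, true_and, Finset.mem_attachFin,
      Finset.mem_Ico]
    omega
  rw [this, Finset.card_attachFin, Nat.card_Ico]

lemma card_filter_lt (n c : ℕ) (h : c ≤ n) :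
    ((Finset.univ : Finset (Fin n)).filter (fun v => v.val < c)).card = c := by
  have := card_filter_ico n 0 c
  simp only [Nat.zero_le, true_and] at this
  rw [this]; omega

lemma card_filter_ge (n c : ℕ) :
    ((Finset.univ : Finset (Fin n)).filter (fun v => c ≤ v.val)).card = n - c := by
  have := card_filter_ico n c n
  have h2 : ∀ v : Fin n, (c ≤ v.val ∧ v.val < n) ↔ c ≤ v.val := by
    intro v; constructor; exact fun h => h.1; exact fun h => ⟨h, v.isLt⟩
  simp only [h2] at this
  rw [this]; omega

section Stars

variable {n l : ℕ}

/-- vertex map of star `i` : center on `inl`, leaves on `inr`. -/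
def sfun {j : ℕ} (c : Fin j → Fin n) (e : Fin j → Fin l → Fin n) (i : Fin j) :
    Unit ⊕ Fin l → Fin n := Sum.elim (fun _ => c i) (e i)

def starMap {j : ℕ} (c : Fin j → Fin n) (e : Fin j → Fin l → Fin n) :
    Fin j × (Unit ⊕ Fin l) → Fin n := fun p => sfun c e p.1 p.2

/-- a family of `j` pairwise-disjoint stars in `G` with centers `c` and leaves `e`. -/
def StarsOn (G : SimpleGraph (Fin n)) (j : ℕ) (c : Fin j → Fin n)
    (e : Fin j → Fin l → Fin n) : Prop :=
  (∀ i a, G.Adj (c i) (e i a)) ∧ (∀ i, Injective (e i)) ∧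
  (∀ i i' x x', sfun c e i x = sfun c e i' x' → i = i')

lemma starsOn_nil (G : SimpleGraph (Fin n)) :
    StarsOn (l := l) G 0 Fin.elim0 Fin.elim0 :=
  ⟨fun i => i.elim0, fun i => i.elim0, fun i => i.elim0⟩

lemma starMap_injective {G : SimpleGraph (Fin n)} {j c e}
    (h : StarsOn (l := l) G j c e) : Injective (starMap c e) := by
  obtain ⟨hadj, hinj, hcross⟩ := h
  rintro ⟨i, x⟩ ⟨i', x'⟩ hmain
  have hii : i = i' := hcross i i' x x' hmain
  subst hii
  simp only [Prod.mk.injEq, true_and]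
  match x, x' with
  | Sum.inl a, Sum.inl b => rfl
  | Sum.inl a, Sum.inr b =>
      exact absurd hmain (G.ne_of_adj (hadj i b))
  | Sum.inr a, Sum.inl b =>
      exact absurd hmain.symm (G.ne_of_adj (hadj i a))
  | Sum.inr a, Sum.inr b =>
      have := hinj i hmain; simp_all

lemma contains_of_starsOn {G : SimpleGraph (Fin n)} {j c e}
    (h : StarsOn (l := l) G j c e) : Contains G (starForest j l) := by
  refine ⟨⟨starMap c e, starMap_injective h⟩, ?_⟩
  rintro ⟨i, x⟩ ⟨i', x'⟩ hadj
  simp only [starForest, SimpleGraph.fromRel_adj, ne_eq] at hadj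
  obtain ⟨hne, hrel⟩ := hadj
  have key : ∀ (i : Fin j) (x x' : Unit ⊕ Fin l), x.isLeft ≠ x'.isLeft →
      G.Adj (sfun c e i x) (sfun c e i x') := by
    intro i x x' hne
    match x, x' with
    | Sum.inl a, Sum.inr b => exact h.1 i b
    | Sum.inr a, Sum.inl b => exact (h.1 i a).symm
    | Sum.inl a, Sum.inl b => simp at hne
    | Sum.inr a, Sum.inr b => simp at hne
  rcases hrel with ⟨h1, h2⟩ | ⟨h1, h2⟩
  · have h1' : i = i' := h1
    subst h1'
    exact key i x x' h2
  · have h1' : i = i' := h1.symm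
    subst h1'
    exact key i x x' (Ne.symm h2)

/-- the (finset) vertex set of a star family -/
def starSet {j : ℕ} (c : Fin j → Fin n) (e : Fin j → Fin l → Fin n) : Finset (Fin n) :=
  Finset.image (starMap c e) Finset.univ

lemma mem_starSet {j : ℕ} {c : Fin j → Fin n} {e : Fin j → Fin l → Fin n} {v : Fin n} :
    v ∈ starSet (l := l) c e ↔ ∃ i, v = c i ∨ ∃ a, v = e i a := by
  simp only [starSet, Finset.mem_image, Finset.mem_univ, true_and]
  constructor
  · rintro ⟨⟨i, x⟩, hx⟩
    refine ⟨i, ?_⟩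
    match x with
    | Sum.inl a => exact Or.inl hx.symm
    | Sum.inr a => exact Or.inr ⟨a, hx.symm⟩
  · rintro ⟨i, rfl | ⟨a, rfl⟩⟩
    exacts [⟨(i, Sum.inl ()), rfl⟩, ⟨(i, Sum.inr a), rfl⟩]

lemma card_starSet {G : SimpleGraph (Fin n)} {j c e} (h : StarsOn (l := l) G j c e) :
    (starSet c e).card = j * (l + 1) := by
  rw [starSet, Finset.card_image_of_injective _ (starMap_injective h), Finset.card_univ]
  simp [mul_add, mul_comm, add_comm]

/-- extend a star family by one star with center `v` and leaves an `l`-subset `L`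
    of the neighborhood of `v`, avoiding the current vertex set. -/
lemma starsOn_extend {G : SimpleGraph (Fin n)} [DecidableRel G.Adj] {j c e}
    (h : StarsOn (l := l) G j c e) {v : Fin n} (hv : v ∉ starSet c e)
    {L : Finset (Fin n)} (hL : L ⊆ G.neighborFinset v \ starSet c e)
    (hcard : L.card = l) :
    ∃ c' e', StarsOn (l := l) G (j + 1) c' e' ∧ c' 0 = v ∧
      (∀ a, e' 0 a ∈ L) ∧ (∀ i, c' i.succ = c i) ∧ (∀ i a, e' i.succ a = e i a) := by
  classical
  set e0 : Fin l → Fin n := fun a => ((L.orderIsoOfFin hcard) a : Fin n) with he0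
  have he0mem : ∀ a, e0 a ∈ L := fun a => ((L.orderIsoOfFin hcard) a).2
  have he0inj : Injective e0 := by
    intro a b hab
    have := Subtype.ext (p := fun x => x ∈ L) hab
    exact (L.orderIsoOfFin hcard).injective this
  have hLN : ∀ a, e0 a ∈ G.neighborFinset v \ starSet c e := fun a => hL (he0mem a)
  refine ⟨Fin.cons v c, Fin.cons e0 e, ⟨?_, ?_, ?_⟩, Fin.cons_zero _ _, he0mem, 
    fun i => Fin.cons_succ _ _ _, fun i a => congrFun (Fin.cons_succ _ _ _) a⟩
  · intro i a
    refine Fin.cases ?_ ?_ i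
    · simp only [Fin.cons_zero, Fin.cons_succ]
      have := hLN a
      rw [Finset.mem_sdiff, SimpleGraph.mem_neighborFinset] at this
      simpa using this.1
    · intro i'
      simp only [Fin.cons_succ]
      exact h.1 i' a
  · intro i
    refine Fin.cases ?_ ?_ i
    · simpa using he0inj
    · intro i'; simpa using h.2.1 i'
  · have hredS : ∀ (i2 : Fin j) (x : Unit ⊕ Fin l),
        sfun (Fin.cons v c) (Fin.cons e0 e) i2.succ x = sfun c e i2 x := by
      intro i2 x
      match x with
      | Sum.inl a => simp [sfun]
      | Sum.inr a => simp [sfun]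
    have hmemS : ∀ (i2 : Fin j) (x : Unit ⊕ Fin l), sfun c e i2 x ∈ starSet c e := by
      intro i2 x
      rw [mem_starSet]
      refine ⟨i2, ?_⟩
      match x with
      | Sum.inl a => exact Or.inl rfl
      | Sum.inr a => exact Or.inr ⟨a, rfl⟩
    have hnew : ∀ (x : Unit ⊕ Fin l),
        sfun (Fin.cons v c) (Fin.cons e0 e) 0 x ∉ starSet c e := by
      intro x
      match x with
      | Sum.inl a => simpa [sfun] using hv
      | Sum.inr a =>
          have := hLN a
          rw [Finset.mem_sdiff] at this
          simpa [sfun] using this.2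
    intro i i' x x'
    refine Fin.cases ?_ ?_ i
    · refine Fin.cases ?_ ?_ i'
      · intro _; rfl
      · intro i3 hx
        exfalso
        rw [hredS i3 x'] at hx
        exact hnew x (hx ▸ hmemS i3 x')
    · intro i2
      refine Fin.cases ?_ ?_ i'
      · intro hx
        exfalso
        rw [hredS i2 x] at hx
        exact hnew x' (hx ▸ hmemS i2 x)
      · intro i3 hx
        rw [hredS i2 x, hredS i3 x'] at hx
        rw [h.2.2 i2 i3 x x' hx]

end Stars

section Greedy

lemma greedy {n l s : ℕ} {G : SimpleGraph (Fin n)} [DecidableRel G.Adj]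
    (hfree : _root_.Free G (starForest (s + 1) l)) (N : ℕ) :
    ∀ (C : Finset (Fin n)) (j : ℕ) (c : Fin j → Fin n) (e : Fin j → Fin l → Fin n),
      C.card = N → StarsOn G j c e →
      (∀ i, c i ∉ C) → (∀ i a, e i a ∉ C) →
      (∀ v ∈ C, (s + 1) * (l + 1) ≤ G.degree v) →
      j + C.card = s + 1 → False := by
  induction N with
  | zero =>
      intro C j c e hC hstars _ _ _ hcard
      rw [hC] at hcard
      simp only [Nat.add_zero] at hcard
      subst hcard
      exact hfree (contains_of_starsOn hstars)
  | succ N ih =>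
      intro C j c e hC hstars hcC heC hdeg hcard
      have hCne : C.Nonempty := by
        rw [← Finset.card_pos, hC]; omega
      obtain ⟨u, hu⟩ := hCne
      have huS : u ∉ starSet c e := by
        rw [mem_starSet]
        rintro ⟨i, rfl | ⟨a, rfl⟩⟩
        exacts [hcC i hu, heC i a hu]
      set F : Finset (Fin n) := starSet c e ∪ C with hF
      have huF : u ∈ F := Finset.mem_union_right _ hu
      have hNF : G.neighborFinset u \ F = G.neighborFinset u \ F.erase u := by
        ext x
        simp only [Finset.mem_sdiff, SimpleGraph.mem_neighborFinset, Finset.mem_erase]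
        constructor
        · rintro ⟨hadj, hx⟩; exact ⟨hadj, fun h => hx h.2⟩
        · rintro ⟨hadj, hx⟩
          refine ⟨hadj, fun h => hx ⟨(G.ne_of_adj hadj).symm, h⟩⟩
      have hFcard : (F.erase u).card ≤ j * (l + 1) + N := by
        have h1 : F.card ≤ j * (l + 1) + (N + 1) := by
          calc F.card ≤ (starSet c e).card + C.card := Finset.card_union_le _ _
          _ = j * (l + 1) + (N + 1) := by rw [card_starSet hstars, hC]
        have h2 := Finset.card_erase_of_mem huF
        omega
      have hmain : l ≤ (G.neighborFinset u \ F).card := by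
        rw [hNF]
        have h3 := Finset.le_card_sdiff (F.erase u) (G.neighborFinset u)
        have h4 : (s + 1) * (l + 1) ≤ (G.neighborFinset u).card := by
          rw [SimpleGraph.card_neighborFinset_eq_degree]; exact hdeg u hu
        have h5 : (s + 1) * (l + 1) = j * (l + 1) + (N + 1) * (l + 1) := by
          have h55 : j + (N + 1) = s + 1 := by omega
          rw [← h55, Nat.add_mul]
        have h7 : (N + 1) * (l + 1) = N * (l + 1) + (l + 1) := Nat.succ_mul _ _
        have h8 : N ≤ N * (l + 1) := Nat.le_mul_of_pos_right _ (Nat.succ_pos l)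
        omega
      obtain ⟨L, hLsub, hLcard⟩ := Finset.exists_subset_card_eq hmain
      have hLsub' : L ⊆ G.neighborFinset u \ starSet c e := by
        intro x hx
        have := hLsub hx
        rw [Finset.mem_sdiff] at this ⊢
        exact ⟨this.1, fun h => this.2 (Finset.mem_union_left _ h)⟩
      obtain ⟨c', e', hstars', hc0, he0, hcsucc, hesucc⟩ :=
        starsOn_extend hstars huS hLsub' hLcard
      have hLnotC : ∀ x ∈ L, x ∉ C := by
        intro x hx hxC
        have := hLsub hx
        rw [Finset.mem_sdiff] at this
        exact this.2 (Finset.mem_union_right _ hxC)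
      refine ih (C.erase u) (j + 1) c' e' (by rw [Finset.card_erase_of_mem hu, hC]; omega) hstars'
        ?_ ?_ (fun v hv => hdeg v (Finset.mem_of_mem_erase hv)) ?_
      · intro i
        refine Fin.cases ?_ ?_ i
        · rw [hc0]; exact Finset.notMem_erase u C
        · intro i2
          rw [hcsucc]
          exact fun h => hcC i2 (Finset.mem_of_mem_erase h)
      · intro i a
        refine Fin.cases ?_ ?_ i
        · exact fun h => hLnotC _ (he0 a) (Finset.mem_of_mem_erase h)
        · intro i2
          rw [hesucc]
          exact fun h => heC i2 a (Finset.mem_of_mem_erase h)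
      · rw [Finset.card_erase_of_mem hu, hC]
        omega

end Greedy

section Construction

/-- block index of a vertex value -/
def blk (s l v : ℕ) : ℕ := (v - s) / (2 * (l - 1))
/-- side of a vertex within its block -/
def sdb (s l v : ℕ) : Bool := decide ((v - s) % (2 * (l - 1)) < l - 1)

/-- The extremal-type construction: `s` dominating vertices plus complete bipartite
blocks of size `2(l-1)` (and one leftover block). -/
def Gstar (n s l : ℕ) : SimpleGraph (Fin n) where
  Adj x y := (x.val < s ∧ s ≤ y.val) ∨ (s ≤ x.val ∧ y.val < s) ∨
    (s ≤ x.val ∧ s ≤ y.val ∧ blk s l x.val = blk s l y.val ∧ sdb s l x.val ≠ sdb s l y.val)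
  symm := by
    refine ⟨?_⟩
    rintro x y (⟨h1, h2⟩ | ⟨h1, h2⟩ | ⟨h1, h2, h3, h4⟩)
    · exact Or.inr (Or.inl ⟨h2, h1⟩)
    · exact Or.inl ⟨h2, h1⟩
    · exact Or.inr (Or.inr ⟨h2, h1, h3.symm, h4.symm⟩)
  loopless := by
    refine ⟨?_⟩
    rintro x (⟨h1, h2⟩ | ⟨h1, h2⟩ | ⟨h1, h2, h3, h4⟩)
    · omega
    · omega
    · exact h4 rfl

lemma gstar_adj {n s l : ℕ} {x y : Fin n} :
    (Gstar n s l).Adj x y ↔ ((x.val < s ∧ s ≤ y.val) ∨ (s ≤ x.val ∧ y.val < s) ∨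
    (s ≤ x.val ∧ s ≤ y.val ∧ blk s l x.val = blk s l y.val ∧ sdb s l x.val ≠ sdb s l y.val)) :=
  Iff.rfl

lemma gstar_Kfree (n s l k : ℕ) (hk : 3 ≤ k) :
    _root_.Free (Gstar n s l) (completeGraph (Fin (k + 1))) := by
  rintro ⟨f, hf⟩
  have hadj : ∀ a b : Fin (k + 1), a ≠ b → (Gstar n s l).Adj (f a) (f b) := by
    intro a b hab
    exact hf a b (by simpa [completeGraph] using hab)
  have h2 : ∀ a b : Fin (k + 1), a ≠ b → ¬((f a).val < s ∧ (f b).val < s) := by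
    intro a b hab ⟨ha, hb⟩
    rcases hadj a b hab with ⟨h1', h2'⟩ | ⟨h1', h2'⟩ | ⟨h1', _⟩ <;> omega
  have htriple : ∀ a b c : Fin (k + 1), a ≠ b → a ≠ c → b ≠ c →
      s ≤ (f a).val → s ≤ (f b).val → s ≤ (f c).val → False := by
    intro a b c hab hac hbc ha hb hc
    have e1 := hadj a b hab
    have e2 := hadj a c hac
    have e3 := hadj b c hbc
    rw [gstar_adj] at e1 e2 e3
    have s1 : sdb s l (f a).val ≠ sdb s l (f b).val := by
      rcases e1 with ⟨h1', h2'⟩ | ⟨h1', h2'⟩ | ⟨_, _, _, h4'⟩ <;> first | omega | exact h4'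
    have s2 : sdb s l (f a).val ≠ sdb s l (f c).val := by
      rcases e2 with ⟨h1', h2'⟩ | ⟨h1', h2'⟩ | ⟨_, _, _, h4'⟩ <;> first | omega | exact h4'
    have s3 : sdb s l (f b).val ≠ sdb s l (f c).val := by
      rcases e3 with ⟨h1', h2'⟩ | ⟨h1', h2'⟩ | ⟨_, _, _, h4'⟩ <;> first | omega | exact h4'
    revert s1 s2 s3
    cases sdb s l (f a).val <;> cases sdb s l (f b).val <;> cases sdb s l (f c).val <;> simp
  set i0 : Fin (k + 1) := ⟨0, by omega⟩
  set i1 : Fin (k + 1) := ⟨1, by omega⟩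
  set i2 : Fin (k + 1) := ⟨2, by omega⟩
  set i3 : Fin (k + 1) := ⟨3, by omega⟩
  have d01 : i0 ≠ i1 := by simp [i0, i1, Fin.ext_iff]
  have d02 : i0 ≠ i2 := by simp [i0, i2, Fin.ext_iff]
  have d03 : i0 ≠ i3 := by simp [i0, i3, Fin.ext_iff]
  have d12 : i1 ≠ i2 := by simp [i1, i2, Fin.ext_iff]
  have d13 : i1 ≠ i3 := by simp [i1, i3, Fin.ext_iff]
  have d23 : i2 ≠ i3 := by simp [i2, i3, Fin.ext_iff]
  by_cases c0 : (f i0).val < s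
  · have g1 : s ≤ (f i1).val := by by_contra h; exact h2 i0 i1 d01 ⟨c0, by omega⟩
    have g2 : s ≤ (f i2).val := by by_contra h; exact h2 i0 i2 d02 ⟨c0, by omega⟩
    have g3 : s ≤ (f i3).val := by by_contra h; exact h2 i0 i3 d03 ⟨c0, by omega⟩
    exact htriple i1 i2 i3 d12 d13 d23 g1 g2 g3
  · by_cases c1 : (f i1).val < s
    · have g2 : s ≤ (f i2).val := by by_contra h; exact h2 i1 i2 d12 ⟨c1, by omega⟩
      have g3 : s ≤ (f i3).val := by by_contra h; exact h2 i1 i3 d13 ⟨c1, by omega⟩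
      exact htriple i0 i2 i3 d02 d03 d23 (by omega) g2 g3
    · by_cases c2 : (f i2).val < s
      · have g3 : s ≤ (f i3).val := by by_contra h; exact h2 i2 i3 d23 ⟨c2, by omega⟩
        exact htriple i0 i1 i3 d01 d03 d13 (by omega) (by omega) g3
      · exact htriple i0 i1 i2 d01 d02 d12 (by omega) (by omega) (by omega)

end Construction

section Construction2

lemma side_count (n s l B : ℕ) (ss : Bool) (hl : 2 ≤ l) :
    ((Finset.univ : Finset (Fin n)).filter
      (fun x => s ≤ x.val ∧ blk s l x.val = B ∧ sdb s l x.val = ss)).card ≤ l - 1 := by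
  set lo : ℕ := if ss then 0 else l - 1 with hlo
  have hM : 0 < 2 * (l - 1) := by omega
  have := Finset.card_le_card_of_injOn (f := fun x : Fin n => (x.val - s) % (2 * (l - 1)))
    (s := (Finset.univ : Finset (Fin n)).filter
      (fun x => s ≤ x.val ∧ blk s l x.val = B ∧ sdb s l x.val = ss))
    (t := Finset.Ico lo (lo + (l - 1))) ?_ ?_
  · rw [Nat.card_Ico] at this; omega
  · intro x hx
    dsimp only
    rw [Finset.mem_coe, Finset.mem_filter] at hx
    obtain ⟨-, hx1, hx2, hx3⟩ := hx
    have hmod : (x.val - s) % (2 * (l - 1)) < 2 * (l - 1) := Nat.mod_lt _ hM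
    rw [Finset.mem_coe, Finset.mem_Ico]
    cases ss with
    | true =>
        have : (x.val - s) % (2 * (l - 1)) < l - 1 := by
          simpa [sdb] using hx3
        have hlo' : lo = 0 := by simp [hlo]
        omega
    | false =>
        have : ¬((x.val - s) % (2 * (l - 1)) < l - 1) := by
          simpa [sdb] using hx3
        have hlo' : lo = l - 1 := by simp [hlo]
        omega
  · intro x hx y hy hxy
    dsimp only at hxy
    rw [Finset.mem_coe, Finset.mem_filter] at hx hy
    obtain ⟨-, hx1, hx2, -⟩ := hx
    obtain ⟨-, hy1, hy2, -⟩ := hy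
    have ex := Nat.div_add_mod (x.val - s) (2 * (l - 1))
    have ey := Nat.div_add_mod (y.val - s) (2 * (l - 1))
    rw [show (x.val - s) / (2 * (l - 1)) = B from hx2] at ex
    rw [show (y.val - s) / (2 * (l - 1)) = B from hy2] at ey
    have : x.val = y.val := by omega
    exact Fin.ext this

lemma gstar_SFfree (n s l : ℕ) (hl : 2 ≤ l) (hsn : s ≤ n) :
    _root_.Free (Gstar n s l) (starForest (s + 1) l) := by
  rintro ⟨f, hf⟩
  have hadj : ∀ (i : Fin (s + 1)) (a : Fin l),
      (Gstar n s l).Adj (f (i, Sum.inl ())) (f (i, Sum.inr a)) := by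
    intro i a
    refine hf _ _ ?_
    rw [starForest, SimpleGraph.fromRel_adj]
    exact ⟨by simp, Or.inl ⟨rfl, by simp⟩⟩
  have hone : ∀ i : Fin (s + 1), ∃ x : Unit ⊕ Fin l, (f (i, x)).val < s := by
    intro i
    by_contra hcon
    push_neg at hcon
    set cen := f (i, Sum.inl ()) with hcen
    have hleaf : ∀ a : Fin l, s ≤ (f (i, Sum.inr a)).val ∧
        blk s l (f (i, Sum.inr a)).val = blk s l cen.val ∧
        sdb s l (f (i, Sum.inr a)).val = !(sdb s l cen.val) := by
      intro a
      have h1 := hadj i a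
      rw [gstar_adj] at h1
      have hc := hcon (Sum.inl ())
      have hlf := hcon (Sum.inr a)
      rcases h1 with ⟨h1', h2'⟩ | ⟨h1', h2'⟩ | ⟨h1', h2', h3', h4'⟩
      · exact absurd h1' (by rw [← hcen] at *; omega)
      · exact absurd h2' (by omega)
      · refine ⟨hlf, h3'.symm, ?_⟩
        revert h4'
        cases sdb s l (f (i, Sum.inr a)).val <;> cases sdb s l cen.val <;> simp
    have hcard := Finset.card_le_card_of_injOn (f := fun a : Fin l => f (i, Sum.inr a))
      (s := Finset.univ)
      (t := (Finset.univ : Finset (Fin n)).filter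
        (fun x => s ≤ x.val ∧ blk s l x.val = blk s l cen.val ∧
          sdb s l x.val = !(sdb s l cen.val)))
      (fun a _ => by rw [Finset.mem_coe, Finset.mem_filter]; exact ⟨Finset.mem_univ _, hleaf a⟩)
      (fun a _ b _ hab => by
        have := f.injective hab
        rw [Prod.mk.injEq] at this
        exact Sum.inr_injective this.2)
    rw [Finset.card_univ, Fintype.card_fin] at hcard
    have := side_count n s l (blk s l cen.val) (!(sdb s l cen.val)) hl
    omega
  have hcard := Finset.card_le_card_of_injOn
    (f := fun i : Fin (s + 1) => f (i, Classical.choose (hone i)))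
    (s := Finset.univ)
    (t := (Finset.univ : Finset (Fin n)).filter (fun x : Fin n => x.val < s))
    (fun i _ => by
      rw [Finset.mem_coe, Finset.mem_filter]
      exact ⟨Finset.mem_univ _, Classical.choose_spec (hone i)⟩)
    (fun a _ b _ hab => by
      have := f.injective hab
      rw [Prod.mk.injEq] at this
      exact this.1)
  rw [Finset.card_univ, Fintype.card_fin, card_filter_lt n s hsn] at hcard
  omega

end Construction2

section Degrees

variable {n s l : ℕ}

lemma gstar_deg_dom [DecidableRel (Gstar n s l).Adj] (v : Fin n) (hv : v.val < s) :
    n - s ≤ (Gstar n s l).degree v := by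
  rw [← SimpleGraph.card_neighborFinset_eq_degree, ← card_filter_ge n s]
  apply Finset.card_le_card
  intro x hx
  rw [Finset.mem_filter] at hx
  rw [SimpleGraph.mem_neighborFinset, gstar_adj]
  exact Or.inl ⟨hv, hx.2⟩

/-- lower bound the degree of a `W`-vertex by `s` plus an injection into its
opposite side. -/
lemma gstar_deg_W [DecidableRel (Gstar n s l).Adj] (hsn : s ≤ n) (v : Fin n) (hv : s ≤ v.val)
    (c : ℕ) (ι : Fin c → Fin n)
    (hιinj : Function.Injective ι)
    (hιs : ∀ a, s ≤ (ι a).val)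
    (hιadj : ∀ a, (Gstar n s l).Adj v (ι a)) :
    s + c ≤ (Gstar n s l).degree v := by
  rw [← SimpleGraph.card_neighborFinset_eq_degree]
  set A := (Finset.univ : Finset (Fin n)).filter (fun x => x.val < s) with hA
  set B := Finset.image ι Finset.univ with hB
  have hsub : A ∪ B ⊆ (Gstar n s l).neighborFinset v := by
    intro x hx
    rw [Finset.mem_union] at hx
    rw [SimpleGraph.mem_neighborFinset]
    rcases hx with hx | hx
    · rw [hA, Finset.mem_filter] at hx
      rw [gstar_adj]
      exact Or.inr (Or.inl ⟨hv, hx.2⟩)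
    · rw [hB, Finset.mem_image] at hx
      obtain ⟨a, -, rfl⟩ := hx
      exact hιadj a
  have hdisj : Disjoint A B := by
    rw [Finset.disjoint_left]
    intro x hx1 hx2
    rw [hA, Finset.mem_filter] at hx1
    rw [hB, Finset.mem_image] at hx2
    obtain ⟨a, -, rfl⟩ := hx2
    exact absurd (hιs a) (by omega)
  calc s + c = (A ∪ B).card := by
        rw [Finset.card_union_of_disjoint hdisj, hA, hB,
          Finset.card_image_of_injective _ hιinj, Finset.card_univ, Fintype.card_fin,
          card_filter_lt n s hsn]
    _ ≤ _ := Finset.card_le_card hsub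

lemma div_mod_helper {M B p x : ℕ} (hM : 0 < M) (hx : x = M * B + p) (hp : p < M) :
    x / M = B ∧ x % M = p := by
  subst hx
  rw [Nat.mul_add_div hM, Nat.div_eq_of_lt hp, Nat.mul_add_mod, Nat.mod_eq_of_lt hp]
  omega

lemma gstar_deg_block [DecidableRel (Gstar n s l).Adj] (hl : 2 ≤ l) (hsn : s ≤ n)
    (v : Fin n) (hv1 : s ≤ v.val) (base : ℕ)
    (hbase : ∀ a : Fin (l - 1), s + base + a.val < n)
    (hblk : ∀ a : Fin (l - 1), blk s l (s + base + a.val) = blk s l v.val)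
    (hsd : ∀ a : Fin (l - 1), sdb s l (s + base + a.val) ≠ sdb s l v.val) :
    s + (l - 1) ≤ (Gstar n s l).degree v := by
  refine gstar_deg_W hsn v hv1 (l - 1) (fun a => ⟨s + base + a.val, hbase a⟩) ?_ ?_ ?_
  · intro a b hab
    have : s + base + a.val = s + base + b.val := congrArg Fin.val hab
    exact Fin.ext (by omega)
  · intro a; show s ≤ s + base + a.val; omega
  · intro a
    rw [gstar_adj]
    refine Or.inr (Or.inr ⟨hv1, by show s ≤ s + base + a.val; omega,
      (hblk a).symm, (hsd a).symm⟩)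

lemma gstar_deg_full [DecidableRel (Gstar n s l).Adj] (hl : 2 ≤ l) (hsn : s ≤ n)
    (v : Fin n) (hv1 : s ≤ v.val) (hv2 : v.val < s + 2 * (l - 1) * ((n - s) / (2 * (l - 1)))) :
    s + (l - 1) ≤ (Gstar n s l).degree v := by
  obtain ⟨M, hMdef⟩ : ∃ M, M = 2 * (l - 1) := ⟨_, rfl⟩
  have hM : 0 < M := by omega
  rw [← hMdef] at hv2
  obtain ⟨q, hq⟩ : ∃ q, q = (n - s) / M := ⟨_, rfl⟩
  obtain ⟨b, hb⟩ : ∃ b, b = (v.val - s) / M := ⟨_, rfl⟩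
  rw [← hq] at hv2
  have hdm1 := Nat.div_add_mod (v.val - s) M
  rw [← hb] at hdm1
  have hdm2 := Nat.div_add_mod (n - s) M
  rw [← hq] at hdm2
  have hmod1 : (v.val - s) % M < M := Nat.mod_lt _ hM
  have hbq : b + 1 ≤ q := by
    have h1 : M * b < M * q := by omega
    exact Nat.lt_of_mul_lt_mul_left h1
  have hMbq : M * (b + 1) ≤ M * q := Nat.mul_le_mul_left M hbq
  have hMb' : M * (b + 1) = M * b + M := by ring
  have hkey : ∀ p : ℕ, p < M →
      ((s + (M * b + p) + 0 - s) = M * b + p ∧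
       (M * b + p) / M = b ∧ (M * b + p) % M = p) := by
    intro p hp
    refine ⟨by omega, ?_⟩
    exact div_mod_helper hM rfl hp
  rcases Bool.eq_false_or_eq_true (sdb s l v.val) with hside | hside
  · -- v on the left side; right positions p = (l-1) + a.val
    have hvmod : (v.val - s) % (2 * (l - 1)) < l - 1 := by
      have : sdb s l v.val = true := hside
      simpa [sdb] using this
    refine gstar_deg_block hl hsn v hv1 (M * b + (l - 1)) ?_ ?_ ?_
    · intro a
      have ha := a.isLt
      omega
    · intro a
      have ha : (l - 1) + a.val < M := by have := a.isLt; omega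
      have h2 := div_mod_helper (M := M) (B := b) (p := (l - 1) + a.val) hM rfl ha
      show (s + (M * b + (l - 1)) + a.val - s) / (2 * (l - 1)) = (v.val - s) / (2 * (l - 1))
      rw [show s + (M * b + (l - 1)) + a.val - s = M * b + ((l - 1) + a.val) from by omega,
        ← hMdef, h2.1, hb]
    · intro a
      have ha : (l - 1) + a.val < M := by have := a.isLt; omega
      have h2 := div_mod_helper (M := M) (B := b) (p := (l - 1) + a.val) hM rfl ha
      rw [hside]
      show decide ((s + (M * b + (l - 1)) + a.val - s) % (2 * (l - 1)) < l - 1) ≠ true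
      rw [show s + (M * b + (l - 1)) + a.val - s = M * b + ((l - 1) + a.val) from by omega,
        ← hMdef, h2.2]
      simp

  · -- v on the right side; left positions p = a.val
    have hvmod : ¬((v.val - s) % (2 * (l - 1)) < l - 1) := by
      have : sdb s l v.val = false := hside
      simpa [sdb] using this
    refine gstar_deg_block hl hsn v hv1 (M * b) ?_ ?_ ?_
    · intro a
      have ha := a.isLt
      omega
    · intro a
      have ha : a.val < M := by have := a.isLt; omega
      have h2 := div_mod_helper (M := M) (B := b) (p := a.val) hM rfl ha
      show (s + M * b + a.val - s) / (2 * (l - 1)) = (v.val - s) / (2 * (l - 1))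
      rw [show s + M * b + a.val - s = M * b + a.val from by omega, ← hMdef, h2.1, hb]
    · intro a
      have ha : a.val < M := by have := a.isLt; omega
      have h2 := div_mod_helper (M := M) (B := b) (p := a.val) hM rfl ha
      rw [hside]
      show decide ((s + M * b + a.val - s) % (2 * (l - 1)) < l - 1) ≠ false
      rw [show s + M * b + a.val - s = M * b + a.val from by omega, ← hMdef, h2.2]
      simp [a.isLt]
lemma gstar_deg_last [DecidableRel (Gstar n s l).Adj] (hl : 2 ≤ l) (hsn : s ≤ n)
    (v : Fin n) (hv1 : s + 2 * (l - 1) * ((n - s) / (2 * (l - 1))) + (l - 1) ≤ v.val) :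
    s + (l - 1) ≤ (Gstar n s l).degree v := by
  obtain ⟨M, hMdef⟩ : ∃ M, M = 2 * (l - 1) := ⟨_, rfl⟩
  have hM : 0 < M := by omega
  rw [← hMdef] at hv1
  obtain ⟨q, hq⟩ : ∃ q, q = (n - s) / M := ⟨_, rfl⟩
  rw [← hq] at hv1
  have hdm2 := Nat.div_add_mod (n - s) M
  rw [← hq] at hdm2
  have hmod2 : (n - s) % M < M := Nat.mod_lt _ hM
  have hvn := v.isLt
  have hvblk : (v.val - s) / M = q ∧ (v.val - s) % M = v.val - s - M * q :=
    div_mod_helper hM (by omega) (by omega)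
  have hsv : s ≤ v.val := by omega
  refine gstar_deg_block hl hsn v hsv (M * q) ?_ ?_ ?_
  · intro a
    have ha := a.isLt
    omega
  · intro a
    have ha : a.val < M := by have := a.isLt; omega
    have h2 := div_mod_helper (M := M) (B := q) (p := a.val) hM rfl ha
    show (s + M * q + a.val - s) / (2 * (l - 1)) = (v.val - s) / (2 * (l - 1))
    rw [show s + M * q + a.val - s = M * q + a.val from by omega, ← hMdef, h2.1, hvblk.1]
  · intro a
    have ha : a.val < M := by have := a.isLt; omega
    have h2 := div_mod_helper (M := M) (B := q) (p := a.val) hM rfl ha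
    have hvsd : sdb s l v.val = false := by
      have hge : ¬((v.val - s) % (2 * (l - 1)) < l - 1) := by
        rw [← hMdef, hvblk.2]
        omega
      simp [sdb, hge]
    rw [hvsd]
    show decide ((s + M * q + a.val - s) % (2 * (l - 1)) < l - 1) ≠ false
    rw [show s + M * q + a.val - s = M * q + a.val from by omega, ← hMdef, h2.2]
    simp [a.isLt]

lemma gstar_deg_W_base [DecidableRel (Gstar n s l).Adj] (hsn : s ≤ n)
    (v : Fin n) (hv : s ≤ v.val) : s ≤ (Gstar n s l).degree v := by
  have := gstar_deg_W (l := l) hsn v hv 0 Fin.elim0 (fun a => a.elim0)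
    (fun a => a.elim0) (fun a => a.elim0)
  omega

end Degrees

section Counting

lemma double_count {n : ℕ} (G : SimpleGraph (Fin n)) [DecidableRel G.Adj]
    (A B : Finset (Fin n)) :
    ∑ v ∈ A, (B.filter (G.Adj v)).card ≤ ∑ b ∈ B, G.degree b := by
  calc ∑ v ∈ A, (B.filter (G.Adj v)).card
      = ∑ v ∈ A, ∑ b ∈ B, if G.Adj v b then 1 else 0 := by
        refine Finset.sum_congr rfl (fun v _ => ?_)
        rw [Finset.card_filter]
    _ = ∑ b ∈ B, ∑ v ∈ A, if G.Adj v b then 1 else 0 := Finset.sum_comm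
    _ = ∑ b ∈ B, (A.filter (fun v => G.Adj v b)).card := by
        refine Finset.sum_congr rfl (fun b _ => ?_)
        rw [Finset.card_filter]
    _ ≤ ∑ b ∈ B, G.degree b := by
        refine Finset.sum_le_sum (fun b _ => ?_)
        rw [← SimpleGraph.card_neighborFinset_eq_degree]
        apply Finset.card_le_card
        intro v hv
        rw [Finset.mem_filter] at hv
        rw [SimpleGraph.mem_neighborFinset]
        exact hv.2.symm

lemma gstar_edge_lb (n s l : ℕ) (hl : 2 ≤ l) (hsn : s ≤ n)
    [DecidableRel (Gstar n s l).Adj] :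
    s * (n - s) + (n - s) * s + (l - 1) * (2 * (l - 1) * ((n - s) / (2 * (l - 1))))
      + (l - 1) * (n - (s + 2 * (l - 1) * ((n - s) / (2 * (l - 1))) + (l - 1)))
      ≤ 2 * (Gstar n s l).edgeFinset.card := by
  rw [← SimpleGraph.sum_degrees_eq_twice_card_edges]
  have hQle : 2 * (l - 1) * ((n - s) / (2 * (l - 1))) ≤ n - s := by
    rw [mul_comm]
    exact Nat.div_mul_le_self _ _
  set Q := 2 * (l - 1) * ((n - s) / (2 * (l - 1))) with hQ
  have key : ∀ v : Fin n,
      (if v.val < s then n - s else s) +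
      ((if s ≤ v.val ∧ v.val < s + Q then l - 1 else 0) +
       (if s + Q + (l - 1) ≤ v.val then l - 1 else 0)) ≤ (Gstar n s l).degree v := by
    intro v
    by_cases h1 : v.val < s
    · rw [if_pos h1, if_neg (by omega), if_neg (by omega)]
      have := gstar_deg_dom (s := s) (l := l) v h1
      omega
    · rw [if_neg h1]
      by_cases h2 : v.val < s + Q
      · rw [if_pos ⟨by omega, h2⟩, if_neg (by omega)]
        have := gstar_deg_full hl hsn v (by omega) (by rw [← hQ]; omega)
        omega
      · rw [if_neg (by omega)]
        by_cases h3 : s + Q + (l - 1) ≤ v.val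
        · rw [if_pos h3]
          have := gstar_deg_last hl hsn v (by rw [← hQ]; omega)
          omega
        · rw [if_neg h3]
          have := gstar_deg_W_base (l := l) hsn v (by omega)
          omega
  have hsum := Finset.sum_le_sum (fun v (_ : v ∈ (Finset.univ : Finset (Fin n))) => key v)
  rw [Finset.sum_add_distrib, Finset.sum_add_distrib] at hsum
  have e1 : ∑ v : Fin n, (if v.val < s then n - s else s) = s * (n - s) + (n - s) * s := by
    rw [Finset.sum_ite, Finset.sum_const, Finset.sum_const, card_filter_lt n s hsn]
    have : (Finset.univ.filter (fun v : Fin n => ¬ v.val < s))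
        = Finset.univ.filter (fun v : Fin n => s ≤ v.val) := by
      refine Finset.filter_congr (fun x _ => ?_)
      simp [not_lt]
    rw [this, card_filter_ge]
    simp [mul_comm]
  have e2 : ∑ v : Fin n, (if s ≤ v.val ∧ v.val < s + Q then l - 1 else 0)
      = (l - 1) * Q := by
    rw [Finset.sum_ite, Finset.sum_const, Finset.sum_const, card_filter_ico n s (s + Q)]
    rw [min_eq_left (by omega)]
    simp [mul_comm]
  have e3 : ∑ v : Fin n, (if s + Q + (l - 1) ≤ v.val then l - 1 else 0)
      = (l - 1) * (n - (s + Q + (l - 1))) := by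
    rw [Finset.sum_ite, Finset.sum_const, Finset.sum_const, card_filter_ge]
    simp [mul_comm]
  rw [e1, e2, e3] at hsum
  omega

end Counting

lemma core_ineq (n k l s t tp r0 T : ℤ)
    (hk : 3 ≤ k) (hl : 2 ≤ l) (hs : 1 ≤ s)
    (hn : k*s^2 + (s+1)*(l+1)^2 ≤ n)
    (hts : t + 1 ≤ s) (ht0 : 0 ≤ t) (htp0 : 0 ≤ tp) (htp : t + tp ≤ s)
    (hr0 : 0 ≤ r0) (hr1 : r0 < 2*(l-1)) (hsn : s ≤ n)
    (hT : (l - 1 ≤ r0 ∧ T = r0 - (l-1)) ∨ (r0 < l - 1 ∧ T = 0))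
    (hfinal : 2*s*(n-s) + (l-1)*(n-s-r0) + (l-1)*T ≤
      t*(n-1) + 2*tp*(l+1)*((s+1)*(l+1)-1) + (n-t-tp*(l+1))*(t+l-1)) :
    False := by
  rcases hT with ⟨hT1, hT2⟩ | ⟨hT1, hT2⟩ <;> subst hT2 <;>
  rcases eq_or_lt_of_le htp with hu | hu <;>
  nlinarith [mul_le_mul_of_nonneg_left hn (by linarith : (0:ℤ) ≤ s - t),
      mul_le_mul_of_nonneg_left hn (by linarith : (0:ℤ) ≤ s - t - tp),
      mul_nonneg (mul_nonneg (by linarith : (0:ℤ) ≤ s - t) (by linarith : (0:ℤ) ≤ l - 1)) (by linarith : (0:ℤ) ≤ l+1),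
      mul_nonneg ht0 (by linarith : (0:ℤ) ≤ l - 1),
      mul_nonneg (by linarith : (0:ℤ) ≤ k - 3) (sq_nonneg s),
      sq_nonneg s, sq_nonneg (l-1),
      mul_pos (by linarith : (0:ℤ) < s) (by linarith : (0:ℤ) < l+1)]

set_option maxHeartbeats 2000000 in
lemma final_arith (n k l s t tp q r0 rc E Es : ℕ)
    (hk : 3 ≤ k) (hl : 2 ≤ l) (hs : 1 ≤ s)
    (hn : k * s ^ 2 + (s + 1) * (l + 1) ^ 2 ≤ n)
    (hts : t + 1 ≤ s) (htp : t + tp ≤ s)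
    (hrc : t + tp * (l + 1) + rc = n)
    (hqr : 2 * (l - 1) * q + r0 = n - s) (hr1 : r0 < 2 * (l - 1)) (hsn : s ≤ n)
    (hUB : 2 * E ≤ t * (n - 1) + 2 * (tp * (l + 1)) * ((s + 1) * (l + 1) - 1)
      + rc * (t + (l - 1)))
    (hLB : s * (n - s) + (n - s) * s + (l - 1) * (2 * (l - 1) * q)
      + (l - 1) * (n - (s + 2 * (l - 1) * q + (l - 1))) ≤ 2 * Es)
    (hEs : Es ≤ E) : False := by
  have hl1 : 1 ≤ l := by omega
  have hn1 : 1 ≤ n := by omega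
  have hprod : 1 ≤ (s + 1) * (l + 1) := Nat.mul_pos (by omega) (by omega)
  have hchain : s * (n - s) + (n - s) * s + (l - 1) * (2 * (l - 1) * q)
      + (l - 1) * (n - (s + 2 * (l - 1) * q + (l - 1)))
      ≤ t * (n - 1) + 2 * (tp * (l + 1)) * ((s + 1) * (l + 1) - 1)
      + rc * (t + (l - 1)) := by omega
  have hkZ : (3:ℤ) ≤ (k:ℤ) := by exact_mod_cast hk
  have hlZ : (2:ℤ) ≤ (l:ℤ) := by exact_mod_cast hl
  have hsZ : (1:ℤ) ≤ (s:ℤ) := by exact_mod_cast hs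
  have hnZ : (k:ℤ) * (s:ℤ)^2 + ((s:ℤ)+1) * ((l:ℤ)+1)^2 ≤ (n:ℤ) := by exact_mod_cast hn
  have htsZ : (t:ℤ) + 1 ≤ (s:ℤ) := by exact_mod_cast hts
  have htpZ : (t:ℤ) + (tp:ℤ) ≤ (s:ℤ) := by exact_mod_cast htp
  have hsnZ : (s:ℤ) ≤ (n:ℤ) := by exact_mod_cast hsn
  have hr1Z : (r0:ℤ) < 2 * ((l:ℤ) - 1) := by zify [hl1] at hr1; linarith
  have hrcZ : (t:ℤ) + (tp:ℤ) * ((l:ℤ)+1) + (rc:ℤ) = (n:ℤ) := by exact_mod_cast hrc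
  have hqrZ : 2 * ((l:ℤ)-1) * (q:ℤ) + (r0:ℤ) = (n:ℤ) - (s:ℤ) := by
    zify [hl1, hsn] at hqr; linarith
  rcases le_or_gt (l - 1) r0 with hcase | hcase
  · have hcaseZ : (l:ℤ) - 1 ≤ (r0:ℤ) := by zify [hl1] at hcase; linarith
    have hchainZ : (s:ℤ)*((n:ℤ)-s) + ((n:ℤ)-s)*s + ((l:ℤ)-1)*(2*((l:ℤ)-1)*q)
        + ((l:ℤ)-1)*((r0:ℤ)-((l:ℤ)-1))
        ≤ (t:ℤ)*((n:ℤ)-1) + 2*((tp:ℤ)*((l:ℤ)+1))*(((s:ℤ)+1)*((l:ℤ)+1)-1)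
        + (rc:ℤ)*((t:ℤ)+((l:ℤ)-1)) := by
      have hTeq : n - (s + 2 * (l - 1) * q + (l - 1)) = r0 - (l - 1) := by omega
      rw [hTeq] at hchain
      zify [hl1, hsn, hn1, hprod, hcase] at hchain
      linarith
    refine core_ineq (n:ℤ) (k:ℤ) (l:ℤ) (s:ℤ) (t:ℤ) (tp:ℤ) (r0:ℤ) ((r0:ℤ) - ((l:ℤ)-1))
      hkZ hlZ hsZ hnZ htsZ (Int.natCast_nonneg t) (Int.natCast_nonneg tp) htpZ
      (Int.natCast_nonneg r0) hr1Z hsnZ (Or.inl ⟨hcaseZ, rfl⟩) ?_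
    nlinarith [hchainZ, hqrZ, hrcZ]
  · have hcaseZ : (r0:ℤ) < (l:ℤ) - 1 := by zify [hl1] at hcase; linarith
    have hchainZ : (s:ℤ)*((n:ℤ)-s) + ((n:ℤ)-s)*s + ((l:ℤ)-1)*(2*((l:ℤ)-1)*q)
        ≤ (t:ℤ)*((n:ℤ)-1) + 2*((tp:ℤ)*((l:ℤ)+1))*(((s:ℤ)+1)*((l:ℤ)+1)-1)
        + (rc:ℤ)*((t:ℤ)+((l:ℤ)-1)) := by
      have hTeq : n - (s + 2 * (l - 1) * q + (l - 1)) = 0 := by omega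
      rw [hTeq, Nat.mul_zero, Nat.add_zero] at hchain
      zify [hl1, hsn, hn1, hprod] at hchain
      linarith
    refine core_ineq (n:ℤ) (k:ℤ) (l:ℤ) (s:ℤ) (t:ℤ) (tp:ℤ) (r0:ℤ) 0
      hkZ hlZ hsZ hnZ htsZ (Int.natCast_nonneg t) (Int.natCast_nonneg tp) htpZ
      (Int.natCast_nonneg r0) hr1Z hsnZ (Or.inr ⟨hcaseZ, rfl⟩) ?_
    nlinarith [hchainZ, hqrZ, hrcZ]

lemma ncard_eq_edgeFinset_card {n : ℕ} (G : SimpleGraph (Fin n)) [DecidableRel G.Adj] :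
    G.edgeSet.ncard = G.edgeFinset.card := by
  rw [← SimpleGraph.coe_edgeFinset, Set.ncard_coe_finset]

set_option maxHeartbeats 1600000 in
theorem stmt12 (n k l s : ℕ) (hk : 3 ≤ k) (hl : 2 ≤ l) (hs : 1 ≤ s)
    (hn : k * s ^ 2 + (s + 1) * (l + 1) ^ 2 ≤ n)
    (G : SimpleGraph (Fin n))
    (hKfree : _root_.Free G (completeGraph (Fin (k + 1))))
    (hSfree : _root_.Free G (starForest (s + 1) l))
    (hmax : G.edgeSet.ncard =
      exNum n (fun G' => _root_.Free G' (completeGraph (Fin (k + 1))) ∧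
        _root_.Free G' (starForest (s + 1) l))) :
    ∃ U : Finset (Fin n), U.card = s ∧
      _root_.Free (SimpleGraph.induce (↑(Uᶜ) : Set (Fin n)) G)
        (completeBipartiteGraph Unit (Fin l)) := by
  classical
  have hsn : s ≤ n := by nlinarith [hn, hs, hk, hl]
  -- extremality consequence
  have hmax' : ∀ G' : SimpleGraph (Fin n), _root_.Free G' (completeGraph (Fin (k + 1))) →
      _root_.Free G' (starForest (s + 1) l) → G'.edgeSet.ncard ≤ G.edgeSet.ncard := by
    intro G' h1 h2
    rw [hmax]
    refine le_csSup ⟨(Fintype.card (Sym2 (Fin n))), ?_⟩ ⟨G', ⟨h1, h2⟩, rfl⟩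
    rintro m ⟨H, -, rfl⟩
    calc H.edgeSet.ncard ≤ (Set.univ : Set (Sym2 (Fin n))).ncard :=
          Set.ncard_le_ncard (Set.subset_univ _) Set.finite_univ
      _ = _ := by rw [Set.ncard_univ, Nat.card_eq_fintype_card]
  set U : Finset (Fin n) := Finset.univ.filter (fun v => (s + 1) * (l + 1) ≤ G.degree v)
    with hU
  have hUdeg : ∀ v ∈ U, (s + 1) * (l + 1) ≤ G.degree v := fun v hv =>
    (Finset.mem_filter.mp hv).2
  have hUmem : ∀ v, v ∉ U → ¬ ((s + 1) * (l + 1) ≤ G.degree v) := by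
    intro v hv hcon
    exact hv (by rw [hU, Finset.mem_filter]; exact ⟨Finset.mem_univ v, hcon⟩)
  clear_value U
  -- |U| ≤ s
  have hts : U.card ≤ s := by
    by_contra hcon
    push_neg at hcon
    obtain ⟨C, hCsub, hCcard⟩ := Finset.exists_subset_card_eq (show s + 1 ≤ U.card by omega)
    exact greedy hSfree (s + 1) C 0 Fin.elim0 Fin.elim0 hCcard (starsOn_nil G)
      (fun i => i.elim0) (fun i => i.elim0) (fun v hv => hUdeg v (hCsub hv)) (by omega)
  -- maximal star family avoiding U
  set P : ℕ → Prop := fun j => ∃ c : Fin j → Fin n, ∃ e : Fin j → Fin l → Fin n,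
    StarsOn G j c e ∧ (∀ i, c i ∉ U) ∧ (∀ i a, e i a ∉ U) with hP
  have hP0 : P 0 := ⟨Fin.elim0, Fin.elim0, starsOn_nil G, fun i => i.elim0, fun i => i.elim0⟩
  have hPbound : ∀ j, P j → j + U.card ≤ s := by
    intro j hPj
    by_contra hcon
    push_neg at hcon
    obtain ⟨c, e, hst, hcU, heU⟩ := hPj
    have hle : s + 1 - U.card ≤ j := by omega
    have hst' : StarsOn G (s + 1 - U.card) (fun i => c (Fin.castLE hle i))
        (fun i => e (Fin.castLE hle i)) := by
      refine ⟨fun i a => hst.1 _ a, fun i => hst.2.1 _, ?_⟩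
      intro i i' x x' hx
      have : sfun c e (Fin.castLE hle i) x = sfun c e (Fin.castLE hle i') x' := hx
      have h2 := hst.2.2 _ _ x x' this
      exact Fin.castLE_injective hle h2
    exact greedy hSfree U.card U (s + 1 - U.card) _ _ rfl hst'
      (fun i => hcU _) (fun i a => heU _ _) hUdeg (by omega)
  set tp := Nat.findGreatest P (s - U.card) with htpdef
  have hPtp : P tp := Nat.findGreatest_spec (Nat.zero_le _) hP0
  have htps : tp ≤ s - U.card := Nat.findGreatest_le _
  have hPnot : ¬ P (tp + 1) := by
    rcases le_or_gt (tp + 1) (s - U.card) with h | h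
    · exact Nat.findGreatest_is_greatest (by omega) h
    · intro hcon
      have := hPbound _ hcon
      omega
  obtain ⟨c, e, hst, hcU, heU⟩ := hPtp
  clear_value tp
  have hZU : ∀ v ∈ starSet c e, v ∉ U := by
    intro v hv
    rw [mem_starSet] at hv
    rcases hv with ⟨i, rfl | ⟨a, rfl⟩⟩
    exacts [hcU i, heU i a]
  rcases eq_or_lt_of_le hts with hteq | htlt
  · -- |U| = s : the conclusion holds with U
    refine ⟨U, hteq, ?_⟩
    rintro ⟨f, hf⟩
    have hmem : ∀ x : Unit ⊕ Fin l, ((f x : {y : Fin n // y ∈ (↑(Uᶜ) : Set (Fin n))}) : Fin n) ∉ U := by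
      intro x
      have := (f x).2
      rw [Finset.mem_coe] at this
      exact Finset.mem_compl.mp this
    have hadj : ∀ a : Fin l, G.Adj ((f (Sum.inl ())) : Fin n) ((f (Sum.inr a)) : Fin n) := by
      intro a
      have h1 : (completeBipartiteGraph Unit (Fin l)).Adj (Sum.inl ()) (Sum.inr a) := by simp
      exact hf _ _ h1
    have hst1 : StarsOn G 1 (fun _ => ((f (Sum.inl ())) : Fin n))
        (fun _ a => ((f (Sum.inr a)) : Fin n)) := by
      refine ⟨fun i a => hadj a, ?_, fun i i' _ _ _ => Subsingleton.elim i i'⟩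
      intro i a b hab
      have h1 : f (Sum.inr a) = f (Sum.inr b) := Subtype.coe_injective hab
      have h2 := f.injective h1
      exact Sum.inr_injective h2
    exact greedy hSfree U.card U 1 _ _ rfl hst1 (fun i => hmem _) (fun i a => hmem _)
      hUdeg (by omega)
  · -- |U| < s : contradiction with maximality
    exfalso
    set Z := starSet c e with hZdef
    have hZcard : Z.card = tp * (l + 1) := card_starSet hst
    set A : Finset (Fin n) := U ∪ Z with hA
    set R : Finset (Fin n) := Finset.univ \ A with hR
    clear_value Z A R
    have hdisjUZ : Disjoint U Z := by
      rw [Finset.disjoint_right]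
      exact fun v hv => hZU v hv
    have hAcard : A.card = U.card + tp * (l + 1) := by
      rw [hA, Finset.card_union_of_disjoint hdisjUZ, hZcard]
    have hAn : A.card ≤ n := by
      have := Finset.card_le_card (Finset.subset_univ A)
      simpa using this
    have hRcard : U.card + tp * (l + 1) + R.card = n := by
      rw [hR, Finset.card_sdiff_of_subset (Finset.subset_univ A)]
      simp only [Finset.card_univ, Fintype.card_fin]
      omega
    -- degree bound on R
    have hRdeg : ∀ v ∈ R, G.degree v ≤ U.card + (Z.filter (G.Adj v)).card + (l - 1) := by
      intro v hv
      rw [hR, Finset.mem_sdiff, hA, Finset.mem_union] at hv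
      push_neg at hv
      obtain ⟨-, hvU, hvZ⟩ := hv
      rw [hZdef] at hvZ
      have hsmall : (R.filter (G.Adj v)).card ≤ l - 1 := by
        by_contra hcon
        push_neg at hcon
        have hlle : l ≤ (R.filter (G.Adj v)).card := by omega
        obtain ⟨L, hLsub, hLcard⟩ := Finset.exists_subset_card_eq hlle
        have hL' : L ⊆ G.neighborFinset v \ starSet c e := by
          rw [← hZdef]
          intro x hx
          have h1 := hLsub hx
          rw [Finset.mem_filter, hR, Finset.mem_sdiff, hA, Finset.mem_union] at h1
          push_neg at h1
          rw [Finset.mem_sdiff, SimpleGraph.mem_neighborFinset]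
          exact ⟨h1.2, h1.1.2.2⟩
        obtain ⟨c', e', hst', hc0, he0, hcsucc, hesucc⟩ :=
          starsOn_extend hst hvZ hL' hLcard
        refine hPnot ⟨c', e', hst', ?_, ?_⟩
        · intro i
          refine Fin.cases ?_ ?_ i
          · rw [hc0]; exact hvU
          · intro i2; rw [hcsucc]; exact hcU i2
        · intro i a
          refine Fin.cases ?_ ?_ i
          · have h1 := hLsub (he0 a)
            rw [Finset.mem_filter, hR, Finset.mem_sdiff, hA, Finset.mem_union] at h1
            push_neg at h1
            exact h1.1.2.1
          · intro i2; rw [hesucc]; exact heU i2 a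
      have hsub : G.neighborFinset v ⊆ U ∪ Z.filter (G.Adj v) ∪ R.filter (G.Adj v) := by
        intro x hx
        rw [SimpleGraph.mem_neighborFinset] at hx
        rw [Finset.mem_union, Finset.mem_union]
        by_cases h1 : x ∈ U
        · exact Or.inl (Or.inl h1)
        · by_cases h2 : x ∈ Z
          · exact Or.inl (Or.inr (Finset.mem_filter.mpr ⟨h2, hx⟩))
          · refine Or.inr (Finset.mem_filter.mpr ⟨?_, hx⟩)
            rw [hR, Finset.mem_sdiff, hA, Finset.mem_union]
            exact ⟨Finset.mem_univ _, by tauto⟩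
      calc G.degree v = (G.neighborFinset v).card := by
            rw [SimpleGraph.card_neighborFinset_eq_degree]
        _ ≤ (U ∪ Z.filter (G.Adj v) ∪ R.filter (G.Adj v)).card := Finset.card_le_card hsub
        _ ≤ (U ∪ Z.filter (G.Adj v)).card + (R.filter (G.Adj v)).card :=
            Finset.card_union_le _ _
        _ ≤ U.card + (Z.filter (G.Adj v)).card + (R.filter (G.Adj v)).card := by
            have := Finset.card_union_le U (Z.filter (G.Adj v))
            omega
        _ ≤ U.card + (Z.filter (G.Adj v)).card + (l - 1) := by omega
    -- degree bound on Z
    have hZdeg : ∀ v ∈ Z, G.degree v ≤ (s + 1) * (l + 1) - 1 := by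
      intro v hv
      have h1 := hUmem v (hZU v hv)
      omega
    -- assemble the sum bound
    have hsplit : ∑ v ∈ R, G.degree v + ∑ v ∈ A, G.degree v = ∑ v, G.degree v := by
      rw [hR]
      exact Finset.sum_sdiff (Finset.subset_univ A)
    have hsplit2 : ∑ v ∈ A, G.degree v = ∑ v ∈ U, G.degree v + ∑ v ∈ Z, G.degree v := by
      rw [hA]
      exact Finset.sum_union hdisjUZ
    have hsumU : ∑ v ∈ U, G.degree v ≤ U.card * (n - 1) := by
      refine Finset.sum_le_card_nsmul _ _ _ (fun v _ => ?_)
      have := G.degree_lt_card_verts v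
      rw [Fintype.card_fin] at this
      omega
    have hsumZ : ∑ v ∈ Z, G.degree v ≤ (tp * (l + 1)) * ((s + 1) * (l + 1) - 1) := by
      have := Finset.sum_le_card_nsmul Z (fun v => G.degree v) ((s + 1) * (l + 1) - 1)
        (fun v hv => hZdeg v hv)
      rw [hZcard] at this
      simpa using this
    have hsumR : ∑ v ∈ R, G.degree v
        ≤ R.card * (U.card + (l - 1)) + (tp * (l + 1)) * ((s + 1) * (l + 1) - 1) := by
      calc ∑ v ∈ R, G.degree v
          ≤ ∑ v ∈ R, (U.card + (Z.filter (G.Adj v)).card + (l - 1)) :=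
            Finset.sum_le_sum hRdeg
        _ = ∑ v ∈ R, (Z.filter (G.Adj v)).card + ∑ v ∈ R, (U.card + (l - 1)) := by
            rw [← Finset.sum_add_distrib]
            refine Finset.sum_congr rfl (fun v _ => by omega)
        _ ≤ ∑ z ∈ Z, G.degree z + R.card * (U.card + (l - 1)) := by
            have h1 := double_count G R Z
            rw [Finset.sum_const, smul_eq_mul]
            omega
        _ ≤ R.card * (U.card + (l - 1)) + (tp * (l + 1)) * ((s + 1) * (l + 1) - 1) := by
            omega
    have hEdeg : ∑ v, G.degree v = 2 * G.edgeFinset.card :=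
      SimpleGraph.sum_degrees_eq_twice_card_edges G
    have hUB : 2 * G.edgeFinset.card ≤ U.card * (n - 1)
        + 2 * (tp * (l + 1)) * ((s + 1) * (l + 1) - 1) + R.card * (U.card + (l - 1)) := by
      have h2 : 2 * (tp * (l + 1)) * ((s + 1) * (l + 1) - 1)
          = (tp * (l + 1)) * ((s + 1) * (l + 1) - 1)
            + (tp * (l + 1)) * ((s + 1) * (l + 1) - 1) := by ring
      omega
    -- lower bound from the construction
    have hKf := gstar_Kfree n s l k hk
    have hSf := gstar_SFfree n s l hl hsn
    have hle := hmax' (Gstar n s l) hKf hSf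
    rw [ncard_eq_edgeFinset_card, ncard_eq_edgeFinset_card] at hle
    have hLB := gstar_edge_lb n s l hl hsn
    have hM : 0 < 2 * (l - 1) := by omega
    exact final_arith n k l s U.card tp ((n - s) / (2 * (l - 1))) ((n - s) % (2 * (l - 1)))
      R.card G.edgeFinset.card (Gstar n s l).edgeFinset.card
      hk hl hs hn (by omega) (by omega) hRcard
      (Nat.div_add_mod _ _) (Nat.mod_lt _ hM) hsn hUB hLB hle
end

section
/- Let l ≥ 1 and s ≥ 0 be integers and let G be a K_3-free graph on n vertices. Suppose U ⊆ V(G) with |U| = s is such that G[V(G) \ U] is S_l-free, and suppose every independent set of G[V(G) \ U] has size at most ⌊(n−s)/2⌋. Then e(G) ≤ ⌈s/2⌉·⌊s/2⌋ + s·⌊(n−s)/2⌋ + ⌊(l−1)(n−s)/2⌋. -/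
open SimpleGraph

section Helpers

variable {V : Type*} [Fintype V] [DecidableEq V]

private def pairsF (G : SimpleGraph V) [DecidableRel G.Adj] (S T : Finset V) : Finset (V × V) :=
  Finset.univ.filter (fun p => G.Adj p.1 p.2 ∧ p.1 ∈ S ∧ p.2 ∈ T)

private lemma pairsF_card (G : SimpleGraph V) [DecidableRel G.Adj] (S T : Finset V) :
    (pairsF G S T).card = ∑ v ∈ S, (G.neighborFinset v ∩ T).card := by
  rw [Finset.card_eq_sum_card_fiberwise (f := Prod.fst) (t := S)
    (fun p hp => by simp [pairsF] at hp; exact hp.2.1)]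
  refine Finset.sum_congr rfl fun v hv => ?_
  refine Finset.card_nbij' (fun p => p.2) (fun b => (v, b)) ?_ ?_ ?_ ?_
  · intro p hp
    simp only [Finset.mem_coe, pairsF, Finset.mem_filter, Finset.mem_univ, true_and] at hp
    simp only [Finset.mem_coe, Finset.mem_inter, SimpleGraph.mem_neighborFinset]
    obtain ⟨⟨ha, _, hT⟩, h1⟩ := hp
    exact ⟨h1 ▸ ha, hT⟩
  · intro b hb
    simp only [Finset.mem_coe, Finset.mem_inter, SimpleGraph.mem_neighborFinset] at hb
    simp [pairsF, hb.1, hb.2, hv]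
  · intro p hp
    simp only [Finset.mem_coe, pairsF, Finset.mem_filter] at hp
    exact Prod.ext hp.2.symm rfl
  · intro b hb; rfl

private lemma pairsF_swap (G : SimpleGraph V) [DecidableRel G.Adj] (S T : Finset V) :
    (pairsF G S T).card = (pairsF G T S).card := by
  refine Finset.card_nbij' (fun p => p.swap) (fun p => p.swap) ?_ ?_ ?_ ?_ <;>
    simp only [pairsF, Finset.mem_filter, Finset.mem_univ, true_and, Prod.fst_swap,
      Prod.snd_swap, Prod.swap_swap]
  · intro p hp
    simp only [Finset.mem_coe, Finset.mem_filter, Finset.mem_univ, true_and, Prod.fst_swap,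
      Prod.snd_swap] at hp ⊢
    exact ⟨hp.1.symm, hp.2.2, hp.2.1⟩
  · intro p hp
    simp only [Finset.mem_coe, Finset.mem_filter, Finset.mem_univ, true_and, Prod.fst_swap,
      Prod.snd_swap] at hp ⊢
    exact ⟨hp.1.symm, hp.2.2, hp.2.1⟩
  · intro p _; rfl
  · intro p _; rfl

private lemma card_inter_compl (A B : Finset V) :
    (A ∩ B).card + (A ∩ Bᶜ).card = A.card := by
  classical
  rw [← Finset.filter_mem_eq_inter (s := A) (t := B),
    ← Finset.filter_mem_eq_inter (s := A) (t := Bᶜ)]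
  simp only [Finset.mem_compl]
  exact Finset.card_filter_add_card_filter_not _

private lemma prod_le_mantel (k s : ℕ) (hk : k ≤ s) :
    k * (s - k) ≤ (s + 1) / 2 * (s / 2) := by
  set b := s / 2 with hb
  set a := (s + 1) / 2 with ha
  have h1 : a + b = s := by omega
  have h2 : b ≤ a ∧ a ≤ b + 1 := by constructor <;> omega
  zify [hk]
  rcases le_or_gt k b with h | h
  · nlinarith [mul_nonneg (by omega : (0:ℤ) ≤ a - k) (by omega : (0:ℤ) ≤ b - k)]
  · nlinarith [mul_nonneg (by omega : (0:ℤ) ≤ (k:ℤ) - a) (by omega : (0:ℤ) ≤ (k:ℤ) - b)]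

private lemma mantel_part (G : SimpleGraph V) [DecidableRel G.Adj]
    (htri : ∀ a b c, G.Adj a b → G.Adj a c → G.Adj b c → False)
    (U : Finset V) :
    ∑ v ∈ U, (G.neighborFinset v ∩ U).card ≤ 2 * ((U.card + 1) / 2 * (U.card / 2)) := by
  rcases U.eq_empty_or_nonempty with rfl | hne
  · simp
  obtain ⟨x, hx, hmax⟩ := U.exists_max_image (fun v => (G.neighborFinset v ∩ U).card) hne
  set Nx := G.neighborFinset x ∩ U with hNx
  have hNU : Nx ⊆ U := Finset.inter_subset_right
  have hΔs : Nx.card ≤ U.card := Finset.card_le_card hNU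
  -- for v ∈ Nx, neighbors of v avoid Nx
  have hdisj : ∀ v ∈ Nx, G.neighborFinset v ∩ Nx = ∅ := by
    intro v hv
    rw [Finset.eq_empty_iff_forall_notMem]
    intro w hw
    simp only [hNx, Finset.mem_inter, SimpleGraph.mem_neighborFinset] at hv hw
    exact htri x v w hv.1 hw.2.1 hw.1
  have hstepA : ∑ v ∈ Nx, (G.neighborFinset v ∩ U).card
      ≤ ∑ v ∈ U \ Nx, (G.neighborFinset v ∩ U).card := by
    have h1 : ∀ v ∈ Nx, G.neighborFinset v ∩ U = G.neighborFinset v ∩ (U \ Nx) := by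
      intro v hv
      ext w
      have := hdisj v hv
      simp only [Finset.mem_inter, Finset.mem_sdiff, SimpleGraph.mem_neighborFinset] at *
      constructor
      · rintro ⟨h2, h3⟩
        refine ⟨h2, h3, fun hw => ?_⟩
        have : w ∈ (∅ : Finset V) := this ▸ (by
          simp only [Finset.mem_inter, SimpleGraph.mem_neighborFinset]; exact ⟨h2, hw⟩)
        simp at this
      · rintro ⟨h2, h3, _⟩; exact ⟨h2, h3⟩
    calc ∑ v ∈ Nx, (G.neighborFinset v ∩ U).card
        = ∑ v ∈ Nx, (G.neighborFinset v ∩ (U \ Nx)).card := Finset.sum_congr rfl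
          (fun v hv => by rw [h1 v hv])
      _ = (pairsF G Nx (U \ Nx)).card := (pairsF_card G _ _).symm
      _ = (pairsF G (U \ Nx) Nx).card := pairsF_swap G _ _
      _ = ∑ v ∈ U \ Nx, (G.neighborFinset v ∩ Nx).card := pairsF_card G _ _
      _ ≤ ∑ v ∈ U \ Nx, (G.neighborFinset v ∩ U).card := Finset.sum_le_sum
          (fun v _ => Finset.card_le_card (Finset.inter_subset_inter le_rfl hNU))
  have hstepB : ∑ v ∈ U \ Nx, (G.neighborFinset v ∩ U).card
      ≤ (U.card - Nx.card) * Nx.card := by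
    have := Finset.sum_le_card_nsmul (U \ Nx) (fun v => (G.neighborFinset v ∩ U).card)
      Nx.card (fun v hv => by
        have hvU : v ∈ U := (Finset.mem_sdiff.mp hv).1
        simpa [hNx] using hmax v hvU)
    rwa [smul_eq_mul, Finset.card_sdiff_of_subset hNU] at this
  have hsplit : ∑ v ∈ U \ Nx, (G.neighborFinset v ∩ U).card
      + ∑ v ∈ Nx, (G.neighborFinset v ∩ U).card = ∑ v ∈ U, (G.neighborFinset v ∩ U).card :=
    Finset.sum_sdiff hNU
  have hmantel : Nx.card * (U.card - Nx.card) ≤ (U.card + 1) / 2 * (U.card / 2) :=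
    prod_le_mantel _ _ hΔs
  calc ∑ v ∈ U, (G.neighborFinset v ∩ U).card
      ≤ 2 * ((U.card - Nx.card) * Nx.card) := by omega
    _ ≤ 2 * ((U.card + 1) / 2 * (U.card / 2)) := by
        rw [mul_comm (U.card - Nx.card)]; omega

end Helpers

private lemma no_triangle {n : ℕ} {G : SimpleGraph (Fin n)}
    (hG3 : _root_.Free G (completeGraph (Fin 3))) {a b c : Fin n}
    (hab : G.Adj a b) (hac : G.Adj a c) (hbc : G.Adj b c) : False := by
  apply hG3
  have h1 : a ≠ b := hab.ne
  have h2 : a ≠ c := hac.ne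
  have h3 : b ≠ c := hbc.ne
  refine ⟨⟨![a, b, c], ?_⟩, ?_⟩
  · intro i j hij
    fin_cases i <;> fin_cases j <;> simp_all
  · intro i j hij
    have : i ≠ j := hij
    change G.Adj (![a, b, c] i) (![a, b, c] j)
    fin_cases i <;> fin_cases j <;>
      simp_all [Function.Embedding.coeFn_mk, hab, hac, hbc, hab.symm, hac.symm, hbc.symm]

theorem stmt14 (l s n : ℕ) (hl : 1 ≤ l) (G : SimpleGraph (Fin n))
    (hG3 : _root_.Free G (completeGraph (Fin 3)))
    (U : Finset (Fin n)) (hUcard : U.card = s)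
    (hSl : _root_.Free (SimpleGraph.induce (↑(Uᶜ) : Set (Fin n)) G)
      (completeBipartiteGraph Unit (Fin l)))
    (hind : ∀ I : Finset (Fin n), I ⊆ Uᶜ → (∀ a ∈ I, ∀ b ∈ I, ¬ G.Adj a b) →
      I.card ≤ (n - s) / 2) :
    G.edgeSet.ncard ≤ (s + 1) / 2 * (s / 2) + s * ((n - s) / 2) + (l - 1) * (n - s) / 2 := by
  classical
  have htri : ∀ a b c : Fin n, G.Adj a b → G.Adj a c → G.Adj b c → False :=
    fun a b c h1 h2 h3 => no_triangle hG3 h1 h2 h3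
  set W := Uᶜ with hW
  have hWcard : W.card = n - s := by
    rw [hW, Finset.card_compl, hUcard, Fintype.card_fin]
  -- degree bound inside W
  have hdegW : ∀ v ∈ W, (G.neighborFinset v ∩ W).card ≤ l - 1 := by
    intro v hv
    by_contra hcon
    push_neg at hcon
    have hl' : l ≤ (G.neighborFinset v ∩ W).card := by omega
    obtain ⟨t, ht, htcard⟩ := Finset.exists_subset_card_eq hl'
    apply hSl
    have hvW : v ∈ (↑W : Set (Fin n)) := by simpa using hv
    have hmemW : ∀ i : Fin l, ((t.orderIsoOfFin htcard i : Fin n)) ∈ (↑W : Set (Fin n)) := by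
      intro i
      have : (t.orderIsoOfFin htcard i : Fin n) ∈ t := (t.orderIsoOfFin htcard i).2
      have := ht this
      simp only [Finset.mem_inter] at this
      simpa using this.2
    have hadj : ∀ i : Fin l, G.Adj v (t.orderIsoOfFin htcard i : Fin n) := by
      intro i
      have : (t.orderIsoOfFin htcard i : Fin n) ∈ t := (t.orderIsoOfFin htcard i).2
      have := ht this
      simp only [Finset.mem_inter, SimpleGraph.mem_neighborFinset] at this
      exact this.1
    refine ⟨⟨fun x => Sum.elim (fun _ => (⟨v, hvW⟩ : (↑W : Set (Fin n))))
      (fun i => ⟨(t.orderIsoOfFin htcard i : Fin n), hmemW i⟩) x, ?_⟩, ?_⟩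
    · intro x y hxy
      cases x with
      | inl a => cases y with
        | inl b => cases a; cases b; rfl
        | inr j =>
          exfalso
          simp only [Sum.elim_inl, Sum.elim_inr, Subtype.mk.injEq] at hxy
          exact (hadj j).ne hxy
      | inr i => cases y with
        | inl b =>
          exfalso
          simp only [Sum.elim_inl, Sum.elim_inr, Subtype.mk.injEq] at hxy
          exact (hadj i).ne hxy.symm
        | inr j =>
          simp only [Sum.elim_inr, Subtype.mk.injEq] at hxy
          have : t.orderIsoOfFin htcard i = t.orderIsoOfFin htcard j :=
            Subtype.ext hxy
          rw [Sum.inr.injEq]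
          exact (t.orderIsoOfFin htcard).injective this
    · intro a b hab
      cases a with
      | inl a => cases b with
        | inl b => simp at hab
        | inr j => exact hadj j
      | inr i => cases b with
        | inl b => exact (hadj i).symm
        | inr j => simp at hab
  -- independence bound: neighborhoods intersected with W are small
  have hnbr : ∀ v : Fin n, (G.neighborFinset v ∩ W).card ≤ (n - s) / 2 := by
    intro v
    apply hind
    · exact Finset.inter_subset_right
    · intro a ha b hb hadj
      simp only [Finset.mem_inter, SimpleGraph.mem_neighborFinset] at ha hb
      exact htri v a b ha.1 hb.1 hadj
  -- edge count
  have hE : G.edgeSet.ncard = G.edgeFinset.card := by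
    rw [Set.ncard_eq_toFinset_card']
    simp [SimpleGraph.edgeFinset]
  have hsum : ∑ v, G.degree v = 2 * G.edgeFinset.card :=
    SimpleGraph.sum_degrees_eq_twice_card_edges G
  have hdeg : ∀ v : Fin n, G.degree v
      = (G.neighborFinset v ∩ U).card + (G.neighborFinset v ∩ W).card := by
    intro v
    rw [hW, card_inter_compl]
    exact (G.card_neighborFinset_eq_degree v).symm
  have hUuniv : ∑ v ∈ Finset.univ \ U, (fun v => G.degree v) v + ∑ v ∈ U, G.degree v
      = ∑ v, G.degree v := Finset.sum_sdiff (Finset.subset_univ U)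
  have hWsdiff : (Finset.univ : Finset (Fin n)) \ U = W := by
    rw [hW, Finset.compl_eq_univ_sdiff]
  -- four sums
  have key : 2 * G.edgeFinset.card
      = ∑ v ∈ U, (G.neighborFinset v ∩ U).card + ∑ v ∈ U, (G.neighborFinset v ∩ W).card
        + (∑ v ∈ W, (G.neighborFinset v ∩ U).card + ∑ v ∈ W, (G.neighborFinset v ∩ W).card) := by
    rw [← hsum, ← hUuniv, hWsdiff]
    simp only [hdeg, Finset.sum_add_distrib]
    ring
  have hT1 : ∑ v ∈ U, (G.neighborFinset v ∩ U).card ≤ 2 * ((s + 1) / 2 * (s / 2)) := by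
    have := mantel_part G htri U
    rwa [hUcard] at this
  have hT2 : ∑ v ∈ U, (G.neighborFinset v ∩ W).card ≤ s * ((n - s) / 2) := by
    have := Finset.sum_le_card_nsmul U (fun v => (G.neighborFinset v ∩ W).card)
      ((n - s) / 2) (fun v _ => hnbr v)
    rwa [smul_eq_mul, hUcard] at this
  have hT3 : ∑ v ∈ W, (G.neighborFinset v ∩ U).card
      = ∑ v ∈ U, (G.neighborFinset v ∩ W).card := by
    rw [← pairsF_card, ← pairsF_card, pairsF_swap]
  have hT4 : ∑ v ∈ W, (G.neighborFinset v ∩ W).card ≤ (n - s) * (l - 1) := by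
    have := Finset.sum_le_card_nsmul W (fun v => (G.neighborFinset v ∩ W).card)
      (l - 1) hdegW
    rwa [smul_eq_mul, hWcard] at this
  rw [hE]
  have hz : (n - s) * (l - 1) = (l - 1) * (n - s) := mul_comm _ _
  set z := (l - 1) * (n - s) with hzdef
  set E := G.edgeFinset.card
  set M := (s + 1) / 2 * (s / 2)
  set p := s * ((n - s) / 2)
  omega
end
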